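/- arXiv:2105.02457 — 11 statements merged into one kernel-verified Lean document; each statement's English description precedes it below -/
import Mathlib

section
/- In a bipartite market with workers W partitioned into W^A and W^B, and jobs J partitioned into J^A, J^{AB}, J^B, where eligibility compatibility C^- makes workers in W^A compatible with J^A ∪ J^{AB} and workers in W^B compatible with J^{AB} ∪ J^B, any matching produced by the following greedy procedure minimizes unfilled jobs (i.e., has maximum cardinality among all feasible matchings): process workers in W^A one at a time, matching each to an available job in J^A if one exists, otherwise to an available job in J^{AB} if one exists; then process workers in W^B one at a time, matching each to an available job in J^{AB} if one exists, otherwise to an available job in J^B if one exists. -/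
section GreedyDefs

variable {W J : Type} [DecidableEq W] [DecidableEq J]

/-- One step of the greedy assignment: worker `w` is matched to the first job in
his priority list that is compatible with him and still available. -/
def greedyStep (C : W → J → Bool) (pref : W → List J)
    (st : List (W × J) × Finset J) (w : W) : List (W × J) × Finset J :=
  match (pref w).find? (fun j => C w j && decide (j ∈ st.2)) with
  | some j => (st.1 ++ [(w, j)], st.2.erase j)
  | none => st

/-- The greedy sequential procedure: workers are processed in `order`, each
irrevocably matched to his highest-priority available compatible job (if any). -/
def greedy (C : W → J → Bool) (order : List W) (pref : W → List J)
    (jobs : Finset J) : List (W × J) :=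
  (order.foldl (greedyStep C pref) ([], jobs)).1

/-- A feasible matching: compatible pairs, injective on workers and on jobs. -/
def IsMatching (C : W → J → Bool) (M : Finset (W × J)) : Prop :=
  (∀ p ∈ M, C p.1 p.2 = true) ∧
  (∀ p ∈ M, ∀ q ∈ M, p.1 = q.1 → p = q) ∧
  (∀ p ∈ M, ∀ q ∈ M, p.2 = q.2 → p = q)

/-- `l` enumerates the finite set `S` (each element exactly once). -/
def Enum {α : Type} [DecidableEq α] (l : List α) (S : Finset α) : Prop :=
  l.Nodup ∧ l.toFinset = S

end GreedyDefs

section PhaseLemma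

variable {W J : Type} [DecidableEq W] [DecidableEq J]

/-- Key lemma: one phase of the greedy procedure, where all workers in `order`
have preference list enumerating `S1` then `S2` and are compatible with all of
`S1 ∪ S2`. -/
lemma greedy_phase (C : W → J → Bool) (pref : W → List J)
    (S1 S2 : Finset J) (hS : Disjoint S1 S2) :
    ∀ (order : List W) (m : List (W × J)) (av : Finset J),
    (∀ w ∈ order, ∃ l1 l2, pref w = l1 ++ l2 ∧ Enum l1 S1 ∧ Enum l2 S2) →
    (∀ w ∈ order, ∀ j, j ∈ S1 ∪ S2 → C w j = true) →
    ((order.foldl (greedyStep C pref) (m, av)).1.length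
        = m.length + min order.length ((av ∩ S1).card + (av ∩ S2).card)) ∧
    (((order.foldl (greedyStep C pref) (m, av)).2 ∩ S1).card
        = (av ∩ S1).card - min order.length (av ∩ S1).card) ∧
    (((order.foldl (greedyStep C pref) (m, av)).2 ∩ S2).card
        = (av ∩ S2).card -
          (min order.length ((av ∩ S1).card + (av ∩ S2).card)
            - min order.length (av ∩ S1).card)) ∧
    (order.foldl (greedyStep C pref) (m, av)).2 ⊆ av ∧
    av \ (S1 ∪ S2) ⊆ (order.foldl (greedyStep C pref) (m, av)).2 := by
  intro order
  induction order with
  | nil =>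
    intro m av _ _
    simp
    intro x hx; simp [hx]
  | cons w rest ih =>
    intro m av hpref hC
    obtain ⟨l1, l2, hl, h1, h2⟩ := hpref w List.mem_cons_self
    have hCw : ∀ j, j ∈ S1 ∪ S2 → C w j = true :=
      hC w List.mem_cons_self
    have hc1 : (av ∩ S1).card = (av ∩ S1).card := rfl
    simp only [List.foldl_cons, List.length_cons]
    by_cases hne1 : (av ∩ S1).Nonempty
    · -- a job in S1 is available
      obtain ⟨x, hx⟩ := hne1
      rw [Finset.mem_inter] at hx
      have hx1 : x ∈ l1 := by
        rw [← List.mem_toFinset, h1.2]; exact hx.2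
      have hPx : (C w x && decide (x ∈ av)) = true := by
        simp [hCw x (Finset.mem_union_left _ hx.2), hx.1]
      have hsome : (l1.find? (fun j => C w j && decide (j ∈ av))).isSome :=
        List.find?_isSome.mpr ⟨x, hx1, hPx⟩
      obtain ⟨j, hj⟩ := Option.isSome_iff_exists.mp hsome
      have hjl1 := List.mem_of_find?_eq_some hj
      have hjP := List.find?_some hj
      have hjS1 : j ∈ S1 := by rw [← h1.2]; exact List.mem_toFinset.mpr hjl1
      have hjav : j ∈ av := by
        simp only [Bool.and_eq_true, decide_eq_true_eq] at hjP
        exact hjP.2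
      have hstep : greedyStep C pref (m, av) w = (m ++ [(w, j)], av.erase j) := by
        simp only [greedyStep, hl, List.find?_append, hj, Option.or_some, Option.some_or]
      rw [hstep]
      have hjnS2 : j ∉ S2 := Finset.disjoint_left.mp hS hjS1
      have e1 : av.erase j ∩ S1 = (av ∩ S1).erase j := by
        rw [Finset.erase_inter]
      have e2 : av.erase j ∩ S2 = av ∩ S2 := by
        rw [Finset.erase_inter, Finset.erase_eq_of_notMem]
        simp [hjnS2]
      have hc1' : (av.erase j ∩ S1).card = (av ∩ S1).card - 1 := by
        rw [e1, Finset.card_erase_of_mem (Finset.mem_inter.mpr ⟨hjav, hjS1⟩)]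
      have hc1pos : 1 ≤ (av ∩ S1).card :=
        Finset.card_pos.mpr ⟨j, Finset.mem_inter.mpr ⟨hjav, hjS1⟩⟩
      obtain ⟨ih1, ih2, ih3, ih4, ih5⟩ := ih (m ++ [(w, j)]) (av.erase j)
        (fun w' hw' => hpref w' (List.mem_cons_of_mem _ hw'))
        (fun w' hw' => hC w' (List.mem_cons_of_mem _ hw'))
      simp only [e1, e2, Finset.card_erase_of_mem (Finset.mem_inter.mpr ⟨hjav, hjS1⟩)] at ih1 ih2 ih3
      simp only [List.length_append, List.length_cons, List.length_nil] at ih1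
      refine ⟨?_, ?_, ?_, ?_, ?_⟩
      · rw [ih1]; omega
      · rw [ih2]; omega
      · rw [ih3]; omega
      · exact ih4.trans (Finset.erase_subset _ _)
      · intro y hy
        apply ih5
        rw [Finset.mem_sdiff] at hy ⊢
        refine ⟨Finset.mem_erase.mpr ⟨?_, hy.1⟩, hy.2⟩
        rintro rfl
        exact hy.2 (Finset.mem_union_left _ hjS1)
    · -- no job in S1 available
      have hS1empty : av ∩ S1 = ∅ := Finset.not_nonempty_iff_eq_empty.mp hne1
      have hc10 : (av ∩ S1).card = 0 := by rw [hS1empty]; rfl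
      have hnone : l1.find? (fun j => C w j && decide (j ∈ av)) = none := by
        rw [List.find?_eq_none]
        intro x hx hPx
        simp only [Bool.and_eq_true, decide_eq_true_eq] at hPx
        have hxS1 : x ∈ S1 := by rw [← h1.2]; exact List.mem_toFinset.mpr hx
        have : x ∈ av ∩ S1 := Finset.mem_inter.mpr ⟨hPx.2, hxS1⟩
        rw [hS1empty] at this
        exact absurd this (Finset.notMem_empty x)
      by_cases hne2 : (av ∩ S2).Nonempty
      · obtain ⟨x, hx⟩ := hne2
        rw [Finset.mem_inter] at hx
        have hx2 : x ∈ l2 := by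
          rw [← List.mem_toFinset, h2.2]; exact hx.2
        have hPx : (C w x && decide (x ∈ av)) = true := by
          simp [hCw x (Finset.mem_union_right _ hx.2), hx.1]
        have hsome : (l2.find? (fun j => C w j && decide (j ∈ av))).isSome :=
          List.find?_isSome.mpr ⟨x, hx2, hPx⟩
        obtain ⟨j, hj⟩ := Option.isSome_iff_exists.mp hsome
        have hjl2 := List.mem_of_find?_eq_some hj
        have hjP := List.find?_some hj
        have hjS2 : j ∈ S2 := by rw [← h2.2]; exact List.mem_toFinset.mpr hjl2
        have hjav : j ∈ av := by
          simp only [Bool.and_eq_true, decide_eq_true_eq] at hjP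
          exact hjP.2
        have hstep : greedyStep C pref (m, av) w = (m ++ [(w, j)], av.erase j) := by
          simp only [greedyStep, hl, List.find?_append, hnone, Option.none_or, hj]
        rw [hstep]
        have hjnS1 : j ∉ S1 := Finset.disjoint_right.mp hS hjS2
        have e1 : av.erase j ∩ S1 = av ∩ S1 := by
          rw [Finset.erase_inter, Finset.erase_eq_of_notMem]
          simp [hjnS1]
        have e2 : av.erase j ∩ S2 = (av ∩ S2).erase j := by
          rw [Finset.erase_inter]
        have hc2' : (av.erase j ∩ S2).card = (av ∩ S2).card - 1 := by
          rw [e2, Finset.card_erase_of_mem (Finset.mem_inter.mpr ⟨hjav, hjS2⟩)]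
        have hc2pos : 1 ≤ (av ∩ S2).card :=
          Finset.card_pos.mpr ⟨j, Finset.mem_inter.mpr ⟨hjav, hjS2⟩⟩
        obtain ⟨ih1, ih2, ih3, ih4, ih5⟩ := ih (m ++ [(w, j)]) (av.erase j)
          (fun w' hw' => hpref w' (List.mem_cons_of_mem _ hw'))
          (fun w' hw' => hC w' (List.mem_cons_of_mem _ hw'))
        simp only [e1, e2, Finset.card_erase_of_mem (Finset.mem_inter.mpr ⟨hjav, hjS2⟩)] at ih1 ih2 ih3
        simp only [List.length_append, List.length_cons, List.length_nil] at ih1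
        refine ⟨?_, ?_, ?_, ?_, ?_⟩
        · rw [ih1]; omega
        · rw [ih2]; omega
        · rw [ih3]; omega
        · exact ih4.trans (Finset.erase_subset _ _)
        · intro y hy
          apply ih5
          rw [Finset.mem_sdiff] at hy ⊢
          refine ⟨Finset.mem_erase.mpr ⟨?_, hy.1⟩, hy.2⟩
          rintro rfl
          exact hy.2 (Finset.mem_union_right _ hjS2)
      · -- nothing available
        have hS2empty : av ∩ S2 = ∅ := Finset.not_nonempty_iff_eq_empty.mp hne2
        have hc20 : (av ∩ S2).card = 0 := by rw [hS2empty]; rfl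
        have hnone2 : l2.find? (fun j => C w j && decide (j ∈ av)) = none := by
          rw [List.find?_eq_none]
          intro x hx hPx
          simp only [Bool.and_eq_true, decide_eq_true_eq] at hPx
          have hxS2 : x ∈ S2 := by rw [← h2.2]; exact List.mem_toFinset.mpr hx
          have : x ∈ av ∩ S2 := Finset.mem_inter.mpr ⟨hPx.2, hxS2⟩
          rw [hS2empty] at this
          exact absurd this (Finset.notMem_empty x)
        have hstep : greedyStep C pref (m, av) w = (m, av) := by
          simp only [greedyStep, hl, List.find?_append, hnone, hnone2,
            Option.none_or]
        rw [hstep]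
        obtain ⟨ih1, ih2, ih3, ih4, ih5⟩ := ih m av
          (fun w' hw' => hpref w' (List.mem_cons_of_mem _ hw'))
          (fun w' hw' => hC w' (List.mem_cons_of_mem _ hw'))
        refine ⟨?_, ?_, ?_, ih4, ih5⟩
        · rw [ih1]; omega
        · rw [ih2]; omega
        · rw [ih3]; omega

/-- Cardinality bound via the first coordinate. -/
lemma card_le_fst (M' : Finset (W × J)) (T : Finset W)
    (hinj : ∀ p ∈ M', ∀ q ∈ M', p.1 = q.1 → p = q)
    (hmem : ∀ p ∈ M', p.1 ∈ T) : M'.card ≤ T.card :=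
  Finset.card_le_card_of_injOn (fun p => p.1) (fun p hp => hmem p hp)
    (fun p hp q hq h => hinj p hp q hq h)

/-- Cardinality bound via the second coordinate. -/
lemma card_le_snd (M' : Finset (W × J)) (T : Finset J)
    (hinj : ∀ p ∈ M', ∀ q ∈ M', p.2 = q.2 → p = q)
    (hmem : ∀ p ∈ M', p.2 ∈ T) : M'.card ≤ T.card :=
  Finset.card_le_card_of_injOn (fun p => p.2) (fun p hp => hmem p hp)
    (fun p hp q hq h => hinj p hp q hq h)

end PhaseLemma

/-- With eligibility-only compatibility `C⁻`, the greedy procedure that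
processes `W^A` workers first (each taking a `J^A` job if available, else a `J^{AB}` job)
and then `W^B` workers (each taking a `J^{AB}` job if available, else a `J^B` job)
produces a matching of maximum cardinality among all feasible matchings. -/
theorem stmt0
    (WA WB JA JAB JB : Finset ℕ)
    (hW : Disjoint WA WB)
    (hJ1 : Disjoint JA JAB) (hJ2 : Disjoint JA JB) (hJ3 : Disjoint JAB JB)
    (C : ℕ → ℕ → Bool)
    (hC : ∀ w j, C w j = true ↔
      ((w ∈ WA ∧ (j ∈ JA ∨ j ∈ JAB)) ∨ (w ∈ WB ∧ (j ∈ JAB ∨ j ∈ JB))))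
    (orderA orderB : List ℕ)
    (hoA : Enum orderA WA) (hoB : Enum orderB WB)
    (pref : ℕ → List ℕ)
    (hprefA : ∀ w ∈ WA, ∃ l1 l2, pref w = l1 ++ l2 ∧ Enum l1 JA ∧ Enum l2 JAB)
    (hprefB : ∀ w ∈ WB, ∃ l1 l2, pref w = l1 ++ l2 ∧ Enum l1 JAB ∧ Enum l2 JB)
    (M : Finset (ℕ × ℕ)) (hM : IsMatching C M) :
    M.card ≤ (greedy C (orderA ++ orderB) pref (JA ∪ JAB ∪ JB)).length := by
  classical
  obtain ⟨hMC, hMinj1, hMinj2⟩ := hM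
  -- membership translations
  have hmemA : ∀ w ∈ orderA, w ∈ WA := by
    intro w hw; rw [← hoA.2]; exact List.mem_toFinset.mpr hw
  have hmemB : ∀ w ∈ orderB, w ∈ WB := by
    intro w hw; rw [← hoB.2]; exact List.mem_toFinset.mpr hw
  -- set up phase A
  set av0 : Finset ℕ := JA ∪ JAB ∪ JB with hav0
  have hJAsub : JA ⊆ av0 := (Finset.subset_union_left).trans Finset.subset_union_left
  have hJABsub : JAB ⊆ av0 := (Finset.subset_union_right).trans Finset.subset_union_left
  have hJBsub : JB ⊆ av0 := Finset.subset_union_right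
  have i1 : av0 ∩ JA = JA := Finset.inter_eq_right.mpr hJAsub
  have i2 : av0 ∩ JAB = JAB := Finset.inter_eq_right.mpr hJABsub
  obtain ⟨hA1, hA2, hA3, hA4, hA5⟩ := greedy_phase C pref JA JAB hJ1 orderA [] av0
    (fun w hw => hprefA w (hmemA w hw))
    (fun w hw j hj => (hC w j).mpr (Or.inl ⟨hmemA w hw, by
      simpa [Finset.mem_union] using hj⟩))
  simp only [i1, i2] at hA1 hA2 hA3
  set st1 := orderA.foldl (greedyStep C pref) ([], av0) with hst1
  -- phase B setup
  have hJBst1 : JB ⊆ st1.2 := by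
    intro j hj
    apply hA5
    rw [Finset.mem_sdiff]
    refine ⟨hJBsub hj, ?_⟩
    rw [Finset.mem_union]
    rintro (h | h)
    · exact Finset.disjoint_right.mp hJ2 hj h
    · exact Finset.disjoint_right.mp hJ3 hj h
  have iB : st1.2 ∩ JB = JB := Finset.inter_eq_right.mpr hJBst1
  obtain ⟨hB1, hB2, hB3, hB4, hB5⟩ := greedy_phase C pref JAB JB hJ3 orderB st1.1 st1.2
    (fun w hw => hprefB w (hmemB w hw))
    (fun w hw j hj => (hC w j).mpr (Or.inr ⟨hmemB w hw, by
      simpa [Finset.mem_union] using hj⟩))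
  rw [iB] at hB1
  -- compute greedy length
  have hglen : (greedy C (orderA ++ orderB) pref av0).length
      = st1.1.length + min orderB.length ((st1.2 ∩ JAB).card + JB.card) := by
    rw [greedy, List.foldl_append, ← hst1]
    exact hB1
  have hlenA : orderA.length = WA.card := by
    rw [← hoA.2, List.toFinset_card_of_nodup hoA.1]
  have hlenB : orderB.length = WB.card := by
    rw [← hoB.2, List.toFinset_card_of_nodup hoB.1]
  -- bounds on M
  set MA := M.filter (fun p => p.1 ∈ WA) with hMA
  set MB := M.filter (fun p => p.1 ∉ WA) with hMB
  have hsplit : MA.card + MB.card = M.card :=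
    Finset.card_filter_add_card_filter_not (s := M) (p := fun p : ℕ × ℕ => p.1 ∈ WA)
  have hMAa : MA.card ≤ WA.card := by
    apply card_le_fst
    · intro p hp q hq h
      exact hMinj1 p (Finset.mem_filter.mp hp).1 q (Finset.mem_filter.mp hq).1 h
    · intro p hp; exact (Finset.mem_filter.mp hp).2
  have hMAj : MA.card ≤ (JA ∪ JAB).card := by
    apply card_le_snd
    · intro p hp q hq h
      exact hMinj2 p (Finset.mem_filter.mp hp).1 q (Finset.mem_filter.mp hq).1 h
    · intro p hp
      obtain ⟨hpM, hpA⟩ := Finset.mem_filter.mp hp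
      rcases (hC p.1 p.2).mp (hMC p hpM) with ⟨_, h⟩ | ⟨hB, _⟩
      · rw [Finset.mem_union]; exact h
      · exact absurd hB (Finset.disjoint_left.mp hW hpA)
  have hMBb : MB.card ≤ WB.card := by
    apply card_le_fst
    · intro p hp q hq h
      exact hMinj1 p (Finset.mem_filter.mp hp).1 q (Finset.mem_filter.mp hq).1 h
    · intro p hp
      obtain ⟨hpM, hpA⟩ := Finset.mem_filter.mp hp
      rcases (hC p.1 p.2).mp (hMC p hpM) with ⟨hA', _⟩ | ⟨hB, _⟩
      · exact absurd hA' hpA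
      · exact hB
  have hMBj : MB.card ≤ (JAB ∪ JB).card := by
    apply card_le_snd
    · intro p hp q hq h
      exact hMinj2 p (Finset.mem_filter.mp hp).1 q (Finset.mem_filter.mp hq).1 h
    · intro p hp
      obtain ⟨hpM, hpA⟩ := Finset.mem_filter.mp hp
      rcases (hC p.1 p.2).mp (hMC p hpM) with ⟨hA', _⟩ | ⟨_, h⟩
      · exact absurd hA' hpA
      · rw [Finset.mem_union]; exact h
  have hMall : M.card ≤ (JA ∪ JAB ∪ JB).card := by
    apply card_le_snd
    · exact hMinj2
    · intro p hp
      rcases (hC p.1 p.2).mp (hMC p hp) with ⟨_, h | h⟩ | ⟨_, h | h⟩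
      · exact hJAsub h
      · exact hJABsub h
      · exact hJABsub h
      · exact hJBsub h
  -- cardinalities of unions
  have u1 : (JA ∪ JAB).card = JA.card + JAB.card := Finset.card_union_of_disjoint hJ1
  have u2 : (JAB ∪ JB).card = JAB.card + JB.card := Finset.card_union_of_disjoint hJ3
  have u3 : (JA ∪ JAB ∪ JB).card = JA.card + JAB.card + JB.card := by
    rw [Finset.card_union_of_disjoint, u1]
    rw [Finset.disjoint_union_left]
    exact ⟨hJ2, hJ3⟩
  rw [hglen, hA1, hA3]
  simp only [List.length_nil]
  omega
end

section
/- For every n ≥ 1 there exists a market with three regions X, Y, Z in which all workers and jobs have the same degree category: n workers from region X, n workers from region Y, n jobs from region Z, n−1 jobs from region X, and 1 job from region Y, where a worker is compatible with a job iff their regions differ; a greedy sequential procedure that processes all Y-workers first (each taking a Z-job), then X-workers (first the one taking the Y-job), leaves n−1 workers and n−1 jobs unmatched, while a feasible matching exists that matches all 2n workers to all 2n jobs. -/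
namespace Stmt2

def rw' (n w : ℕ) : Fin 3 := if w < n then 0 else 1
def rj' (n j : ℕ) : Fin 3 := if j < n then 2 else if j < 2*n - 1 then 0 else 1
def C' (n w j : ℕ) : Bool :=
  decide (w ∈ Finset.range (2*n) ∧ j ∈ Finset.range (2*n) ∧ rw' n w ≠ rj' n j)
def pref' (n : ℕ) (_w : ℕ) : List ℕ :=
  List.range n ++ (List.range (n-1)).map (· + n) ++ [2*n - 1]

lemma rw_eq0 {n w : ℕ} (h : w < n) : rw' n w = 0 := if_pos h
lemma rw_eq1 {n w : ℕ} (h : ¬ w < n) : rw' n w = 1 := if_neg h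
lemma rj_eq2 {n j : ℕ} (h : j < n) : rj' n j = 2 := if_pos h
lemma rj_eq0 {n j : ℕ} (h1 : ¬ j < n) (h2 : j < 2*n-1) : rj' n j = 0 := by
  unfold rj'; rw [if_neg h1, if_pos h2]
lemma rj_eq1 {n j : ℕ} (h1 : ¬ j < n) (h2 : ¬ j < 2*n-1) : rj' n j = 1 := by
  unfold rj'; rw [if_neg h1, if_neg h2]

lemma find?_append_none {α : Type} {p : α → Bool} {l1 l2 : List α}
    (h : ∀ x ∈ l1, p x = false) : (l1 ++ l2).find? p = l2.find? p := by
  rw [List.find?_append, List.find?_eq_none.2 (by simpa using h)]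
  rfl

lemma find?_range' (p : ℕ → Bool) (s m k : ℕ) (h1 : s ≤ k) (h2 : k < s + m)
    (h3 : ∀ j, s ≤ j → j < k → p j = false) (h4 : p k = true) :
    (List.range' s m).find? p = some k := by
  induction m generalizing s with
  | zero => omega
  | succ m ih =>
    rw [List.range'_succ, List.find?_cons]
    rcases Nat.eq_or_lt_of_le h1 with rfl | hlt
    · simp [h4]
    · rw [h3 s le_rfl hlt]
      exact ih (s+1) hlt (by omega) (fun j hj hj' => h3 j (by omega) hj')

lemma find?_range (p : ℕ → Bool) (m k : ℕ) (h2 : k < m)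
    (h3 : ∀ j < k, p j = false) (h4 : p k = true) :
    (List.range m).find? p = some k := by
  rw [List.range_eq_range']
  exact find?_range' p 0 m k (Nat.zero_le _) (by omega) (fun j _ => h3 j) h4

lemma foldl_id {α β : Type} (f : β → α → β) (st : β) (l : List α)
    (h : ∀ a ∈ l, f st a = st) : l.foldl f st = st := by
  induction l with
  | nil => rfl
  | cons a t ih => rw [List.foldl_cons, h a (by simp), ih (fun b hb => h b (by simp [hb]))]

lemma erase_Ico (k m : ℕ) (h : k < m) : (Finset.Ico k m).erase k = Finset.Ico (k+1) m := by
  ext x; simp [Finset.mem_erase] <;> omega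

/-- Phase Y: Y-workers k+n .. n-1+n take Z-jobs k..n-1. -/
lemma phaseY (n m k : ℕ) (hm : k + m = n) (L : List (ℕ × ℕ)) :
    ((List.range' k m).map (· + n)).foldl (greedyStep (C' n) (pref' n))
      (L, Finset.Ico k (2*n))
    = (L ++ (List.range' k m).map (fun i => (i+n, i)), Finset.Ico n (2*n)) := by
  induction m generalizing k L with
  | zero =>
    have : k = n := by omega
    subst this; simp
  | succ m ih =>
    have hkn : k < n := by omega
    rw [List.range'_succ, List.map_cons, List.foldl_cons]
    have hstep : greedyStep (C' n) (pref' n) (L, Finset.Ico k (2*n)) (k + n)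
        = (L ++ [(k+n, k)], Finset.Ico (k+1) (2*n)) := by
      have hfind : (pref' n (k+n)).find?
          (fun j => C' n (k+n) j && decide (j ∈ (L, Finset.Ico k (2*n)).2)) = some k := by
        unfold pref'
        rw [List.append_assoc, List.find?_append]
        rw [find?_range (m := n) (k := k) _ hkn
          (fun j hj => by simp [Finset.mem_Ico]; omega)
          (by
            simp only [Bool.and_eq_true, decide_eq_true_eq]
            refine ⟨?_, by simp [Finset.mem_Ico]; omega⟩
            refine decide_eq_true ⟨by simp; omega, by simp; omega, ?_⟩
            rw [rw_eq1 (by omega), rj_eq2 hkn]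
            decide)]
        rfl
      unfold greedyStep
      rw [hfind]
      simp [erase_Ico k (2*n) (by omega)]
    rw [hstep, ih (k+1) (by omega)]
    simp [List.range'_succ]

/-- worker 0 (an X-worker) takes the Y-job 2n-1. -/
lemma stepX0 (n : ℕ) (hn : 1 ≤ n) (L : List (ℕ × ℕ)) :
    greedyStep (C' n) (pref' n) (L, Finset.Ico n (2*n)) 0
      = (L ++ [(0, 2*n-1)], Finset.Ico n (2*n-1)) := by
  have hfind : (pref' n 0).find?
      (fun j => C' n 0 j && decide (j ∈ (L, Finset.Ico n (2*n)).2)) = some (2*n-1) := by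
    unfold pref'
    rw [find?_append_none ?side]
    case side =>
      intro x hx
      simp only [List.mem_append, List.mem_range, List.mem_map] at hx
      simp only [Bool.and_eq_false_iff]
      rcases hx with hx | ⟨i, hi, rfl⟩
      · right; simp only [decide_eq_false_iff_not, Finset.mem_Ico]; omega
      · left
        simp only [C', decide_eq_false_iff_not]
        rintro ⟨-, -, hne⟩
        exact hne (by rw [rw_eq0 hn, rj_eq0 (by omega) (by omega)])
    have hT : (C' n 0 (2*n-1) && decide (2*n-1 ∈ (L, Finset.Ico n (2*n)).2)) = true := by
      simp only [Bool.and_eq_true, decide_eq_true_eq]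
      refine ⟨?_, by simp only [Finset.mem_Ico]; omega⟩
      refine decide_eq_true ⟨by simp; omega, by simp; omega, ?_⟩
      rw [rw_eq0 hn, rj_eq1 (by omega) (by omega)]
      decide
    simp only [List.find?_cons, hT]
  unfold greedyStep
  rw [hfind]
  have : (Finset.Ico n (2*n)).erase (2*n-1) = Finset.Ico n (2*n-1) := by
    ext x; simp [Finset.mem_erase]; omega
  simp [this]

/-- remaining X-workers get nothing. -/
lemma stepXrest (n : ℕ) (w : ℕ) (hw2 : w < n) (L : List (ℕ × ℕ)) :
    greedyStep (C' n) (pref' n) (L, Finset.Ico n (2*n-1)) w = (L, Finset.Ico n (2*n-1)) := by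
  have hfind : (pref' n w).find?
      (fun j => C' n w j && decide (j ∈ (L, Finset.Ico n (2*n-1)).2)) = none := by
    rw [List.find?_eq_none]
    intro j hj
    simp only [pref', List.mem_append, List.mem_range, List.mem_map, List.mem_singleton] at hj
    simp only [Bool.and_eq_true, decide_eq_true_eq, not_and]
    rcases hj with (hj | ⟨i, hi, rfl⟩) | rfl
    · intro _ hmem
      simp [Finset.mem_Ico] at hmem
      omega
    · intro hC _
      simp only [C', decide_eq_true_eq] at hC
      obtain ⟨-, -, hne⟩ := hC
      exact hne (by rw [rw_eq0 hw2, rj_eq0 (by omega) (by omega)])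
    · intro _ hmem
      simp only [Finset.mem_Ico] at hmem
      omega
  unfold greedyStep
  rw [hfind]

end Stmt2

namespace Stmt2

def f' (n w : ℕ) : ℕ :=
  if w < n-1 then w else if w = n-1 then 2*n-1 else if w = n then n-1 else w-1

lemma f'_lt {n w : ℕ} (hn : 1 ≤ n) (hw : w < 2*n) : f' n w < 2*n := by
  unfold f'; split_ifs <;> omega

lemma f'_inj {n : ℕ} (hn : 1 ≤ n) {a b : ℕ} (ha : a < 2*n) (hb : b < 2*n)
    (h : f' n a = f' n b) : a = b := by
  unfold f' at h; split_ifs at h <;> omega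

lemma f'_surj {n : ℕ} (hn : 1 ≤ n) {j : ℕ} (hj : j < 2*n) :
    ∃ w, w < 2*n ∧ f' n w = j := by
  refine ⟨if j < n-1 then j else if j = 2*n-1 then n-1 else if j = n-1 then n else j+1,
    ?_, ?_⟩
  · split_ifs <;> omega
  · unfold f'; split_ifs <;> omega

lemma f'_compat {n w : ℕ} (hn : 1 ≤ n) (hw : w < 2*n) : rw' n w ≠ rj' n (f' n w) := by
  unfold f'
  by_cases h1 : w < n-1
  · rw [if_pos h1, rw_eq0 (by omega), rj_eq2 (by omega)]; decide
  · rw [if_neg h1]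
    by_cases h2 : w = n-1
    · rw [if_pos h2, rw_eq0 (by omega), rj_eq1 (by omega) (by omega)]; decide
    · rw [if_neg h2]
      by_cases h3 : w = n
      · rw [if_pos h3, rw_eq1 (by omega), rj_eq2 (by omega)]; decide
      · rw [if_neg h3, rw_eq1 (by omega), rj_eq0 (by omega) (by omega)]; decide

end Stmt2

open Stmt2 in
theorem Stmt2.stmt2_aux (n : ℕ) (hn : 1 ≤ n) :
    ∃ (workers jobs : Finset ℕ) (rw rj : ℕ → Fin 3) (C : ℕ → ℕ → Bool)
      (order : List ℕ) (pref : ℕ → List ℕ),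
      (workers.filter fun w => rw w = 0).card = n ∧
      (workers.filter fun w => rw w = 1).card = n ∧
      workers.card = 2 * n ∧
      (jobs.filter fun j => rj j = 2).card = n ∧
      (jobs.filter fun j => rj j = 0).card = n - 1 ∧
      (jobs.filter fun j => rj j = 1).card = 1 ∧
      jobs.card = 2 * n ∧
      (∀ w j, C w j = true ↔ (w ∈ workers ∧ j ∈ jobs ∧ rw w ≠ rj j)) ∧
      (∃ oY oX, order = oY ++ oX ∧
        Enum oY (workers.filter fun w => rw w = 1) ∧
        Enum oX (workers.filter fun w => rw w = 0)) ∧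
      (∀ w ∈ workers, ∃ lZ lX lY, pref w = lZ ++ lX ++ lY ∧
        Enum lZ (jobs.filter fun j => rj j = 2) ∧
        Enum lX (jobs.filter fun j => rj j = 0) ∧
        Enum lY (jobs.filter fun j => rj j = 1)) ∧
      (greedy C order pref jobs).length = 2 * n - (n - 1) ∧
      (∃ M : Finset (ℕ × ℕ), IsMatching C M ∧ M.card = 2 * n ∧
        (∀ w ∈ workers, ∃ j, (w, j) ∈ M) ∧ (∀ j ∈ jobs, ∃ w, (w, j) ∈ M)) := by
  refine ⟨Finset.range (2*n), Finset.range (2*n), rw' n, rj' n, C' n,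
    ((List.range n).map (· + n)) ++ List.range n, pref' n, ?_, ?_, ?_, ?_, ?_, ?_, ?_, ?_, ?_, ?_, ?_, ?_⟩
  · -- X-workers count
    have : (Finset.range (2*n)).filter (fun w => rw' n w = 0) = Finset.range n := by
      ext w
      simp only [Finset.mem_filter, Finset.mem_range, rw']
      by_cases h : w < n <;> simp_all <;> omega
    rw [this, Finset.card_range]
  · have : (Finset.range (2*n)).filter (fun w => rw' n w = 1) = Finset.Ico n (2*n) := by
      ext w
      simp only [Finset.mem_filter, Finset.mem_range, Finset.mem_Ico, rw']
      by_cases h : w < n <;> simp_all <;> omega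
    rw [this, Nat.card_Ico]; omega
  · exact Finset.card_range _
  · have : (Finset.range (2*n)).filter (fun j => rj' n j = 2) = Finset.range n := by
      ext j
      simp only [Finset.mem_filter, Finset.mem_range]; unfold rj'
      split_ifs with h h' <;> simp_all <;> omega
    rw [this, Finset.card_range]
  · have : (Finset.range (2*n)).filter (fun j => rj' n j = 0) = Finset.Ico n (2*n-1) := by
      ext j
      simp only [Finset.mem_filter, Finset.mem_range, Finset.mem_Ico]; unfold rj'
      split_ifs with h h' <;> simp_all <;> omega
    rw [this, Nat.card_Ico]; omega
  · have : (Finset.range (2*n)).filter (fun j => rj' n j = 1) = {2*n-1} := by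
      ext j
      simp only [Finset.mem_filter, Finset.mem_range, Finset.mem_singleton]; unfold rj'
      split_ifs with h h' <;> simp_all <;> omega
    rw [this, Finset.card_singleton]
  · exact Finset.card_range _
  · intro w j; simp [C']
  · -- order decomposition
    refine ⟨(List.range n).map (· + n), List.range n, rfl, ⟨?_, ?_⟩, ⟨(List.nodup_range (n := n)), ?_⟩⟩
    · exact ((List.nodup_range (n := n))).map (fun a b h => by omega)
    · ext w
      simp only [List.mem_toFinset, List.mem_map, List.mem_range, Finset.mem_filter,
        Finset.mem_range]
      constructor
      · rintro ⟨a, ha, rfl⟩; exact ⟨by omega, rw_eq1 (by omega)⟩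
      · rintro ⟨hw, h1⟩
        have hwn : ¬ w < n := fun h => by rw [rw_eq0 h] at h1; exact absurd h1 (by decide)
        exact ⟨w - n, by omega, by omega⟩
    · ext w
      simp only [List.mem_toFinset, List.mem_range, Finset.mem_filter, Finset.mem_range, rw']
      by_cases h : w < n <;> simp_all <;> omega
  · -- pref decomposition
    intro w _
    refine ⟨List.range n, (List.range (n-1)).map (· + n), [2*n-1], rfl,
      ⟨(List.nodup_range (n := n)), ?_⟩, ⟨(List.nodup_range (n := n-1)).map (fun a b h => by omega), ?_⟩,
      ⟨List.nodup_singleton _, ?_⟩⟩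
    · ext j
      simp only [List.mem_toFinset, List.mem_range, Finset.mem_filter, Finset.mem_range]; unfold rj'
      split_ifs with h h' <;> simp_all <;> omega
    · ext j
      simp only [List.mem_toFinset, List.mem_map, List.mem_range, Finset.mem_filter,
        Finset.mem_range]
      constructor
      · rintro ⟨a, ha, rfl⟩; exact ⟨by omega, rj_eq0 (by omega) (by omega)⟩
      · rintro ⟨hj, h1⟩
        by_cases h2 : j < n
        · rw [rj_eq2 h2] at h1; exact absurd h1 (by decide)
        · by_cases h3 : j < 2*n-1
          · exact ⟨j - n, by omega, by omega⟩
          · rw [rj_eq1 h2 h3] at h1; exact absurd h1 (by decide)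
    · ext j
      simp only [List.toFinset_cons, List.toFinset_nil, insert_empty_eq,
        Finset.mem_singleton, Finset.mem_filter, Finset.mem_range]; unfold rj'
      split_ifs with h h' <;> simp_all <;> omega
  · -- greedy length
    unfold greedy
    rw [List.foldl_append]
    have h0 : Finset.range (2*n) = Finset.Ico 0 (2*n) := by
      rw [Finset.range_eq_Ico]
    rw [h0, List.range_eq_range' (n := n), phaseY n n 0 (by omega) []]
    have hsplit : List.range' 0 n = 0 :: List.range' 1 (n-1) := by
      rw [show n = (n-1) + 1 from by omega, List.range'_succ]
      simp
    rw [hsplit, List.foldl_cons, stepX0 n hn]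
    rw [foldl_id _ _ _ (fun w hw => by
      apply stepXrest
      simp only [List.mem_range'_1] at hw
      omega)]
    simp
    omega
  · -- perfect matching
    refine ⟨(Finset.range (2*n)).image (fun w => (w, f' n w)), ⟨?_, ?_, ?_⟩, ?_, ?_, ?_⟩
    · rintro p hp
      simp only [Finset.mem_image, Finset.mem_range] at hp
      obtain ⟨w, hw, rfl⟩ := hp
      simp only [C', decide_eq_true_eq]
      exact ⟨by simp [hw], by simp [f'_lt hn hw], f'_compat hn hw⟩
    · rintro p hp q hq h
      simp only [Finset.mem_image, Finset.mem_range] at hp hq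
      obtain ⟨a, ha, rfl⟩ := hp
      obtain ⟨b, hb, rfl⟩ := hq
      simp only at h
      subst h
      rfl
    · rintro p hp q hq h
      simp only [Finset.mem_image, Finset.mem_range] at hp hq
      obtain ⟨a, ha, rfl⟩ := hp
      obtain ⟨b, hb, rfl⟩ := hq
      simp only at h
      have := f'_inj hn ha hb h
      subst this
      rfl
    · rw [Finset.card_image_of_injective _ (fun a b h => congrArg Prod.fst h),
        Finset.card_range]
    · intro w hw
      exact ⟨f' n w, Finset.mem_image_of_mem _ hw⟩
    · intro j hj
      simp only [Finset.mem_range] at hj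
      obtain ⟨w, hw, hfw⟩ := f'_surj hn hj
      refine ⟨w, ?_⟩
      simp only [Finset.mem_image, Finset.mem_range]
      exact ⟨w, hw, by rw [hfw]⟩

/-- For every `n ≥ 1` there is a three-region market (regions `0 = X`, `1 = Y`,
`2 = Z`) with `n` X-workers, `n` Y-workers, `n` Z-jobs, `n-1` X-jobs and one Y-job
(compatibility: regions differ) on which the greedy procedure — Y-workers processed first,
everyone ranking Z-jobs before X-jobs before Y-jobs — matches only `n + 1` of the `2n`
workers (leaving `n - 1` workers and `n - 1` jobs unmatched), while some feasible matching
matches all `2n` workers to all `2n` jobs. -/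
theorem stmt2 (n : ℕ) (hn : 1 ≤ n) :
    ∃ (workers jobs : Finset ℕ) (rw rj : ℕ → Fin 3) (C : ℕ → ℕ → Bool)
      (order : List ℕ) (pref : ℕ → List ℕ),
      (workers.filter fun w => rw w = 0).card = n ∧
      (workers.filter fun w => rw w = 1).card = n ∧
      workers.card = 2 * n ∧
      (jobs.filter fun j => rj j = 2).card = n ∧
      (jobs.filter fun j => rj j = 0).card = n - 1 ∧
      (jobs.filter fun j => rj j = 1).card = 1 ∧
      jobs.card = 2 * n ∧
      (∀ w j, C w j = true ↔ (w ∈ workers ∧ j ∈ jobs ∧ rw w ≠ rj j)) ∧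
      (∃ oY oX, order = oY ++ oX ∧
        Enum oY (workers.filter fun w => rw w = 1) ∧
        Enum oX (workers.filter fun w => rw w = 0)) ∧
      (∀ w ∈ workers, ∃ lZ lX lY, pref w = lZ ++ lX ++ lY ∧
        Enum lZ (jobs.filter fun j => rj j = 2) ∧
        Enum lX (jobs.filter fun j => rj j = 0) ∧
        Enum lY (jobs.filter fun j => rj j = 1)) ∧
      (greedy C order pref jobs).length = 2 * n - (n - 1) ∧
      (∃ M : Finset (ℕ × ℕ), IsMatching C M ∧ M.card = 2 * n ∧
        (∀ w ∈ workers, ∃ j, (w, j) ∈ M) ∧ (∀ j ∈ jobs, ∃ w, (w, j) ∈ M)) := by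
  exact Stmt2.stmt2_aux n hn
end

section
/- In a bipartite market with only eligibility constraints C^-, the matching produced by the First Ming greedy procedure (first match W^A workers to J^A jobs, then remaining W^A workers to J^{AB} jobs, then W^B workers to remaining J^{AB} jobs, then remaining W^B workers to J^B jobs) prioritizes high-levels: there is no feasible matching μ' with |μ'| ≥ |μ|, |μ'(J) ∩ W^A| ≥ |μ(J) ∩ W^A|, |μ'(J^A)| ≥ |μ(J^A)|, |μ'(J^{AB})| ≥ |μ(J^{AB})| with at least one inequality strict. -/
/-- Number of workers from `S` matched under `M`. -/
def matchedWorkers (S : Finset ℕ) (M : Finset (ℕ × ℕ)) : ℕ :=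
  (M.filter fun p => p.1 ∈ S).card

/-- Number of jobs from `S` matched under `M` (i.e. `|μ(S)|`). -/
def matchedJobs (S : Finset ℕ) (M : Finset (ℕ × ℕ)) : ℕ :=
  (M.filter fun p => p.2 ∈ S).card



section Aux
variable {W J : Type} [DecidableEq W] [DecidableEq J]
set_option linter.unusedSectionVars false

lemma step_cases (C : W → J → Bool) (pref : W → List J) (w : W)
    (S1 S2 : Finset J)
    (hpw : ∃ l1 l2, pref w = l1 ++ l2 ∧ (∀ j, j ∈ l1 ↔ j ∈ S1) ∧ (∀ j, j ∈ l2 ↔ j ∈ S2))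
    (hCw : ∀ j, C w j = true ↔ (j ∈ S1 ∨ j ∈ S2))
    (L : List (W × J)) (R : Finset J) :
    (∃ j ∈ R ∩ S1, greedyStep C pref (L, R) w = (L ++ [(w, j)], R.erase j)) ∨
    ((R ∩ S1) = ∅ ∧ ∃ j ∈ R ∩ S2, greedyStep C pref (L, R) w = (L ++ [(w, j)], R.erase j)) ∨
    ((R ∩ S1) = ∅ ∧ (R ∩ S2) = ∅ ∧ greedyStep C pref (L, R) w = (L, R)) := by
  obtain ⟨l1, l2, hp, h1, h2⟩ := hpw
  have hpred : ∀ j : J, ((C w j && decide (j ∈ R)) = true) ↔ ((j ∈ S1 ∨ j ∈ S2) ∧ j ∈ R) := by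
    intro j; simp [hCw j]
  unfold greedyStep
  simp only [hp, List.find?_append]
  rcases hfa : l1.find? (fun j => C w j && decide (j ∈ (L, R).2)) with _ | j
  · -- no S1 job available
    have hRS1 : R ∩ S1 = ∅ := by
      rw [Finset.eq_empty_iff_forall_notMem]
      intro j hj
      rw [Finset.mem_inter] at hj
      have := (List.find?_eq_none.mp hfa) j ((h1 j).mpr hj.2)
      exact this ((hpred j).mpr ⟨Or.inl hj.2, hj.1⟩)
    rcases hfb : l2.find? (fun j => C w j && decide (j ∈ (L, R).2)) with _ | j
    · refine Or.inr (Or.inr ⟨hRS1, ?_, by simp⟩)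
      rw [Finset.eq_empty_iff_forall_notMem]
      intro j hj
      rw [Finset.mem_inter] at hj
      have := (List.find?_eq_none.mp hfb) j ((h2 j).mpr hj.2)
      exact this ((hpred j).mpr ⟨Or.inr hj.2, hj.1⟩)
    · refine Or.inr (Or.inl ⟨hRS1, j, ?_, by simp⟩)
      have hb' := List.find?_some hfb
      have h := (hpred j).mp hb'
      have := (h2 j).mp (List.mem_of_find?_eq_some hfb)
      exact Finset.mem_inter.mpr ⟨h.2, this⟩
  · refine Or.inl ⟨j, ?_, by simp⟩
    have ha' := List.find?_some hfa
    have h := (hpred j).mp ha'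
    have := (h1 j).mp (List.mem_of_find?_eq_some hfa)
    exact Finset.mem_inter.mpr ⟨h.2, this⟩


end Aux

section Phase
variable {W J : Type} [DecidableEq W] [DecidableEq J]

set_option linter.unusedSectionVars false

lemma phase (C : W → J → Bool) (pref : W → List J)
    (S1 S2 : Finset J) (hS : Disjoint S1 S2) :
    ∀ (order : List W), order.Nodup →
    (∀ w ∈ order, ∃ l1 l2, pref w = l1 ++ l2 ∧ (∀ j, j ∈ l1 ↔ j ∈ S1) ∧ (∀ j, j ∈ l2 ↔ j ∈ S2)) →
    (∀ w ∈ order, ∀ j, C w j = true ↔ (j ∈ S1 ∨ j ∈ S2)) →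
    ∀ (L : List (W × J)) (R : Finset J),
    ∃ P : List (W × J),
      (order.foldl (greedyStep C pref) (L, R)).1 = L ++ P ∧
      (∀ p ∈ P, p.1 ∈ order) ∧
      (P.map Prod.fst).Nodup ∧
      (∀ p ∈ P, p.2 ∈ R) ∧
      (∀ p ∈ P, p.2 ∈ S1 ∨ p.2 ∈ S2) ∧
      (P.filter (fun p => p.2 ∈ S1)).length = min order.length (R ∩ S1).card ∧
      (P.filter (fun p => p.2 ∈ S2)).length =
        min (order.length - (R ∩ S1).card) ((R ∩ S2).card) ∧
      P.length = (P.filter (fun p => p.2 ∈ S1)).length + (P.filter (fun p => p.2 ∈ S2)).length ∧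
      (((order.foldl (greedyStep C pref) (L, R)).2 ∩ S1).card
        = (R ∩ S1).card - order.length) ∧
      (((order.foldl (greedyStep C pref) (L, R)).2 ∩ S2).card
        = (R ∩ S2).card - (order.length - (R ∩ S1).card)) ∧
      (∀ T : Finset J, Disjoint T (S1 ∪ S2) →
        (order.foldl (greedyStep C pref) (L, R)).2 ∩ T = R ∩ T) := by
  intro order
  induction order with
  | nil =>
    intro _ _ _ L R
    exact ⟨[], by simp, by simp, by simp, by simp, by simp, by simp, by simp, by simp, by simp,
      by simp, fun T _ => rfl⟩
  | cons w order ih =>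
    intro hnd hpref hCw L R
    have hnd' := hnd
    rw [List.nodup_cons] at hnd'
    obtain ⟨hwno, hndo⟩ := hnd'
    rcases step_cases C pref w S1 S2 (hpref w (by simp)) (hCw w (by simp)) L R with
      ⟨j, hj, hst⟩ | ⟨hR1, j, hj, hst⟩ | ⟨hR1, hR2, hst⟩
    · -- matched into S1
      rw [Finset.mem_inter] at hj
      have hc1 : (R ∩ S1).card ≠ 0 := by
        intro h; rw [Finset.card_eq_zero] at h
        exact absurd (Finset.mem_inter.mpr hj) (by rw [h]; simp)
      obtain ⟨P, hL, hw, hwnd, hjob, hjob2, hc1', hc2', hlen, hr1, hr2, hT⟩ :=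
        ih hndo (fun w hw => hpref w (by simp [hw])) (fun w hw => hCw w (by simp [hw]))
          (L ++ [(w, j)]) (R.erase j)
      have hE1 : R.erase j ∩ S1 = (R ∩ S1).erase j := Finset.erase_inter j R S1
      have hE1c : (R.erase j ∩ S1).card = (R ∩ S1).card - 1 := by
        rw [hE1, Finset.card_erase_of_mem (Finset.mem_inter.mpr hj)]
      have hjS2 : j ∉ S2 := fun h => (Finset.disjoint_left.mp hS hj.2) h
      have hE2 : R.erase j ∩ S2 = R ∩ S2 := by
        rw [Finset.erase_inter, Finset.erase_eq_of_notMem (by simp [hjS2])]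
      refine ⟨(w, j) :: P, ?_, ?_, ?_, ?_, ?jm, ?_, ?_, ?_, ?_, ?_, ?_⟩
      · rw [List.foldl_cons, hst, hL]; simp
      · intro p hp; rcases List.mem_cons.mp hp with h | h
        · simp [h]
        · simp [hw p h]
      · rw [List.map_cons, List.nodup_cons]
        refine ⟨fun h => ?_, hwnd⟩
        obtain ⟨p, hp, hpe⟩ := List.mem_map.mp h
        have hpe' : p.1 = w := hpe
        exact hwno (hpe' ▸ hw p hp)
      · intro p hp; rcases List.mem_cons.mp hp with h | h
        · simp [h, hj.1]
        · exact Finset.mem_of_mem_erase (hjob p h)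
      case jm =>
        intro p hp; rcases List.mem_cons.mp hp with h | h
        · subst h; exact Or.inl hj.2
        · exact hjob2 p h
      · rw [List.filter_cons, if_pos (by simp [hj.2] : decide ((w, j).2 ∈ S1) = true)]
        simp only [List.length_cons, hc1', hE1c]
        omega
      · rw [List.filter_cons, if_neg (by simp [hjS2] : ¬ decide ((w, j).2 ∈ S2) = true)]
        rw [hc2', hE2, hE1c]
        simp only [List.length_cons]
        omega
      · rw [List.filter_cons, List.filter_cons,
          if_pos (by simp [hj.2] : decide ((w, j).2 ∈ S1) = true),
          if_neg (by simp [hjS2] : ¬ decide ((w, j).2 ∈ S2) = true)]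
        simp only [List.length_cons]
        omega
      · rw [List.foldl_cons, hst, hr1, hE1c]; simp only [List.length_cons]; omega
      · rw [List.foldl_cons, hst, hr2, hE2, hE1c]; simp only [List.length_cons]; omega
      · intro T hT'
        rw [List.foldl_cons, hst, hT T hT', Finset.erase_inter,
          Finset.erase_eq_of_notMem]
        intro h
        exact Finset.disjoint_left.mp hT' (Finset.mem_inter.mp h).2
          (Finset.mem_union_left _ hj.2)
    · -- matched into S2
      rw [Finset.mem_inter] at hj
      obtain ⟨P, hL, hw, hwnd, hjob, hjob2, hc1', hc2', hlen, hr1, hr2, hT⟩ :=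
        ih hndo (fun w hw => hpref w (by simp [hw])) (fun w hw => hCw w (by simp [hw]))
          (L ++ [(w, j)]) (R.erase j)
      have hjS1 : j ∉ S1 := fun h => (Finset.disjoint_left.mp hS h) hj.2
      have hE1 : R.erase j ∩ S1 = R ∩ S1 := by
        rw [Finset.erase_inter, Finset.erase_eq_of_notMem (by simp [hjS1])]
      have hE2c : (R.erase j ∩ S2).card = (R ∩ S2).card - 1 := by
        rw [Finset.erase_inter, Finset.card_erase_of_mem (Finset.mem_inter.mpr hj)]
      have hc2 : (R ∩ S2).card ≠ 0 := by
        intro h; rw [Finset.card_eq_zero] at h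
        exact absurd (Finset.mem_inter.mpr hj) (by rw [h]; simp)
      have hR1c : (R ∩ S1).card = 0 := by rw [hR1]; simp
      refine ⟨(w, j) :: P, ?_, ?_, ?_, ?_, ?jm, ?_, ?_, ?_, ?_, ?_, ?_⟩
      · rw [List.foldl_cons, hst, hL]; simp
      · intro p hp; rcases List.mem_cons.mp hp with h | h
        · simp [h]
        · simp [hw p h]
      · rw [List.map_cons, List.nodup_cons]
        refine ⟨fun h => ?_, hwnd⟩
        obtain ⟨p, hp, hpe⟩ := List.mem_map.mp h
        have hpe' : p.1 = w := hpe
        exact hwno (hpe' ▸ hw p hp)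
      · intro p hp; rcases List.mem_cons.mp hp with h | h
        · simp [h, hj.1]
        · exact Finset.mem_of_mem_erase (hjob p h)
      case jm =>
        intro p hp; rcases List.mem_cons.mp hp with h | h
        · subst h; exact Or.inr hj.2
        · exact hjob2 p h
      · rw [List.filter_cons, if_neg (by simp [hjS1] : ¬ decide ((w, j).2 ∈ S1) = true)]
        rw [hc1', hE1, hR1c]
        simp only [List.length_cons]
        omega
      · rw [List.filter_cons, if_pos (by simp [hj.2] : decide ((w, j).2 ∈ S2) = true)]
        simp only [List.length_cons]
        rw [hc2', hE2c, hE1, hR1c]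
        omega
      · rw [List.filter_cons, List.filter_cons,
          if_neg (by simp [hjS1] : ¬ decide ((w, j).2 ∈ S1) = true),
          if_pos (by simp [hj.2] : decide ((w, j).2 ∈ S2) = true)]
        simp only [List.length_cons]
        omega
      · rw [List.foldl_cons, hst, hr1, hE1, hR1c]; simp only [List.length_cons]; omega
      · rw [List.foldl_cons, hst, hr2, hE2c, hE1, hR1c]; simp only [List.length_cons]; omega
      · intro T hT'
        rw [List.foldl_cons, hst, hT T hT', Finset.erase_inter,
          Finset.erase_eq_of_notMem]
        intro h
        exact Finset.disjoint_left.mp hT' (Finset.mem_inter.mp h).2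
          (Finset.mem_union_right _ hj.2)
    · -- unmatched
      obtain ⟨P, hL, hw, hwnd, hjob, hjob2, hc1', hc2', hlen, hr1, hr2, hT⟩ :=
        ih hndo (fun w hw => hpref w (by simp [hw])) (fun w hw => hCw w (by simp [hw])) L R
      have hR1c : (R ∩ S1).card = 0 := by rw [hR1]; simp
      have hR2c : (R ∩ S2).card = 0 := by rw [hR2]; simp
      refine ⟨P, ?_, ?_, ?_, ?_, hjob2, ?_, ?_, ?_, ?_, ?_, ?_⟩
      · rw [List.foldl_cons, hst, hL]
      · intro p hp; simp [hw p hp]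
      · exact hwnd
      · exact hjob
      · rw [hc1', hR1c]; simp
      · rw [hc2', hR1c, hR2c]; simp
      · exact hlen
      · rw [List.foldl_cons, hst, hr1, hR1c]; simp
      · rw [List.foldl_cons, hst, hr2, hR1c, hR2c]; simp
      · intro T hT'; rw [List.foldl_cons, hst, hT T hT']
end Phase


lemma card_filter_toFinset {α : Type} [DecidableEq α] (l : List α) (hl : l.Nodup)
    (p : α → Prop) [DecidablePred p] :
    (l.toFinset.filter p).card = (l.filter (fun x => decide (p x))).length := by
  have h1 : l.toFinset.filter p =
      (l.filter (fun x => decide (p x))).toFinset := by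
    rw [List.toFinset_filter]
    apply Finset.filter_congr
    intro x _
    simp
  rw [h1, List.toFinset_card_of_nodup (hl.filter _)]

lemma filter_card_split (M : Finset (ℕ × ℕ)) (P Q1 Q2 : ℕ × ℕ → Prop)
    [DecidablePred P] [DecidablePred Q1] [DecidablePred Q2]
    (h : ∀ p ∈ M, P p ↔ (Q1 p ∨ Q2 p)) (hd : ∀ p, ¬(Q1 p ∧ Q2 p)) :
    (M.filter P).card = (M.filter Q1).card + (M.filter Q2).card := by
  rw [Finset.filter_congr h, Finset.filter_or,
    Finset.card_union_of_disjoint (Finset.disjoint_filter.mpr (fun x _ h1 h2 => hd x ⟨h1, h2⟩))]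

lemma card_filter_le_fst (M : Finset (ℕ × ℕ))
    (hinj : ∀ p ∈ M, ∀ q ∈ M, p.1 = q.1 → p = q) (S : Finset ℕ)
    (P : ℕ × ℕ → Prop) [DecidablePred P] (hP : ∀ p ∈ M, P p → p.1 ∈ S) :
    (M.filter P).card ≤ S.card := by
  apply Finset.card_le_card_of_injOn Prod.fst
  · intro p hp
    rw [Finset.mem_coe, Finset.mem_filter] at hp
    exact hP p hp.1 hp.2
  · intro p hp q hq h
    simp only [Finset.coe_filter, Set.mem_setOf_eq] at hp hq
    exact hinj p hp.1 q hq.1 h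

lemma card_filter_le_snd (M : Finset (ℕ × ℕ))
    (hinj : ∀ p ∈ M, ∀ q ∈ M, p.2 = q.2 → p = q) (S : Finset ℕ)
    (P : ℕ × ℕ → Prop) [DecidablePred P] (hP : ∀ p ∈ M, P p → p.2 ∈ S) :
    (M.filter P).card ≤ S.card := by
  apply Finset.card_le_card_of_injOn Prod.snd
  · intro p hp
    rw [Finset.mem_coe, Finset.mem_filter] at hp
    exact hP p hp.1 hp.2
  · intro p hp q hq h
    simp only [Finset.coe_filter, Set.mem_setOf_eq] at hp hq
    exact hinj p hp.1 q hq.1 h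

/-- With eligibility-only compatibility `C⁻`, the First Ming greedy procedure
(first `W^A` workers to `J^A` jobs, then remaining `W^A` to `J^{AB}`, then `W^B` to remaining
`J^{AB}`, then to `J^B`) produces a matching `μ` that prioritizes high-levels: no feasible
matching weakly improves all four statistics `|μ|`, `|μ(J) ∩ W^A|`, `|μ(J^A)|`, `|μ(J^{AB})|`
with at least one strict improvement. -/
theorem stmt4
    (WA WB JA JAB JB : Finset ℕ)
    (hW : Disjoint WA WB)
    (hJ1 : Disjoint JA JAB) (hJ2 : Disjoint JA JB) (hJ3 : Disjoint JAB JB)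
    (C : ℕ → ℕ → Bool)
    (hC : ∀ w j, C w j = true ↔
      ((w ∈ WA ∧ (j ∈ JA ∨ j ∈ JAB)) ∨ (w ∈ WB ∧ (j ∈ JAB ∨ j ∈ JB))))
    (orderA orderB : List ℕ)
    (hoA : Enum orderA WA) (hoB : Enum orderB WB)
    (pref : ℕ → List ℕ)
    (hprefA : ∀ w ∈ WA, ∃ l1 l2, pref w = l1 ++ l2 ∧ Enum l1 JA ∧ Enum l2 JAB)
    (hprefB : ∀ w ∈ WB, ∃ l1 l2, pref w = l1 ++ l2 ∧ Enum l1 JAB ∧ Enum l2 JB) :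
    ¬ ∃ M : Finset (ℕ × ℕ), IsMatching C M ∧
      (let μ := (greedy C (orderA ++ orderB) pref (JA ∪ JAB ∪ JB)).toFinset
       μ.card ≤ M.card ∧
       matchedWorkers WA μ ≤ matchedWorkers WA M ∧
       matchedJobs JA μ ≤ matchedJobs JA M ∧
       matchedJobs JAB μ ≤ matchedJobs JAB M ∧
       (μ.card < M.card ∨ matchedWorkers WA μ < matchedWorkers WA M ∨
        matchedJobs JA μ < matchedJobs JA M ∨ matchedJobs JAB μ < matchedJobs JAB M)) := by
  rintro ⟨M, ⟨hcomp, hinjW, hinjJ⟩, hd1, hd2, hd3, hd4, hd5⟩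
  set G := (greedy C (orderA ++ orderB) pref (JA ∪ JAB ∪ JB)).toFinset with hGdef
  -- phase A
  have hAmem : ∀ w ∈ orderA, w ∈ WA := fun w hw => by
    rw [← hoA.2]; exact List.mem_toFinset.mpr hw
  have hBmem : ∀ w ∈ orderB, w ∈ WB := fun w hw => by
    rw [← hoB.2]; exact List.mem_toFinset.mpr hw
  have hprefA' : ∀ w ∈ orderA, ∃ l1 l2, pref w = l1 ++ l2 ∧
      (∀ j, j ∈ l1 ↔ j ∈ JA) ∧ (∀ j, j ∈ l2 ↔ j ∈ JAB) := by
    intro w hw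
    obtain ⟨l1, l2, hp, h1, h2⟩ := hprefA w (hAmem w hw)
    exact ⟨l1, l2, hp, fun j => by rw [← h1.2]; simp, fun j => by rw [← h2.2]; simp⟩
  have hprefB' : ∀ w ∈ orderB, ∃ l1 l2, pref w = l1 ++ l2 ∧
      (∀ j, j ∈ l1 ↔ j ∈ JAB) ∧ (∀ j, j ∈ l2 ↔ j ∈ JB) := by
    intro w hw
    obtain ⟨l1, l2, hp, h1, h2⟩ := hprefB w (hBmem w hw)
    exact ⟨l1, l2, hp, fun j => by rw [← h1.2]; simp, fun j => by rw [← h2.2]; simp⟩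
  have hCA : ∀ w ∈ orderA, ∀ j, C w j = true ↔ (j ∈ JA ∨ j ∈ JAB) := by
    intro w hw j
    have hwWA := hAmem w hw
    rw [hC]
    constructor
    · rintro (⟨_, h⟩ | ⟨hwB, _⟩)
      · exact h
      · exact absurd hwWA (Finset.disjoint_right.mp hW hwB)
    · intro h; exact Or.inl ⟨hwWA, h⟩
  have hCB : ∀ w ∈ orderB, ∀ j, C w j = true ↔ (j ∈ JAB ∨ j ∈ JB) := by
    intro w hw j
    have hwWB := hBmem w hw
    rw [hC]
    constructor
    · rintro (⟨hwA, _⟩ | ⟨_, h⟩)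
      · exact absurd hwWB (Finset.disjoint_left.mp hW hwA)
      · exact h
    · intro h; exact Or.inr ⟨hwWB, h⟩
  obtain ⟨PA, hLA, hwA, hwndA, hjobA, hjob2A, hcA1, hcA2, hlenA, hrA1, hrA2, hTA⟩ :=
    phase C pref JA JAB hJ1 orderA hoA.1 hprefA' hCA [] (JA ∪ JAB ∪ JB)
  set st1 := orderA.foldl (greedyStep C pref) ([], JA ∪ JAB ∪ JB) with hst1
  obtain ⟨PB, hLB, hwB, hwndB, hjobB, hjob2B, hcB1, hcB2, hlenB, hrB1, hrB2, hTB⟩ :=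
    phase C pref JAB JB hJ3 orderB hoB.1 hprefB' hCB st1.1 st1.2
  -- the greedy list
  have hG : greedy C (orderA ++ orderB) pref (JA ∪ JAB ∪ JB) = PA ++ PB := by
    rw [greedy, List.foldl_append, ← hst1, hLB, hLA]
    simp
  -- basic cardinalities
  have hJAin : (JA ∪ JAB ∪ JB) ∩ JA = JA := by
    apply Finset.inter_eq_right.mpr
    intro x hx; simp [hx]
  have hJABin : (JA ∪ JAB ∪ JB) ∩ JAB = JAB := by
    apply Finset.inter_eq_right.mpr
    intro x hx; simp [hx]
  have hna : orderA.length = WA.card := by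
    rw [← hoA.2, List.toFinset_card_of_nodup hoA.1]
  have hnb : orderB.length = WB.card := by
    rw [← hoB.2, List.toFinset_card_of_nodup hoB.1]
  have hR1JB : st1.2 ∩ JB = JB := by
    rw [hTA JB (Finset.disjoint_union_right.mpr ⟨hJ2.symm, hJ3.symm⟩)]
    apply Finset.inter_eq_right.mpr
    intro x hx; simp [hx]
  -- worker membership for pairs
  have hPAW : ∀ p ∈ PA, p.1 ∈ WA := fun p hp => hAmem _ (hwA p hp)
  have hPBW : ∀ p ∈ PB, p.1 ∈ WB := fun p hp => hBmem _ (hwB p hp)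
  -- the greedy list is nodup
  have hndG : (PA ++ PB).Nodup := by
    apply List.Nodup.of_map Prod.fst
    rw [List.map_append, List.nodup_append]
    refine ⟨hwndA, hwndB, ?_⟩
    rintro a ha _ hb rfl
    obtain ⟨p, hp, hpe⟩ := List.mem_map.mp ha
    obtain ⟨q, hq, hqe⟩ := List.mem_map.mp hb
    exact Finset.disjoint_left.mp hW (hpe ▸ hPAW p hp) (hqe ▸ hPBW q hq)
  -- greedy statistics
  have hGtF : G = (PA ++ PB).toFinset := by rw [hGdef, hG]
  have hgcard : G.card = PA.length + PB.length := by
    rw [hGtF, List.toFinset_card_of_nodup hndG, List.length_append]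
  have hgWA : matchedWorkers WA G = PA.length := by
    rw [hGtF, matchedWorkers, card_filter_toFinset _ hndG, List.filter_append,
      List.length_append, List.filter_eq_self.mpr (fun p hp => by simp [hPAW p hp]),
      List.length_eq_zero_iff.mpr (show PB.filter (fun p => decide (p.1 ∈ WA)) = [] from
        List.filter_eq_nil_iff.mpr (fun p hp => by
        simp [Finset.disjoint_right.mp hW (hPBW p hp)]))]
    omega
  have hjobsplit : ∀ (S : Finset ℕ) (P : List (ℕ × ℕ)), (hnd : (P).Nodup) →
      matchedJobs S P.toFinset = (P.filter (fun p => decide (p.2 ∈ S))).length := by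
    intro S P hnd
    rw [matchedJobs, card_filter_toFinset _ hnd]
  have hgJA : matchedJobs JA G
      = (PA.filter (fun p => decide (p.2 ∈ JA))).length := by
    rw [hGtF, hjobsplit _ _ hndG, List.filter_append, List.length_append,
      List.length_eq_zero_iff.mpr (show PB.filter (fun p => decide (p.2 ∈ JA)) = [] from
        List.filter_eq_nil_iff.mpr (fun p hp => by
        rcases hjob2B p hp with h | h
        · simp [Finset.disjoint_right.mp hJ1 h]
        · simp [Finset.disjoint_right.mp hJ2 h]))]
    omega
  have hgJAB : matchedJobs JAB G
      = (PA.filter (fun p => decide (p.2 ∈ JAB))).length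
        + (PB.filter (fun p => decide (p.2 ∈ JAB))).length := by
    rw [hGtF, hjobsplit _ _ hndG, List.filter_append, List.length_append]
  -- M side
  have hmem : ∀ p ∈ M, (p.1 ∈ WA ∧ (p.2 ∈ JA ∨ p.2 ∈ JAB)) ∨
      (p.1 ∈ WB ∧ (p.2 ∈ JAB ∨ p.2 ∈ JB)) := fun p hp => (hC p.1 p.2).mp (hcomp p hp)
  have dW : ∀ x, x ∈ WA → x ∈ WB → False := fun x h1 h2 => Finset.disjoint_left.mp hW h1 h2
  have d1 : ∀ x, x ∈ JA → x ∈ JAB → False := fun x h1 h2 => Finset.disjoint_left.mp hJ1 h1 h2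
  have d2 : ∀ x, x ∈ JA → x ∈ JB → False := fun x h1 h2 => Finset.disjoint_left.mp hJ2 h1 h2
  have d3 : ∀ x, x ∈ JAB → x ∈ JB → False := fun x h1 h2 => Finset.disjoint_left.mp hJ3 h1 h2
  have hM1 : M.card = (M.filter fun p => p.1 ∈ WA).card + (M.filter fun p => p.1 ∈ WB).card := by
    have h := filter_card_split M (fun _ => True) (fun p => p.1 ∈ WA) (fun p => p.1 ∈ WB)
      (fun p hp => by have := hmem p hp; constructor
                      · intro _; tauto
                      · intro _; trivial)
      (fun p ⟨h1, h2⟩ => dW _ h1 h2)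
    rwa [Finset.filter_true] at h
  have hM2 : (M.filter fun p => p.1 ∈ WA).card =
      (M.filter fun p => p.2 ∈ JA).card +
      (M.filter fun p => p.1 ∈ WA ∧ p.2 ∈ JAB).card := by
    apply filter_card_split
    · intro p hp
      have := hmem p hp
      constructor
      · intro h
        rcases this with ⟨_, hj⟩ | ⟨hb, _⟩
        · tauto
        · exact absurd hb (fun hb => dW _ h hb)
      · rintro (h | ⟨h, _⟩)
        · rcases this with ⟨ha, _⟩ | ⟨_, hj⟩
          · exact ha
          · rcases hj with hj | hj
            · exact absurd hj (fun hj => d1 _ h hj)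
            · exact absurd hj (fun hj => d2 _ h hj)
        · exact h
    · rintro p ⟨h1, _, h2⟩; exact d1 _ h1 h2
  have hM3 : (M.filter fun p => p.2 ∈ JAB).card =
      (M.filter fun p => p.1 ∈ WA ∧ p.2 ∈ JAB).card +
      (M.filter fun p => p.1 ∈ WB ∧ p.2 ∈ JAB).card := by
    apply filter_card_split
    · intro p hp
      have := hmem p hp
      constructor
      · intro h; tauto
      · rintro (⟨_, h⟩ | ⟨_, h⟩) <;> exact h
    · rintro p ⟨⟨h1, _⟩, h2, _⟩; exact dW _ h1 h2
  have hM4 : (M.filter fun p => p.1 ∈ WB).card =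
      (M.filter fun p => p.1 ∈ WB ∧ p.2 ∈ JAB).card +
      (M.filter fun p => p.2 ∈ JB).card := by
    apply filter_card_split
    · intro p hp
      have := hmem p hp
      constructor
      · intro h
        rcases this with ⟨ha, _⟩ | ⟨_, hj⟩
        · exact absurd ha (fun ha => dW _ ha h)
        · tauto
      · rintro (⟨h, _⟩ | h)
        · exact h
        · rcases this with ⟨_, hj⟩ | ⟨hb, _⟩
          · rcases hj with hj | hj
            · exact absurd hj (fun hj => d2 _ hj h)
            · exact absurd hj (fun hj => d3 _ hj h)
          · exact hb
    · rintro p ⟨⟨_, h1⟩, h2⟩; exact d3 _ h1 h2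
  have hB1 : (M.filter fun p => p.1 ∈ WA).card ≤ WA.card :=
    card_filter_le_fst M hinjW WA _ (fun p _ h => h)
  have hB2 : (M.filter fun p => p.1 ∈ WB).card ≤ WB.card :=
    card_filter_le_fst M hinjW WB _ (fun p _ h => h)
  have hB3 : (M.filter fun p => p.2 ∈ JA).card ≤ JA.card :=
    card_filter_le_snd M hinjJ JA _ (fun p _ h => h)
  have hB4 : (M.filter fun p => p.2 ∈ JAB).card ≤ JAB.card :=
    card_filter_le_snd M hinjJ JAB _ (fun p _ h => h)
  have hB5 : (M.filter fun p => p.2 ∈ JB).card ≤ JB.card :=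
    card_filter_le_snd M hinjJ JB _ (fun p _ h => h)
  -- assemble
  have e1 : matchedWorkers WA M = (M.filter fun p => p.1 ∈ WA).card := rfl
  have e2 : matchedJobs JA M = (M.filter fun p => p.2 ∈ JA).card := rfl
  have e3 : matchedJobs JAB M = (M.filter fun p => p.2 ∈ JAB).card := rfl
  simp only [hJAin] at hcA1 hcA2 hrA2
  simp only [hJABin] at hcA2 hrA2
  simp only [hna] at hcA1 hcA2 hrA2
  simp only [hrA2] at hcB1 hcB2
  simp only [hR1JB] at hcB2
  simp only [hnb] at hcB1 hcB2
  clear hGdef hGtF hG hTA hTB hLA hLB hrB1 hrB2 hjobA hjobB hwA hwB hwndA hwndB hndG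
  clear hmem hcomp hinjW hinjJ hC hCA hCB hprefA hprefB hprefA' hprefB' hAmem hBmem
  clear hPAW hPBW hjob2A hjob2B hR1JB hJAin hJABin hoA hoB hW hJ1 hJ2 hJ3 dW d1 d2 d3 hst1
  clear hrA1 hna hnb
  omega
end

section
/- For every n ≥ 1 there exists a market with |W^A| = |J^A| = |J^{AB}| = n and |W^B| = n (J^B empty) and an assignment plan such that the sequential worker-choice procedure (W^A workers processed first, each taking their top available compatible job, with all W^A workers ranking J^{AB} jobs above J^A jobs) produces a matching μ that does not prioritize high-levels: specifically, the matching μ' pairing all W^A workers with J^A jobs and all W^B workers with J^{AB} jobs satisfies |μ'| = 2n > n = |μ|, hence μ' prioritizes more high-levels than μ. -/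
/- ==== auxiliary ==== -/

def Cn (n : ℕ) : ℕ → ℕ → Bool := fun w j =>
  decide ((w < n ∧ 2*n ≤ j ∧ j < 4*n) ∨ (n ≤ w ∧ w < 2*n ∧ 3*n ≤ j ∧ j < 4*n))

def prefn (n : ℕ) : ℕ → List ℕ := fun w =>
  if w < n then
    ((3*n + w) :: (((List.range n).map (fun k => 3*n + k)).erase (3*n + w)))
      ++ (List.range n).map (fun k => 2*n + k)
  else []

def availn (n i : ℕ) : Finset ℕ := Finset.Ico (2*n) (3*n) ∪ Finset.Ico (3*n + i) (4*n)

lemma rangeMap_toFinset (n c : ℕ) :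
    ((List.range n).map (fun k => c + k)).toFinset = Finset.Ico c (c + n) := by
  ext x
  simp only [List.mem_toFinset, List.mem_map, List.mem_range, Finset.mem_Ico]
  constructor
  · rintro ⟨a, ha, rfl⟩; omega
  · intro h; exact ⟨x - c, by omega, by omega⟩

lemma rangeMap_nodup (n c : ℕ) : ((List.range n).map (fun k => c + k)).Nodup :=
  (List.nodup_range (n := n)).map (fun a b h => by omega)

lemma availn_erase (n i : ℕ) (hi : i < n) :
    (availn n i).erase (3*n + i) = availn n (i + 1) := by
  ext x; simp [availn, Finset.mem_erase, Finset.mem_union, Finset.mem_Ico]; omega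

lemma greedyA (n : ℕ) : ∀ i ≤ n,
    (List.range i).foldl (greedyStep (Cn n) (prefn n)) ([], availn n 0)
      = ((List.range i).map (fun k => (k, 3*n + k)), availn n i) := by
  intro i
  induction i with
  | zero => intro _; simp
  | succ i ih =>
    intro h
    rw [List.range_succ, List.foldl_append, ih (by omega)]
    have hi : i < n := h
    have hfind : (prefn n i).find?
        (fun j => Cn n i j && decide (j ∈ (availn n i))) = some (3*n + i) := by
      have hc : (Cn n i (3*n + i) && decide ((3*n + i) ∈ availn n i)) = true := by
        simp only [Bool.and_eq_true, decide_eq_true_eq, Cn, availn,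
          Finset.mem_union, Finset.mem_Ico]
        constructor
        · left; omega
        · right; omega
      simp only [prefn, if_pos hi, List.cons_append]
      exact List.find?_cons_of_pos hc
    simp only [List.foldl_cons, List.foldl_nil, greedyStep, hfind]
    rw [List.map_append, ← availn_erase n i hi]
    simp

lemma greedyB (n : ℕ) : ∀ (l : List ℕ) (st : List (ℕ × ℕ) × Finset ℕ),
    (∀ w ∈ l, prefn n w = []) →
    l.foldl (greedyStep (Cn n) (prefn n)) st = st := by
  intro l
  induction l with
  | nil => intro st _; simp
  | cons a l ih =>
    intro st h
    rw [List.foldl_cons]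
    have ha : prefn n a = [] := h a (by simp)
    have : greedyStep (Cn n) (prefn n) st a = st := by
      simp [greedyStep, ha]
    rw [this]
    exact ih st (fun w hw => h w (by simp [hw]))

/-- For every `n ≥ 1` there is a market with `|W^A| = |W^B| = |J^A| = |J^{AB}| = n`
(`W^A` workers compatible with all jobs, `W^B` workers only with `J^{AB}`) and an assignment
plan (all `W^A` workers processed first, each ranking `J^{AB}` jobs above `J^A` jobs) such
that the sequential worker-choice procedure produces a matching `μ` with `|μ| = n`, while the
matching `μ'` pairing `W^A` with `J^A` and `W^B` with `J^{AB}` has `|μ'| = 2n > n = |μ|` and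
weakly improves all high-level statistics, hence prioritizes more high-levels than `μ`:
`μ` does not prioritize high-levels. -/
theorem stmt5 (n : ℕ) (hn : 1 ≤ n) :
    ∃ (WA WB JA JAB : Finset ℕ) (C : ℕ → ℕ → Bool)
      (order : List ℕ) (pref : ℕ → List ℕ),
      WA.card = n ∧ WB.card = n ∧ JA.card = n ∧ JAB.card = n ∧
      Disjoint WA WB ∧ Disjoint JA JAB ∧
      (∀ w j, C w j = true ↔
        ((w ∈ WA ∧ (j ∈ JA ∨ j ∈ JAB)) ∨ (w ∈ WB ∧ j ∈ JAB))) ∧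
      (∃ oA oB, order = oA ++ oB ∧ Enum oA WA ∧ Enum oB WB) ∧
      (∀ w ∈ WA, ∃ l1 l2, pref w = l1 ++ l2 ∧ Enum l1 JAB ∧ Enum l2 JA) ∧
      (let μ := (greedy C order pref (JA ∪ JAB)).toFinset
       μ.card = n ∧
       ∃ M : Finset (ℕ × ℕ), IsMatching C M ∧ M.card = 2 * n ∧
         (∀ p ∈ M, p.1 ∈ WA → p.2 ∈ JA) ∧ (∀ p ∈ M, p.1 ∈ WB → p.2 ∈ JAB) ∧
         μ.card < M.card ∧
         matchedWorkers WA μ ≤ matchedWorkers WA M ∧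
         matchedJobs JA μ ≤ matchedJobs JA M ∧
         matchedJobs JAB μ ≤ matchedJobs JAB M) := by
  refine ⟨Finset.range n, Finset.Ico n (2*n), Finset.Ico (2*n) (3*n), Finset.Ico (3*n) (4*n),
    Cn n, List.range n ++ (List.range n).map (fun k => n + k), prefn n, ?_, ?_, ?_, ?_, ?_, ?_, ?_, ?_, ?_, ?_⟩
  · simp
  · simp [Nat.card_Ico]; omega
  · simp [Nat.card_Ico]; omega
  · simp [Nat.card_Ico]; omega
  · rw [Finset.disjoint_left]; intro a ha hb
    simp [Finset.mem_Ico] at ha hb; omega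
  · rw [Finset.disjoint_left]; intro a ha hb
    simp [Finset.mem_Ico] at ha hb; omega
  · intro w j
    simp only [Cn, decide_eq_true_eq, Finset.mem_range, Finset.mem_Ico]
    omega
  · refine ⟨List.range n, (List.range n).map (fun k => n + k), rfl,
      ⟨List.nodup_range (n := n), by ext x; simp⟩, ⟨rangeMap_nodup n n, ?_⟩⟩
    rw [rangeMap_toFinset]; congr 1; omega
  · intro w hw
    rw [Finset.mem_range] at hw
    refine ⟨(3*n + w) :: (((List.range n).map (fun k => 3*n + k)).erase (3*n + w)),
      (List.range n).map (fun k => 2*n + k), by simp [prefn, if_pos hw], ?_, ?_⟩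
    · have hmem : 3*n + w ∈ (List.range n).map (fun k => 3*n + k) := by
        simp only [List.mem_map, List.mem_range]; exact ⟨w, hw, rfl⟩
      have hperm := List.perm_cons_erase hmem
      constructor
      · exact hperm.nodup_iff.mp (rangeMap_nodup n (3*n))
      · rw [← List.toFinset_eq_of_perm _ _ hperm, rangeMap_toFinset]
        congr 1; omega
    · refine ⟨rangeMap_nodup n (2*n), ?_⟩
      rw [rangeMap_toFinset]; congr 1; omega
  · intro μ
    have hJ : Finset.Ico (2*n) (3*n) ∪ Finset.Ico (3*n) (4*n) = availn n 0 := by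
      simp [availn]
    have hgreedy : greedy (Cn n) (List.range n ++ (List.range n).map (fun k => n + k))
        (prefn n) (Finset.Ico (2*n) (3*n) ∪ Finset.Ico (3*n) (4*n))
        = (List.range n).map (fun k => (k, 3*n + k)) := by
      unfold greedy
      rw [hJ, List.foldl_append, greedyA n n le_rfl, greedyB]
      intro w hw
      simp only [List.mem_map, List.mem_range] at hw
      obtain ⟨k, hk, rfl⟩ := hw
      simp [prefn]
    have hμ : μ = ((List.range n).map (fun k => (k, 3*n + k))).toFinset := by
      simp only [μ, hgreedy]
    have hnodμ : ((List.range n).map (fun k => (k, 3*n + k))).Nodup :=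
      (List.nodup_range (n := n)).map (fun a b h => by
        simpa using congrArg Prod.fst h)
    have hμcard : μ.card = n := by
      rw [hμ, List.toFinset_card_of_nodup hnodμ]; simp
    refine ⟨hμcard, ?_⟩
    set M : Finset (ℕ × ℕ) :=
      (Finset.range n).image (fun k => (k, 2*n + k)) ∪
      (Finset.range n).image (fun k => (n + k, 3*n + k)) with hM
    have hmemM : ∀ p, p ∈ M ↔
        (∃ k < n, p = (k, 2*n + k)) ∨ (∃ k < n, p = (n + k, 3*n + k)) := by
      intro p
      simp only [hM, Finset.mem_union, Finset.mem_image, Finset.mem_range]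
      constructor
      · rintro (⟨k, hk, rfl⟩ | ⟨k, hk, rfl⟩)
        · exact Or.inl ⟨k, hk, rfl⟩
        · exact Or.inr ⟨k, hk, rfl⟩
      · rintro (⟨k, hk, rfl⟩ | ⟨k, hk, rfl⟩)
        · exact Or.inl ⟨k, hk, rfl⟩
        · exact Or.inr ⟨k, hk, rfl⟩
    have hMcard : M.card = 2 * n := by
      rw [hM, Finset.card_union_of_disjoint, Finset.card_image_of_injective,
        Finset.card_image_of_injective]
      · simp; omega
      · intro a b h; simpa using congrArg Prod.fst h
      · intro a b h; simpa using congrArg Prod.fst h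
      · rw [Finset.disjoint_left]
        rintro p hp hq
        simp only [Finset.mem_image, Finset.mem_range] at hp hq
        obtain ⟨k, hk, rfl⟩ := hp
        obtain ⟨k', hk', h⟩ := hq
        have h1 := congrArg Prod.fst h
        have h2 := congrArg Prod.snd h
        simp at h1 h2; omega
    refine ⟨M, ⟨?_, ?_, ?_⟩, hMcard, ?_, ?_, ?_, ?_, ?_, ?_⟩
    · intro p hp
      rw [hmemM] at hp
      rcases hp with ⟨k, hk, rfl⟩ | ⟨k, hk, rfl⟩ <;>
        · simp only [Cn, decide_eq_true_eq]; omega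
    · intro p hp q hq h
      rw [hmemM] at hp hq
      rcases hp with ⟨k, hk, rfl⟩ | ⟨k, hk, rfl⟩ <;>
        rcases hq with ⟨k', hk', rfl⟩ | ⟨k', hk', rfl⟩ <;>
        · simp at h ⊢; omega
    · intro p hp q hq h
      rw [hmemM] at hp hq
      rcases hp with ⟨k, hk, rfl⟩ | ⟨k, hk, rfl⟩ <;>
        rcases hq with ⟨k', hk', rfl⟩ | ⟨k', hk', rfl⟩ <;>
        · simp at h ⊢; omega
    · intro p hp hpw
      rw [hmemM] at hp
      rw [Finset.mem_range] at hpw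
      rcases hp with ⟨k, hk, rfl⟩ | ⟨k, hk, rfl⟩ <;>
        simp_all [Finset.mem_Ico] <;> omega
    · intro p hp hpw
      rw [hmemM] at hp
      rw [Finset.mem_Ico] at hpw
      rcases hp with ⟨k, hk, rfl⟩ | ⟨k, hk, rfl⟩ <;>
        simp_all [Finset.mem_Ico] <;> omega
    · rw [hμcard, hMcard]; omega
    · calc matchedWorkers (Finset.range n) μ ≤ μ.card := Finset.card_filter_le _ _
        _ = n := hμcard
        _ ≤ matchedWorkers (Finset.range n) M := by
            unfold matchedWorkers
            have hsub : (Finset.range n).image (fun k => (k, 2*n + k)) ⊆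
                M.filter (fun p => p.1 ∈ Finset.range n) := by
              intro p hp
              simp only [Finset.mem_image, Finset.mem_range] at hp
              obtain ⟨k, hk, rfl⟩ := hp
              rw [Finset.mem_filter, hmemM]
              exact ⟨Or.inl ⟨k, hk, rfl⟩, by simp [hk]⟩
            calc n = ((Finset.range n).image (fun k => (k, 2*n + k))).card := by
                  rw [Finset.card_image_of_injective _ (fun a b h => by
                    simpa using congrArg Prod.fst h)]; simp
              _ ≤ _ := Finset.card_le_card hsub
    · calc matchedJobs (Finset.Ico (2*n) (3*n)) μ ≤ μ.card := Finset.card_filter_le _ _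
        _ = n := hμcard
        _ ≤ matchedJobs (Finset.Ico (2*n) (3*n)) M := by
            unfold matchedJobs
            have hsub : (Finset.range n).image (fun k => (k, 2*n + k)) ⊆
                M.filter (fun p => p.2 ∈ Finset.Ico (2*n) (3*n)) := by
              intro p hp
              simp only [Finset.mem_image, Finset.mem_range] at hp
              obtain ⟨k, hk, rfl⟩ := hp
              rw [Finset.mem_filter, hmemM]
              refine ⟨Or.inl ⟨k, hk, rfl⟩, by simp [Finset.mem_Ico]; omega⟩
            calc n = ((Finset.range n).image (fun k => (k, 2*n + k))).card := by
                  rw [Finset.card_image_of_injective _ (fun a b h => by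
                    simpa using congrArg Prod.fst h)]; simp
              _ ≤ _ := Finset.card_le_card hsub
    · calc matchedJobs (Finset.Ico (3*n) (4*n)) μ ≤ μ.card := Finset.card_filter_le _ _
        _ = n := hμcard
        _ ≤ matchedJobs (Finset.Ico (3*n) (4*n)) M := by
            unfold matchedJobs
            have hsub : (Finset.range n).image (fun k => (n + k, 3*n + k)) ⊆
                M.filter (fun p => p.2 ∈ Finset.Ico (3*n) (4*n)) := by
              intro p hp
              simp only [Finset.mem_image, Finset.mem_range] at hp
              obtain ⟨k, hk, rfl⟩ := hp
              rw [Finset.mem_filter, hmemM]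
              refine ⟨Or.inr ⟨k, hk, rfl⟩, by simp [Finset.mem_Ico]; omega⟩
            calc n = ((Finset.range n).image (fun k => (n + k, 3*n + k))).card := by
                  rw [Finset.card_image_of_injective _ (fun a b h => by
                    simpa using congrArg Prod.fst h)]; simp
              _ ≤ _ := Finset.card_le_card hsub
end

section
/- Consider a partitioned (Qing-style) greedy procedure on a single tube containing a set J of jobs and a set W of workers all eligible for these jobs, with compatibility given by a rule of avoidance (worker w compatible with job j iff region(w) ≠ region(j)). Let W^P = {w ∈ W : some job in J is incompatible with w} and W^{NP} = W \ W^P. For any assignment plan (order over workers and per-worker orders over jobs), let μ^{Q1} be the matching produced by processing all workers in a single tube and μ^{Q2} the matching produced by first processing all workers in W^P and then all in W^{NP} (using the same relative orders). Then |μ^{Q2}| ≥ |μ^{Q1}|. -/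
section AuxLemmas

variable {W J : Type} [DecidableEq W] [DecidableEq J]

/-- If predicate `pB` implies `pA`, and `find? pB` succeeds, then `find? pA`
succeeds, returning either the same element or one failing `pB`. -/
lemma find_dom (l : List J) (pA pB : J → Bool) (h : ∀ j, pB j = true → pA j = true)
    {jB : J} (hB : l.find? pB = some jB) :
    ∃ jA, l.find? pA = some jA ∧ (jA = jB ∨ pB jA = false) := by
  induction l with
  | nil => simp at hB
  | cons a t ih =>
    by_cases hb : pB a = true
    · have ha := h a hb
      rw [List.find?_cons_of_pos hb] at hB
      refine ⟨a, List.find?_cons_of_pos ha, Or.inl ?_⟩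
      exact (Option.some.inj hB)
    · rw [List.find?_cons_of_neg (by simpa using hb)] at hB
      by_cases haA : pA a = true
      · exact ⟨a, List.find?_cons_of_pos haA, Or.inr (by simpa using hb)⟩
      · obtain ⟨jA, h1, h2⟩ := ih hB
        exact ⟨jA, by rw [List.find?_cons_of_neg (by simpa using haA)]; exact h1, h2⟩

/-- One greedy step: length increases by at most one and available jobs shrink. -/
lemma step_basic (C : W → J → Bool) (pref : W → List J)
    (st : List (W × J) × Finset J) (w : W) :
    (greedyStep C pref st w).1.length + (greedyStep C pref st w).2.card
      = st.1.length + st.2.card ∧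
    (greedyStep C pref st w).2 ⊆ st.2 ∧
    (greedyStep C pref st w).1.length ≤ st.1.length + 1 := by
  unfold greedyStep
  cases hf : (pref w).find? (fun j => C w j && decide (j ∈ st.2)) with
  | none => simp
  | some j =>
    have hp := List.find?_some hf
    have hj : j ∈ st.2 := by simpa using (Bool.and_elim_right hp)
    simp only
    refine ⟨?_, Finset.erase_subset _ _, by simp⟩
    have : (st.2.erase j).card = st.2.card - 1 := Finset.card_erase_of_mem hj
    have hpos : 1 ≤ st.2.card := Finset.card_pos.mpr ⟨j, hj⟩
    simp [this]
    omega

/-- Conservation over a fold. -/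
lemma fold_basic (C : W → J → Bool) (pref : W → List J) (l : List W) :
    ∀ st : List (W × J) × Finset J,
    (l.foldl (greedyStep C pref) st).1.length + (l.foldl (greedyStep C pref) st).2.card
      = st.1.length + st.2.card ∧
    (l.foldl (greedyStep C pref) st).2 ⊆ st.2 := by
  induction l with
  | nil => intro st; simp
  | cons a t ih =>
    intro st
    obtain ⟨h1, h2, _⟩ := step_basic C pref st a
    obtain ⟨h3, h4⟩ := ih (greedyStep C pref st a)
    exact ⟨by simp only [List.foldl_cons]; omega,
      by simpa only [List.foldl_cons] using h4.trans h2⟩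

/-- Monotonicity of one greedy step with respect to the available job set. -/
lemma step_mono (C : W → J → Bool) (pref : W → List J)
    (A B : List (W × J) × Finset J) (hsub : B.2 ⊆ A.2) (w : W) :
    (greedyStep C pref B w).2 ⊆ (greedyStep C pref A w).2 ∧
    (greedyStep C pref B w).1.length + A.1.length ≤
      (greedyStep C pref A w).1.length + B.1.length := by
  have himp : ∀ j, (fun j => C w j && decide (j ∈ B.2)) j = true →
      (fun j => C w j && decide (j ∈ A.2)) j = true := by
    intro j hj
    simp only [Bool.and_eq_true, decide_eq_true_eq] at hj ⊢
    exact ⟨hj.1, hsub hj.2⟩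
  unfold greedyStep
  cases hfB : (pref w).find? (fun j => C w j && decide (j ∈ B.2)) with
  | none =>
    cases hfA : (pref w).find? (fun j => C w j && decide (j ∈ A.2)) with
    | none => exact ⟨hsub, by simp [Nat.add_comm]⟩
    | some jA =>
      have hmem : jA ∈ pref w := List.mem_of_find?_eq_some hfA
      have hpA := List.find?_some hfA
      have hCjA : C w jA = true := by
        simp only [Bool.and_eq_true] at hpA; exact hpA.1
      have hjAB : jA ∉ B.2 := by
        have := List.find?_eq_none.mp hfB jA hmem
        simp only [Bool.and_eq_true, decide_eq_true_eq, not_and] at this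
        exact this hCjA
      refine ⟨?_, by simp; omega⟩
      intro x hx
      exact Finset.mem_erase.mpr ⟨fun h => hjAB (h ▸ hx), hsub hx⟩
  | some jB =>
    obtain ⟨jA, hfA, hor⟩ := find_dom _ _ _ himp hfB
    rw [hfA]
    refine ⟨?_, by simp; omega⟩
    intro x hx
    have hx' := Finset.mem_erase.mp hx
    refine Finset.mem_erase.mpr ⟨?_, hsub hx'.2⟩
    rcases hor with h | h
    · exact h ▸ hx'.1
    · have hpA := List.find?_some hfA
      have hCjA : C w jA = true := by
        simp only [Bool.and_eq_true] at hpA; exact hpA.1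
      have hjAB : jA ∉ B.2 := by
        intro hmem
        simp [hCjA, hmem] at h
      intro he
      exact hjAB (he ▸ hx'.2)

/-- Comparison: a full run is no longer than the `P`-filtered run plus the
number of non-`P` workers. -/
lemma fold_compare (C : W → J → Bool) (pref : W → List J) (P : W → Bool)
    (l : List W) :
    ∀ A B : List (W × J) × Finset J, B.2 ⊆ A.2 →
    (l.foldl (greedyStep C pref) B).2 ⊆
      ((l.filter P).foldl (greedyStep C pref) A).2 ∧
    (l.foldl (greedyStep C pref) B).1.length + A.1.length ≤
      ((l.filter P).foldl (greedyStep C pref) A).1.length + B.1.length +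
        (l.filter (fun w => !P w)).length := by
  induction l with
  | nil => intro A B h; exact ⟨h, by simp; omega⟩
  | cons a t ih =>
    intro A B h
    by_cases hP : P a = true
    · have hstep := step_mono C pref A B h a
      obtain ⟨ih1, ih2⟩ := ih (greedyStep C pref A a) (greedyStep C pref B a) hstep.1
      simp only [List.filter_cons, hP, if_pos, List.foldl_cons, Bool.not_true]
      constructor
      · simpa using ih1
      · have := hstep.2
        simp only [Bool.false_eq_true, if_false]
        omega
    · obtain ⟨hb1, hb2, hb3⟩ := step_basic C pref B a
      obtain ⟨ih1, ih2⟩ := ih A (greedyStep C pref B a) (hb2.trans h)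
      simp only [List.filter_cons, hP, List.foldl_cons, Bool.not_eq_true'] at *
      constructor
      · simpa [hP] using ih1
      · simp only [eq_self_iff_true, if_true, List.length_cons] at *
        simp [hP] at ih2 ⊢
        omega

/-- If every worker in `l` is compatible with every job and lists all jobs,
then the fold matches `min (length l) (card of available)` extra workers. -/
lemma fold_full (C : W → J → Bool) (pref : W → List J) (jobs : Finset J)
    (l : List W)
    (hcomp : ∀ w ∈ l, ∀ j ∈ jobs, C w j = true)
    (hpref : ∀ w ∈ l, ∀ j ∈ jobs, j ∈ pref w) :
    ∀ st : List (W × J) × Finset J, st.2 ⊆ jobs →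
    (l.foldl (greedyStep C pref) st).1.length = st.1.length + min l.length st.2.card := by
  induction l with
  | nil => intro st _; simp
  | cons a t ih =>
    intro st hst
    rcases Finset.eq_empty_or_nonempty st.2 with he | ⟨j, hj⟩
    · have hnone : (pref a).find? (fun j => C a j && decide (j ∈ st.2)) = none := by
        rw [List.find?_eq_none]
        intro x _
        simp [he]
      have hstep : greedyStep C pref st a = st := by
        unfold greedyStep; rw [hnone]
      rw [List.foldl_cons, hstep, ih (fun w hw => hcomp w (List.mem_cons_of_mem _ hw))
        (fun w hw => hpref w (List.mem_cons_of_mem _ hw)) st hst]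
      simp [he]
    · have hjj : j ∈ jobs := hst hj
      have hsat : ((pref a).find? (fun j => C a j && decide (j ∈ st.2))).isSome := by
        rw [List.find?_isSome]
        exact ⟨j, hpref a (List.mem_cons_self) j hjj,
          by simp [hcomp a (List.mem_cons_self) j hjj, hj]⟩
      obtain ⟨j', hf⟩ := Option.isSome_iff_exists.mp hsat
      have hpj' := List.find?_some hf
      have hj' : j' ∈ st.2 := by simpa using (Bool.and_elim_right hpj')
      have hstep : greedyStep C pref st a = (st.1 ++ [(a, j')], st.2.erase j') := by
        unfold greedyStep; rw [hf]
      have hsub' : (st.2.erase j') ⊆ jobs := (Finset.erase_subset _ _).trans hst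
      have hcard : (st.2.erase j').card = st.2.card - 1 := Finset.card_erase_of_mem hj'
      have hpos : 1 ≤ st.2.card := Finset.card_pos.mpr ⟨j', hj'⟩
      rw [List.foldl_cons, hstep, ih (fun w hw => hcomp w (List.mem_cons_of_mem _ hw))
        (fun w hw => hpref w (List.mem_cons_of_mem _ hw)) _ hsub']
      simp only [List.length_append, List.length_cons, List.length_nil]
      simp [hcard]
      omega

end AuxLemmas

/-- Single tube of jobs `J` with avoidance compatibility. Let
`W^P` be the workers incompatible with some job and `W^{NP}` the rest. For any assignment
plan, the matching produced when the prioritized workers `W^P` are processed first (keeping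
relative orders) is at least as large as the one produced by the unprioritized single-tube
run: `|μ^{Q2}| ≥ |μ^{Q1}|`. -/
theorem stmt6 (workers jobs : Finset ℕ) (rw rj : ℕ → ℕ)
    (C : ℕ → ℕ → Bool) (hC : ∀ w j, C w j = true ↔ rw w ≠ rj j)
    (order : List ℕ) (ho : Enum order workers)
    (pref : ℕ → List ℕ) (hpref : ∀ w ∈ workers, Enum (pref w) jobs)
    (WP : Finset ℕ) (hWP : WP = workers.filter fun w => ∃ j ∈ jobs, rw w = rj j) :
    (greedy C order pref jobs).length ≤
      (greedy C
        (order.filter (fun w => decide (w ∈ WP)) ++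
         order.filter (fun w => decide (w ∉ WP)))
        pref jobs).length := by
  classical
  set lP := order.filter (fun w => decide (w ∈ WP)) with hlP
  set lNP := order.filter (fun w => decide (w ∉ WP)) with hlNP
  have hbasic1 := fold_basic C pref lP (([], jobs) : List (ℕ × ℕ) × Finset ℕ)
  set A1 := lP.foldl (greedyStep C pref) ([], jobs) with hA1
  have hA1card : A1.1.length + A1.2.card = jobs.card := by simpa using hbasic1.1
  have hA1sub : A1.2 ⊆ jobs := by simpa using hbasic1.2
  have hNPmem : ∀ w ∈ lNP, w ∈ workers ∧ w ∉ WP := by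
    intro w hw
    rw [hlNP, List.mem_filter] at hw
    refine ⟨?_, by simpa using hw.2⟩
    have : w ∈ order.toFinset := List.mem_toFinset.mpr hw.1
    rwa [ho.2] at this
  have hcomp : ∀ w ∈ lNP, ∀ j ∈ jobs, C w j = true := by
    intro w hw j hj
    obtain ⟨hwW, hwNP⟩ := hNPmem w hw
    rw [hC]
    intro hEq
    exact hwNP (hWP ▸ Finset.mem_filter.mpr ⟨hwW, j, hj, hEq⟩)
  have hprefNP : ∀ w ∈ lNP, ∀ j ∈ jobs, j ∈ pref w := by
    intro w hw j hj
    have := (hpref w (hNPmem w hw).1).2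
    rw [← this] at hj
    exact List.mem_toFinset.mp hj
  have hQ2 : (greedy C (lP ++ lNP) pref jobs).length
      = A1.1.length + min lNP.length A1.2.card := by
    unfold greedy
    rw [List.foldl_append]
    exact fold_full C pref jobs lNP hcomp hprefNP A1 hA1sub
  have hQ1m : (greedy C order pref jobs).length ≤ jobs.card := by
    have h := (fold_basic C pref order (([], jobs) : List (ℕ × ℕ) × Finset ℕ)).1
    unfold greedy
    simp only [List.length_nil, Nat.zero_add] at h
    omega
  have hfilterNP : order.filter (fun w => !(fun w => decide (w ∈ WP)) w) = lNP := by
    rw [hlNP]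
    apply List.filter_congr
    intro w _
    simp
  have hQ1ak : (greedy C order pref jobs).length ≤ A1.1.length + lNP.length := by
    have hcmp := (fold_compare C pref (fun w => decide (w ∈ WP)) order
      (([], jobs) : List (ℕ × ℕ) × Finset ℕ) ([], jobs) (le_refl _)).2
    rw [hfilterNP] at hcmp
    unfold greedy
    rw [hA1, hlP]
    simpa using hcmp
  rw [hQ2]
  rcases Nat.le_total lNP.length A1.2.card with hle | hle
  · rw [min_eq_left hle]
    exact hQ1ak
  · rw [min_eq_right hle]
    omega
end

section
/- In the setting of the First vs. Second Qing procedures (single tube, avoidance compatibility), for the prioritized greedy run the set of still-available jobs at each prioritized worker's turn under the non-prioritized run is contained in the corresponding set under the prioritized run: formally, for the k-th prioritized worker w^k (by the common order ≻^W restricted to W^P), J^{*Q1}_{w^k} ⊆ J^{*Q2}_{w^k}, where J^{*Q1}_{w} (resp. J^{*Q2}_{w}) denotes the set of unmatched jobs when w is processed under the single-tube (resp. two-tube prioritized) procedure. -/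
/-- The set of still-available jobs at worker `w`'s turn, when the greedy procedure
processes workers in `order` starting from the pool `jobs`. -/
def availAt (C : ℕ → ℕ → Bool) (pref : ℕ → List ℕ) (jobs : Finset ℕ)
    (order : List ℕ) (w : ℕ) : Finset ℕ :=
  ((order.takeWhile (fun x => x ≠ w)).foldl (greedyStep C pref) ([], jobs)).2

lemma find?_rel {α : Type} (p q : α → Bool) (hpq : ∀ x, p x = true → q x = true) :
    ∀ (l : List α) (a b : α), l.find? p = some a → l.find? q = some b →
      b = a ∨ p b = false := by
  intro l
  induction l with
  | nil => intro a b h; simp at h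
  | cons c l ih =>
    intro a b hp hq
    by_cases hqc : q c = true
    · have hb : b = c := by
        rw [List.find?_cons_of_pos hqc] at hq; exact (Option.some_inj.mp hq).symm
      subst hb
      by_cases hpc : p b = true
      · left
        rw [List.find?_cons_of_pos hpc] at hp
        exact (Option.some_inj.mp hp)
      · right; simpa using hpc
    · have hpc : ¬ p c = true := fun h => hqc (hpq c h)
      rw [List.find?_cons_of_neg hpc] at hp
      rw [List.find?_cons_of_neg hqc] at hq
      exact ih a b hp hq

lemma greedyStep_mono (C : ℕ → ℕ → Bool) (pref : ℕ → List ℕ)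
    (s t : List (ℕ × ℕ) × Finset ℕ) (h : s.2 ⊆ t.2) (w : ℕ) :
    (greedyStep C pref s w).2 ⊆ (greedyStep C pref t w).2 := by
  have hpq : ∀ x, (fun j => C w j && decide (j ∈ s.2)) x = true →
      (fun j => C w j && decide (j ∈ t.2)) x = true := by
    intro x hx
    simp only [Bool.and_eq_true, decide_eq_true_eq] at hx ⊢
    exact ⟨hx.1, h hx.2⟩
  unfold greedyStep
  cases hs : (pref w).find? (fun j => C w j && decide (j ∈ s.2)) with
  | none =>
    cases ht : (pref w).find? (fun j => C w j && decide (j ∈ t.2)) with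
    | none => simpa using h
    | some jt =>
      simp only
      intro x hx
      have hxt : x ∈ t.2 := h hx
      have hjt : jt ∈ pref w := List.mem_of_find?_eq_some ht
      have hfail := List.find?_eq_none.mp hs jt hjt
      have hCjt : C w jt = true := by
        have := List.find?_some (p := fun j => C w j && decide (j ∈ t.2)) ht
        simp only [Bool.and_eq_true, decide_eq_true_eq] at this
        exact this.1
      have hjts : jt ∉ s.2 := by
        intro hmem
        exact hfail (by simp [hCjt, hmem])
      exact Finset.mem_erase.mpr ⟨fun he => hjts (he ▸ hx), hxt⟩
  | some js =>
    cases ht : (pref w).find? (fun j => C w j && decide (j ∈ t.2)) with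
    | none =>
      exfalso
      have hjs : js ∈ pref w := List.mem_of_find?_eq_some hs
      have := List.find?_eq_none.mp ht js hjs
      exact this (hpq js (List.find?_some (p := fun j => C w j && decide (j ∈ s.2)) hs))
    | some jt =>
      simp only
      intro x hx
      rw [Finset.mem_erase] at hx ⊢
      refine ⟨?_, h hx.2⟩
      intro he
      subst he
      have hCx : C w x = true := by
        have := List.find?_some (p := fun j => C w j && decide (j ∈ t.2)) ht
        simp only [Bool.and_eq_true, decide_eq_true_eq] at this
        exact this.1
      rcases find?_rel _ _ hpq (pref w) js x hs ht with heq | hf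
      · exact hx.1 heq
      · simp [hCx, hx.2] at hf

lemma greedyStep_subset (C : ℕ → ℕ → Bool) (pref : ℕ → List ℕ)
    (s : List (ℕ × ℕ) × Finset ℕ) (w : ℕ) :
    (greedyStep C pref s w).2 ⊆ s.2 := by
  unfold greedyStep
  cases h : (pref w).find? (fun j => C w j && decide (j ∈ s.2)) with
  | none => simp
  | some j => simpa using Finset.erase_subset j s.2

lemma foldl_sublist_subset (C : ℕ → ℕ → Bool) (pref : ℕ → List ℕ) :
    ∀ {l' l : List ℕ}, List.Sublist l' l → ∀ s t : List (ℕ × ℕ) × Finset ℕ, s.2 ⊆ t.2 →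
      (l.foldl (greedyStep C pref) s).2 ⊆ (l'.foldl (greedyStep C pref) t).2 := by
  intro l' l h
  induction h with
  | slnil => intro s t h; simpa using h
  | cons a h ih =>
    intro s t hst
    simpa using ih (greedyStep C pref s a) t
      ((greedyStep_subset C pref s a).trans hst)
  | cons_cons a h ih =>
    intro s t hst
    simpa using ih (greedyStep C pref s a) (greedyStep C pref t a)
      (greedyStep_mono C pref s t hst a)

lemma takeWhile_append_of_exists {α : Type} {p : α → Bool} :
    ∀ {l₁ : List α}, (∃ x ∈ l₁, p x = false) → ∀ l₂ : List α,
      (l₁ ++ l₂).takeWhile p = l₁.takeWhile p := by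
  intro l₁
  induction l₁ with
  | nil => rintro ⟨x, hx, -⟩; simp at hx
  | cons a l ih =>
    rintro ⟨x, hx, hpx⟩ l₂
    by_cases hpa : p a = true
    · have hxl : x ∈ l := by
        rcases List.mem_cons.mp hx with rfl | h
        · rw [hpa] at hpx; exact absurd hpx Bool.noConfusion
        · exact h
      simp only [List.cons_append, List.takeWhile_cons_of_pos hpa]
      rw [ih ⟨x, hxl, hpx⟩]
    · simp only [List.cons_append, List.takeWhile_cons_of_neg hpa]

lemma takeWhile_filter_sublist {α : Type} [DecidableEq α] (q : α → Bool) (w : α)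
    (hw : q w = true) :
    ∀ l : List α, List.Sublist ((l.filter q).takeWhile (fun x => decide (x ≠ w))) (l.takeWhile (fun x => decide (x ≠ w))) := by
  intro l
  induction l with
  | nil => simp
  | cons a l ih =>
    by_cases ha : a = w
    · subst ha
      rw [List.filter_cons_of_pos hw]
      simp
    · by_cases hqa : q a = true
      · rw [List.filter_cons_of_pos hqa]
        rw [List.takeWhile_cons_of_pos (by simpa using ha),
            List.takeWhile_cons_of_pos (by simpa using ha)]
        exact ih.cons₂ a
      · rw [List.filter_cons_of_neg (by simpa using hqa)]
        rw [List.takeWhile_cons_of_pos (p := fun x => decide (x ≠ w)) (by simpa using ha)]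
        exact ih.cons a

/-- Single tube of jobs with avoidance compatibility; `W^P` the workers with
some incompatible job, `W^{NP}` the rest. For every prioritized worker `w ∈ W^P`, the set of
available jobs at `w`'s turn under the single-tube run is contained in the set of available
jobs at `w`'s turn under the two-tube (prioritized) run: `J^{*Q1}_w ⊆ J^{*Q2}_w`. -/
theorem stmt7 (workers jobs : Finset ℕ) (rw rj : ℕ → ℕ)
    (C : ℕ → ℕ → Bool) (hC : ∀ w j, C w j = true ↔ rw w ≠ rj j)
    (order : List ℕ) (ho : Enum order workers)
    (pref : ℕ → List ℕ) (hpref : ∀ w ∈ workers, Enum (pref w) jobs)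
    (WP : Finset ℕ) (hWP : WP = workers.filter fun w => ∃ j ∈ jobs, rw w = rj j) :
    ∀ w ∈ WP,
      availAt C pref jobs order w ⊆
      availAt C pref jobs
        (order.filter (fun w => decide (w ∈ WP)) ++
         order.filter (fun w => decide (w ∉ WP))) w := by
  intro w hw
  have hww : w ∈ workers := by
    rw [hWP] at hw; exact (Finset.mem_filter.mp hw).1
  have hwo : w ∈ order := by
    rw [← ho.2] at hww; exact List.mem_toFinset.mp hww
  have hwf : w ∈ order.filter (fun x => decide (x ∈ WP)) :=
    List.mem_filter.mpr ⟨hwo, by simpa using hw⟩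
  unfold availAt
  have happ : ((order.filter (fun x => decide (x ∈ WP)) ++
      order.filter (fun x => decide (x ∉ WP))).takeWhile (fun x => decide (x ≠ w))) =
      (order.filter (fun x => decide (x ∈ WP))).takeWhile (fun x => decide (x ≠ w)) :=
    takeWhile_append_of_exists ⟨w, hwf, by simp⟩ _
  rw [happ]
  exact foldl_sublist_subset C pref
    ((takeWhile_filter_sublist (fun x => decide (x ∈ WP)) w (by simpa using hw) order))
    ([], jobs) ([], jobs) (by simp)
end

section
/- For every n ≥ 1 there exists a regional market where the single-tube greedy procedure produces a matching strictly smaller than the prioritized two-tube procedure: with regions X, Y, Z, n workers from X, n workers from Y, n jobs from X, and n jobs from Z (compatibility: regions differ), and an order processing all Y-workers first with all workers preferring Z-jobs over X-jobs, the single-tube procedure matches only n workers while the prioritized procedure (X-workers first, since they are the only ones with a job to avoid) matches all 2n workers. -/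
private def C8 (n w j : ℕ) : Bool := decide (w < 2*n ∧ j < 2*n ∧ (n ≤ w ∨ j < n))

private lemma find?_range_min (p : ℕ → Bool) (N m : ℕ) (hm : m < N)
    (hp : p m = true) (hlow : ∀ j < m, p j = false) :
    (List.range N).find? p = some m := by
  have hsplit : List.range N = List.range' 0 m ++ List.range' m (N - m) := by
    rw [List.range_eq_range']
    have h := List.range'_append (s := 0) (m := m) (n := N - m) (step := 1)
    simp only [one_mul, zero_add] at h
    rw [h]
    congr 1
    omega
  rw [hsplit, List.find?_append]
  have h1 : (List.range' 0 m).find? p = none := by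
    rw [List.find?_eq_none]
    intro x hx
    simp only [List.mem_range'] at hx
    obtain ⟨i, hi, rfl⟩ := hx
    simp only [zero_add, one_mul]
    simp [hlow i hi]
  have h2 : (List.range' m (N - m)).find? p = some m := by
    obtain ⟨k, hk⟩ : ∃ k, N - m = k + 1 := ⟨N - m - 1, by omega⟩
    rw [hk, List.range'_succ, List.find?_cons, hp]
  rw [h1, h2]; rfl

private lemma fold_pick (n : ℕ) (ws : List ℕ) :
    ∀ (m : ℕ) (acc : List (ℕ × ℕ)),
    m + ws.length ≤ 2*n →
    (∀ w ∈ ws, ∀ j, m ≤ j → j < m + ws.length → C8 n w j = true) →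
    ∃ pairs : List (ℕ × ℕ),
      ws.foldl (greedyStep (C8 n) (fun _ => List.range (2*n))) (acc, Finset.Ico m (2*n))
        = (acc ++ pairs, Finset.Ico (m + ws.length) (2*n)) ∧ pairs.length = ws.length := by
  induction ws with
  | nil => intro m acc _ _; exact ⟨[], by simp, rfl⟩
  | cons w ws ih =>
    intro m acc hlen hC
    simp only [List.length_cons] at hlen
    have hm : m < 2*n := by omega
    have hCm : C8 n w m = true := hC w (by simp) m le_rfl (by simp only [List.length_cons]; omega)
    have hf : (List.range (2*n)).find? (fun j => C8 n w j && decide (j ∈ Finset.Ico m (2*n))) = some m := by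
      apply find?_range_min _ _ _ hm
      · simp [hCm, hm]
      · intro j hj
        simp only [Bool.and_eq_false_iff, decide_eq_false_iff_not, Finset.mem_Ico]
        right; omega
    have herase : (Finset.Ico m (2*n)).erase m = Finset.Ico (m+1) (2*n) := by
      ext x; simp [Finset.mem_erase]
    have hstep : greedyStep (C8 n) (fun _ => List.range (2*n)) (acc, Finset.Ico m (2*n)) w
        = (acc ++ [(w, m)], Finset.Ico (m+1) (2*n)) := by
      simp only [greedyStep, hf, herase]
    rw [List.foldl_cons, hstep]
    obtain ⟨pairs, heq, hplen⟩ := ih (m+1) (acc ++ [(w, m)]) (by omega)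
      (fun w' hw' j h1 h2 => hC w' (by simp [hw']) j (by omega) (by simp; omega))
    refine ⟨(w, m) :: pairs, ?_, by simp [hplen]⟩
    rw [heq, List.append_assoc, List.singleton_append]
    simp only [List.length_cons]
    congr 2
    omega

private lemma fold_stuck (n : ℕ) (ws : List ℕ) (S : Finset ℕ) (acc : List (ℕ × ℕ))
    (h : ∀ w ∈ ws, ∀ j ∈ S, C8 n w j = false) :
    ws.foldl (greedyStep (C8 n) (fun _ => List.range (2*n))) (acc, S) = (acc, S) := by
  induction ws with
  | nil => rfl
  | cons w ws ih =>
    have hf : (List.range (2*n)).find? (fun j => C8 n w j && decide (j ∈ S)) = none := by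
      rw [List.find?_eq_none]
      intro x _
      by_cases hx : x ∈ S
      · simp [h w (by simp) x hx]
      · simp [hx]
    have hstep : greedyStep (C8 n) (fun _ => List.range (2*n)) (acc, S) w = (acc, S) := by
      simp only [greedyStep, hf]
    rw [List.foldl_cons, hstep]
    exact ih (fun w' hw' => h w' (by simp [hw']))


/-- For every `n ≥ 1` there is a regional market (regions `0 = X`, `1 = Y`,
`2 = Z`) with `n` X-workers, `n` Y-workers, `n` X-jobs and `n` Z-jobs (compatibility: regions
differ), an order processing all Y-workers first, and preferences ranking Z-jobs above
X-jobs, on which the single-tube greedy procedure matches only `n` workers, while the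
prioritized procedure (X-workers — the only workers with a job to avoid — first) matches all
`2n` workers. -/
theorem stmt8 (n : ℕ) (hn : 1 ≤ n) :
    ∃ (workers jobs : Finset ℕ) (rw rj : ℕ → Fin 3) (C : ℕ → ℕ → Bool)
      (order : List ℕ) (pref : ℕ → List ℕ),
      (workers.filter fun w => rw w = 0).card = n ∧
      (workers.filter fun w => rw w = 1).card = n ∧
      workers.card = 2 * n ∧
      (jobs.filter fun j => rj j = 0).card = n ∧
      (jobs.filter fun j => rj j = 2).card = n ∧
      jobs.card = 2 * n ∧
      (∀ w j, C w j = true ↔ (w ∈ workers ∧ j ∈ jobs ∧ rw w ≠ rj j)) ∧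
      (∃ oY oX, order = oY ++ oX ∧
        Enum oY (workers.filter fun w => rw w = 1) ∧
        Enum oX (workers.filter fun w => rw w = 0)) ∧
      (∀ w ∈ workers, ∃ lZ lX, pref w = lZ ++ lX ∧
        Enum lZ (jobs.filter fun j => rj j = 2) ∧
        Enum lX (jobs.filter fun j => rj j = 0)) ∧
      (greedy C order pref jobs).length = n ∧
      (greedy C
        (order.filter (fun w => decide (rw w = 0)) ++
         order.filter (fun w => decide (rw w ≠ 0)))
        pref jobs).length = 2 * n := by
  classical
  refine ⟨Finset.range (2*n), Finset.range (2*n),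
    (fun w => if w < n then 0 else 1), (fun j => if j < n then 2 else 0),
    C8 n, List.range' n n ++ List.range n, (fun _ => List.range (2*n)),
    ?_, ?_, ?_, ?_, ?_, ?_, ?_, ?_, ?_, ?_, ?_⟩
  · -- X-workers count
    have : (Finset.range (2*n)).filter (fun w => (if w < n then (0:Fin 3) else 1) = 0)
        = Finset.range n := by
      ext x
      simp only [Finset.mem_filter, Finset.mem_range]
      by_cases hx : x < n <;> simp [hx] <;> omega
    rw [this, Finset.card_range]
  · have : (Finset.range (2*n)).filter (fun w => (if w < n then (0:Fin 3) else 1) = 1)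
        = Finset.Ico n (2*n) := by
      ext x
      simp only [Finset.mem_filter, Finset.mem_range, Finset.mem_Ico]
      by_cases hx : x < n <;> simp [hx] <;> omega
    rw [this, Nat.card_Ico]; omega
  · rw [Finset.card_range]
  · have : (Finset.range (2*n)).filter (fun j => (if j < n then (2:Fin 3) else 0) = 0)
        = Finset.Ico n (2*n) := by
      ext x
      simp only [Finset.mem_filter, Finset.mem_range, Finset.mem_Ico]
      by_cases hx : x < n <;> simp [hx] <;> omega
    rw [this, Nat.card_Ico]; omega
  · have : (Finset.range (2*n)).filter (fun j => (if j < n then (2:Fin 3) else 0) = 2)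
        = Finset.range n := by
      ext x
      simp only [Finset.mem_filter, Finset.mem_range]
      by_cases hx : x < n <;> simp [hx] <;> omega
    rw [this, Finset.card_range]
  · rw [Finset.card_range]
  · -- C spec
    intro w j
    simp only [C8, decide_eq_true_eq, Finset.mem_range]
    by_cases hw : w < n <;> by_cases hj : j < n <;>
      simp [hw, hj] <;> omega
  · -- order decomposition
    refine ⟨List.range' n n, List.range n, rfl, ⟨(List.nodup_range' (s := n) (n := n)), ?_⟩,
      ⟨(List.nodup_range (n := n)), ?_⟩⟩
    · ext x
      simp only [List.mem_toFinset, List.mem_range'_1, Finset.mem_filter, Finset.mem_range]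
      by_cases hx : x < n <;> simp [hx] <;> omega
    · ext x
      simp only [List.mem_toFinset, List.mem_range, Finset.mem_filter, Finset.mem_range]
      by_cases hx : x < n <;> simp [hx] <;> omega
  · -- pref decomposition
    intro w _
    refine ⟨List.range n, List.range' n n, ?_, ⟨(List.nodup_range (n := n)), ?_⟩,
      ⟨(List.nodup_range' (s := n) (n := n)), ?_⟩⟩
    · rw [List.range_eq_range', List.range_eq_range']
      have h := List.range'_append (s := 0) (m := n) (n := n) (step := 1)
      simp only [one_mul, zero_add] at h
      rw [two_mul, ← h]
    · ext x
      simp only [List.mem_toFinset, List.mem_range, Finset.mem_filter, Finset.mem_range]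
      by_cases hx : x < n <;> simp [hx] <;> omega
    · ext x
      simp only [List.mem_toFinset, List.mem_range'_1, Finset.mem_filter, Finset.mem_range]
      by_cases hx : x < n <;> simp [hx] <;> omega
  · -- single-tube greedy: length n
    unfold greedy
    rw [Finset.range_eq_Ico, List.foldl_append]
    have h0 : Finset.Ico 0 (2*n) = Finset.Ico (0:ℕ) (2*n) := rfl
    obtain ⟨pairs, heq, hplen⟩ := fold_pick n (List.range' n n) 0 []
      (by simp; omega)
      (by
        intro w hw j _ _
        simp only [List.mem_range'] at hw
        obtain ⟨i, hi, rfl⟩ := hw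
        simp only [List.length_range'] at *
        simp only [C8, decide_eq_true_eq]
        refine ⟨by omega, by omega, Or.inl (by omega)⟩)
    rw [heq]
    simp only [List.length_range', zero_add] at *
    rw [fold_stuck n (List.range n) (Finset.Ico n (2*n)) ([] ++ pairs)
      (by
        intro w hw j hj
        simp only [List.mem_range] at hw
        simp only [Finset.mem_Ico] at hj
        simp only [C8, decide_eq_false_iff_not]
        push_neg
        intro _ _
        constructor <;> omega)]
    simp [hplen]
  · -- prioritized greedy: length 2n
    have hfX : (List.range' n n ++ List.range n).filter
        (fun w => decide ((if w < n then (0:Fin 3) else 1) = 0)) = List.range n := by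
      rw [List.filter_append]
      have h1 : (List.range' n n).filter
          (fun w => decide ((if w < n then (0:Fin 3) else 1) = 0)) = [] := by
        rw [List.filter_eq_nil_iff]
        intro w hw
        simp only [List.mem_range'] at hw
        obtain ⟨i, hi, rfl⟩ := hw
        have : ¬ (n + 1 * i < n) := by omega
        simp [this]
      have h2 : (List.range n).filter
          (fun w => decide ((if w < n then (0:Fin 3) else 1) = 0)) = List.range n := by
        rw [List.filter_eq_self]
        intro w hw
        simp only [List.mem_range] at hw
        simp [hw]
      rw [h1, h2, List.nil_append]
    have hfY : (List.range' n n ++ List.range n).filter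
        (fun w => decide ((if w < n then (0:Fin 3) else 1) ≠ 0)) = List.range' n n := by
      rw [List.filter_append]
      have h1 : (List.range' n n).filter
          (fun w => decide ((if w < n then (0:Fin 3) else 1) ≠ 0)) = List.range' n n := by
        rw [List.filter_eq_self]
        intro w hw
        simp only [List.mem_range'] at hw
        obtain ⟨i, hi, rfl⟩ := hw
        have : ¬ (n + 1 * i < n) := by omega
        simp [this]
      have h2 : (List.range n).filter
          (fun w => decide ((if w < n then (0:Fin 3) else 1) ≠ 0)) = [] := by
        rw [List.filter_eq_nil_iff]
        intro w hw
        simp only [List.mem_range] at hw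
        simp [hw]
      rw [h1, h2, List.append_nil]
    rw [hfX, hfY]
    unfold greedy
    rw [Finset.range_eq_Ico, List.foldl_append]
    obtain ⟨pairs, heq, hplen⟩ := fold_pick n (List.range n) 0 []
      (by simp; omega)
      (by
        intro w hw j _ hj
        simp only [List.mem_range] at hw
        simp only [List.length_range, zero_add] at hj
        simp only [C8, decide_eq_true_eq]
        refine ⟨by omega, by omega, Or.inr (by omega)⟩)
    rw [heq]
    simp only [List.length_range, zero_add] at *
    obtain ⟨pairs2, heq2, hplen2⟩ := fold_pick n (List.range' n n) n ([] ++ pairs)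
      (by simp; omega)
      (by
        intro w hw j _ _
        simp only [List.mem_range'] at hw
        obtain ⟨i, hi, rfl⟩ := hw
        simp only [C8, decide_eq_true_eq]
        refine ⟨by omega, ?_, Or.inl (by omega)⟩
        simp only [List.length_range'] at *
        omega)
    rw [heq2]
    simp only [List.length_range'] at *
    simp [hplen, hplen2]
    omega
end

section
/- Berge's lemma for bipartite worker-job matchings: a matching M in a bipartite graph (workers vs. jobs, edges given by compatibility) has maximum cardinality if and only if there is no augmenting path with respect to M, i.e., no path of odd length whose endpoints are both unmatched vertices and whose edges alternate between edges outside M and edges inside M. -/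
section BergeDefs

variable {W J : Type}

/-- A matching inside the edge set `E` of a bipartite worker–job graph:
a set of edges no two of which share an endpoint. -/
def IsMatchingIn (E M : Finset (W × J)) : Prop :=
  M ⊆ E ∧
  (∀ p ∈ M, ∀ q ∈ M, p.1 = q.1 → p = q) ∧
  (∀ p ∈ M, ∀ q ∈ M, p.2 = q.2 → p = q)

/-- An `M`-augmenting path in the bipartite graph with edge set `E`:
a path `w₀ - j₀ - w₁ - j₁ - ⋯ - w_m - j_m` of odd length whose endpoints `w₀`, `j_m` are
both `M`-unmatched, whose odd edges `(wᵢ, jᵢ)` lie in `E \ M` and whose even edges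
`(wᵢ₊₁, jᵢ)` lie in `M` (so edges alternate: not in `M`, in `M`, …, not in `M`). -/
structure AugPath (E M : Finset (W × J)) where
  m : ℕ
  ws : Fin (m + 1) → W
  js : Fin (m + 1) → J
  inj_ws : Function.Injective ws
  inj_js : Function.Injective js
  edge : ∀ i, (ws i, js i) ∈ E ∧ (ws i, js i) ∉ M
  medge : ∀ i : Fin m, (ws i.succ, js i.castSucc) ∈ M
  start_unmatched : ∀ j, (ws 0, j) ∉ M
  end_unmatched : ∀ w, (w, js (Fin.last m)) ∉ M

end BergeDefs


namespace BergeAux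

variable {W J : Type}

open Classical in
noncomputable def pickW (M : Finset (W × J)) (w : W) : Option J :=
  if h : ∃ j, (w, j) ∈ M then some h.choose else none

open Classical in
noncomputable def pickJ (M : Finset (W × J)) (j : J) : Option W :=
  if h : ∃ w, (w, j) ∈ M then some h.choose else none

lemma pickW_eq_some {M : Finset (W × J)}
    (hM : ∀ p ∈ M, ∀ q ∈ M, p.1 = q.1 → p = q) (w : W) (j : J) :
    pickW M w = some j ↔ (w, j) ∈ M := by
  unfold pickW
  by_cases h : ∃ j, (w, j) ∈ M
  · rw [dif_pos h]
    constructor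
    · rintro hc
      have hc' : h.choose = j := by injection hc
      exact hc' ▸ h.choose_spec
    · intro hj
      have hs := h.choose_spec
      have := hM _ hs _ hj rfl
      simp only [Prod.mk.injEq] at this
      simp [this.2]
  · rw [dif_neg h]
    simp only [false_iff, reduceCtorEq, false_iff]
    exact fun hj => h ⟨j, hj⟩

lemma pickJ_eq_some {M : Finset (W × J)}
    (hM : ∀ p ∈ M, ∀ q ∈ M, p.2 = q.2 → p = q) (j : J) (w : W) :
    pickJ M j = some w ↔ (w, j) ∈ M := by
  unfold pickJ
  by_cases h : ∃ w, (w, j) ∈ M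
  · rw [dif_pos h]
    constructor
    · rintro hc
      have hc' : h.choose = w := by injection hc
      exact hc' ▸ h.choose_spec
    · intro hj
      have hs := h.choose_spec
      have := hM _ hs _ hj rfl
      simp only [Prod.mk.injEq] at this
      simp [this.1]
  · rw [dif_neg h]
    simp only [false_iff, reduceCtorEq, false_iff]
    exact fun hj => h ⟨w, hj⟩

def orbit (step : W → Option W) (w0 : W) : ℕ → Option W
  | 0 => some w0
  | n + 1 => (orbit step w0 n).bind step

lemma orbit_succ (step : W → Option W) (w0 : W) (n : ℕ) :
    orbit step w0 (n + 1) = (orbit step w0 n).bind step := rfl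

lemma orbit_inj {step : W → Option W}
    (hinj : ∀ ⦃x y z : W⦄, step x = some z → step y = some z → x = y) :
    ∀ (a b : ℕ) (w0 w1 : W), (∀ y, step y ≠ some w0) → (∀ y, step y ≠ some w1) →
      ∀ x, orbit step w0 a = some x → orbit step w1 b = some x → a = b ∧ w0 = w1 := by
  intro a
  induction a with
  | zero =>
    intro b w0 w1 h0 h1 x hx hy
    cases b with
    | zero =>
      simp only [orbit, Option.some.injEq] at hx hy
      exact ⟨rfl, hx.trans hy.symm⟩
    | succ b =>
      simp only [orbit, Option.some.injEq] at hx
      rw [orbit_succ, Option.bind_eq_some_iff] at hy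
      obtain ⟨y, _, hy2⟩ := hy
      exact absurd (hx ▸ hy2) (h0 y)
  | succ a ih =>
    intro b w0 w1 h0 h1 x hx hy
    cases b with
    | zero =>
      simp only [orbit, Option.some.injEq] at hy
      rw [orbit_succ, Option.bind_eq_some_iff] at hx
      obtain ⟨y, _, hy2⟩ := hx
      exact absurd (hy ▸ hy2) (h1 y)
    | succ b =>
      rw [orbit_succ, Option.bind_eq_some_iff] at hx hy
      obtain ⟨y, hy1, hy2⟩ := hx
      obtain ⟨z, hz1, hz2⟩ := hy
      have hyz : y = z := hinj hy2 hz2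
      obtain ⟨hab, hww⟩ := ih b w0 w1 h0 h1 y hy1 (hyz ▸ hz1)
      exact ⟨by omega, hww⟩

lemma orbit_none_mono {step : W → Option W} {w0 : W} {m : ℕ}
    (h : orbit step w0 m = none) : ∀ n, m ≤ n → orbit step w0 n = none := by
  intro n hn
  induction n with
  | zero => exact (Nat.le_zero.mp hn) ▸ h
  | succ n ihn =>
    rcases Nat.lt_or_ge m (n+1) with h1 | h1
    · rw [orbit_succ, ihn (by omega)]; rfl
    · have : m = n + 1 := by omega
      exact this ▸ h


lemma aug_bigger {W J : Type} (E M : Finset (W × J)) (hM : IsMatchingIn E M)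
    (P : AugPath E M) : ∃ M' : Finset (W × J), IsMatchingIn E M' ∧ M'.card = M.card + 1 := by
  classical
  set Pe : Finset (W × J) := Finset.image (fun i => (P.ws i, P.js i)) Finset.univ with hPe
  set K : Finset (W × J) :=
    Finset.image (fun i : Fin P.m => (P.ws i.succ, P.js i.castSucc)) Finset.univ with hK
  have hPe_mem : ∀ e, e ∈ Pe ↔ ∃ i, (P.ws i, P.js i) = e := by
    intro e; simp [hPe]
  have hK_mem : ∀ e, e ∈ K ↔ ∃ i : Fin P.m, (P.ws i.succ, P.js i.castSucc) = e := by
    intro e; simp [hK]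
  have hKM : K ⊆ M := by
    intro e he
    obtain ⟨i, hi⟩ := (hK_mem e).mp he
    exact hi ▸ P.medge i
  have hPeM : ∀ e ∈ Pe, e ∉ M := by
    intro e he
    obtain ⟨i, hi⟩ := (hPe_mem e).mp he
    exact hi ▸ (P.edge i).2
  refine ⟨(M \ K) ∪ Pe, ⟨?_, ?_, ?_⟩, ?_⟩
  · intro e he
    rcases Finset.mem_union.mp he with h | h
    · exact hM.1 (Finset.mem_sdiff.mp h).1
    · obtain ⟨i, hi⟩ := (hPe_mem e).mp h
      exact hi ▸ (P.edge i).1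
  · -- worker condition
    intro p hp q hq hpq
    have base : ∀ a b : W × J, a ∈ M \ K → b ∈ Pe → a.1 ≠ b.1 := by
      intro a b ha hb hab
      obtain ⟨haM, haK⟩ := Finset.mem_sdiff.mp ha
      obtain ⟨i, hi⟩ := (hPe_mem b).mp hb
      rcases Fin.eq_zero_or_eq_succ i with h0 | ⟨i', hi'⟩
      · have ha1 : a.1 = P.ws 0 := by rw [hab, ← hi, h0]
        apply P.start_unmatched a.2
        rw [← ha1]
        exact haM
      · have hm := P.medge i'
        have : a = (P.ws i'.succ, P.js i'.castSucc) := by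
          apply hM.2.1 a haM _ hm
          rw [hab, ← hi, hi']
        exact haK ((hK_mem a).mpr ⟨i', this.symm⟩)
    rcases Finset.mem_union.mp hp with h1 | h1 <;> rcases Finset.mem_union.mp hq with h2 | h2
    · exact hM.2.1 p (Finset.mem_sdiff.mp h1).1 q (Finset.mem_sdiff.mp h2).1 hpq
    · exact absurd hpq (base p q h1 h2)
    · exact absurd hpq.symm (base q p h2 h1)
    · obtain ⟨i, hi⟩ := (hPe_mem p).mp h1
      obtain ⟨i', hi'⟩ := (hPe_mem q).mp h2
      have : P.ws i = P.ws i' := by rw [← hi, ← hi'] at hpq; exact hpq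
      rw [← hi, ← hi', P.inj_ws this]
  · -- job condition
    intro p hp q hq hpq
    have base : ∀ a b : W × J, a ∈ M \ K → b ∈ Pe → a.2 ≠ b.2 := by
      intro a b ha hb hab
      obtain ⟨haM, haK⟩ := Finset.mem_sdiff.mp ha
      obtain ⟨i, hi⟩ := (hPe_mem b).mp hb
      rcases Fin.eq_castSucc_or_eq_last i with ⟨i', hi'⟩ | h0
      · have hm := P.medge i'
        have : a = (P.ws i'.succ, P.js i'.castSucc) := by
          apply hM.2.2 a haM _ hm
          rw [hab, ← hi, hi']
        exact haK ((hK_mem a).mpr ⟨i', this.symm⟩)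
      · have ha2 : a.2 = P.js (Fin.last P.m) := by rw [hab, ← hi, h0]
        apply P.end_unmatched a.1
        rw [← ha2]
        exact haM
    rcases Finset.mem_union.mp hp with h1 | h1 <;> rcases Finset.mem_union.mp hq with h2 | h2
    · exact hM.2.2 p (Finset.mem_sdiff.mp h1).1 q (Finset.mem_sdiff.mp h2).1 hpq
    · exact absurd hpq (base p q h1 h2)
    · exact absurd hpq.symm (base q p h2 h1)
    · obtain ⟨i, hi⟩ := (hPe_mem p).mp h1
      obtain ⟨i', hi'⟩ := (hPe_mem q).mp h2
      have : P.js i = P.js i' := by rw [← hi, ← hi'] at hpq; exact hpq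
      rw [← hi, ← hi', P.inj_js this]
  · -- cardinality
    have hdisj : Disjoint (M \ K) Pe := by
      rw [Finset.disjoint_right]
      intro e he
      simp only [Finset.mem_sdiff, not_and]
      intro heM
      exact absurd heM (hPeM e he)
    have hPec : Pe.card = P.m + 1 := by
      rw [hPe, Finset.card_image_of_injective _ ?_, Finset.card_univ, Fintype.card_fin]
      intro i i' h
      simp only [Prod.mk.injEq] at h
      exact P.inj_ws h.1
    have hKc : K.card = P.m := by
      rw [hK, Finset.card_image_of_injective _ ?_, Finset.card_univ, Fintype.card_fin]
      intro i i' h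
      simp only [Prod.mk.injEq] at h
      exact Fin.succ_injective _ (P.inj_ws h.1)
    have hKle : K.card ≤ M.card := Finset.card_le_card hKM
    rw [Finset.card_union_of_disjoint hdisj, Finset.card_sdiff_of_subset hKM, hPec, hKc]
    omega

lemma exists_aug {W J : Type} (E M M' : Finset (W × J)) (hM : IsMatchingIn E M)
    (hM' : IsMatchingIn E M') (hcard : M.card < M'.card) : Nonempty (AugPath E M) := by
  classical
  by_contra hA
  -- set up partial functions
  set f : W → Option J := pickW M' with hf_def
  set g : J → Option W := pickJ M with hg_def
  have hf : ∀ w j, f w = some j ↔ (w, j) ∈ M' := fun w j => pickW_eq_some hM'.2.1 w j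
  have hg : ∀ j w, g j = some w ↔ (w, j) ∈ M := fun j w => pickJ_eq_some hM.2.2 j w
  set step : W → Option W := fun w => (f w).bind g with hstep_def
  have hstep : ∀ w w', step w = some w' ↔ ∃ j, (w, j) ∈ M' ∧ (w', j) ∈ M := by
    intro w w'
    simp only [hstep_def, Option.bind_eq_some_iff]
    constructor
    · rintro ⟨j, h1, h2⟩; exact ⟨j, (hf w j).mp h1, (hg j w').mp h2⟩
    · rintro ⟨j, h1, h2⟩; exact ⟨j, (hf w j).mpr h1, (hg j w').mpr h2⟩
  have hinj : ∀ ⦃x y z : W⦄, step x = some z → step y = some z → x = y := by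
    intro x y z hx hy
    obtain ⟨jx, hx1, hx2⟩ := (hstep x z).mp hx
    obtain ⟨jy, hy1, hy2⟩ := (hstep y z).mp hy
    have hj : jx = jy := by
      have := hM.2.1 _ hx2 _ hy2 rfl
      simpa using this
    subst hj
    have := hM'.2.2 _ hx1 _ hy1 rfl
    simpa using this
  set A : Finset W := M.image Prod.fst with hA_def
  set A' : Finset W := M'.image Prod.fst with hA'_def
  have hAc : A.card = M.card :=
    Finset.card_image_of_injOn (fun p hp q hq h => hM.2.1 p hp q hq h)
  have hA'c : A'.card = M'.card :=
    Finset.card_image_of_injOn (fun p hp q hq h => hM'.2.1 p hp q hq h)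
  have hmemA : ∀ w, w ∈ A ↔ ∃ j, (w, j) ∈ M := by
    intro w
    simp only [hA_def, Finset.mem_image]
    constructor
    · rintro ⟨p, hp, rfl⟩; exact ⟨p.2, hp⟩
    · rintro ⟨j, hj⟩; exact ⟨(w, j), hj, rfl⟩
  have hmemA' : ∀ w, w ∈ A' ↔ ∃ j, (w, j) ∈ M' := by
    intro w
    simp only [hA'_def, Finset.mem_image]
    constructor
    · rintro ⟨p, hp, rfl⟩; exact ⟨p.2, hp⟩
    · rintro ⟨j, hj⟩; exact ⟨(w, j), hj, rfl⟩
  have hnr : ∀ w, w ∉ A → ∀ y, step y ≠ some w := by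
    intro w hw y hy
    obtain ⟨j, _, h2⟩ := (hstep y w).mp hy
    exact hw ((hmemA w).mpr ⟨j, h2⟩)
  -- the key construction
  have key : ∀ w0 ∈ A' \ A, ∃ (x : W) (k : ℕ), x ∈ A \ A' ∧ orbit step w0 k = some x := by
    intro w0 hw0
    obtain ⟨hw0A', hw0A⟩ := Finset.mem_sdiff.mp hw0
    have hnr0 := hnr w0 hw0A
    -- all orbit values lie in A ∪ A'
    have hF : ∀ n x, orbit step w0 n = some x → x ∈ A ∪ A' := by
      intro n x hx
      cases n with
      | zero =>
        simp only [orbit, Option.some.injEq] at hx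
        exact Finset.mem_union_right _ (hx ▸ hw0A')
      | succ n =>
        rw [orbit_succ, Option.bind_eq_some_iff] at hx
        obtain ⟨y, _, hy2⟩ := hx
        obtain ⟨j, _, h2⟩ := (hstep y x).mp hy2
        exact Finset.mem_union_left _ ((hmemA x).mpr ⟨j, h2⟩)
    -- termination
    have hN : ∃ N, orbit step w0 N = none := by
      by_contra hc
      push_neg at hc
      have hv : ∀ n, ∃ x, orbit step w0 n = some x := by
        intro n
        rcases h : orbit step w0 n with _ | x
        · exact absurd h (hc n)
        · exact ⟨x, rfl⟩
      set v : ℕ → W := fun n => (orbit step w0 n).getD w0 with hv_def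
      have hvs : ∀ n, orbit step w0 n = some (v n) := by
        intro n
        obtain ⟨x, hx⟩ := hv n
        simp [hv_def, hx]
      have hiv : Set.InjOn v (Finset.range ((A ∪ A').card + 1)) := by
        intro a _ b _ hab
        exact (orbit_inj hinj a b w0 w0 hnr0 hnr0 (v a) (hvs a) (hab ▸ hvs b)).1
      have hsub : ∀ n ∈ Finset.range ((A ∪ A').card + 1), v n ∈ A ∪ A' :=
        fun n _ => hF n (v n) (hvs n)
      have := Finset.card_le_card_of_injOn v hsub hiv
      simp at this
    have hfind := Nat.find_spec hN
    have h0 : Nat.find hN ≠ 0 := by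
      intro h
      rw [h] at hfind
      simp [orbit] at hfind
    set k : ℕ := Nat.find hN - 1 with hk_def
    have hk1 : k + 1 = Nat.find hN := by omega
    have hks : ∃ x, orbit step w0 k = some x := by
      rcases h : orbit step w0 k with _ | x
      · exact absurd h (Nat.find_min hN (by omega))
      · exact ⟨x, rfl⟩
    obtain ⟨wk, hwk⟩ := hks
    have hterm : step wk = none := by
      have h1 : orbit step w0 (k + 1) = none := hk1 ▸ hfind
      rw [orbit_succ, hwk] at h1
      exact h1
    rcases hfwk : f wk with _ | j
    · -- terminal worker is M'-unmatched : good case for counting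
      have hk0 : k ≠ 0 := by
        intro h
        rw [h] at hwk
        simp only [orbit, Option.some.injEq] at hwk
        obtain ⟨j0, hj0⟩ := (hmemA' w0).mp hw0A'
        have := (hf w0 j0).mpr hj0
        rw [hwk, hfwk] at this
        exact nomatch this
      obtain ⟨k', hk'⟩ : ∃ k', k = k' + 1 := ⟨k - 1, by omega⟩
      have hwkA : wk ∈ A := by
        have h1 := hwk
        rw [hk', orbit_succ, Option.bind_eq_some_iff] at h1
        obtain ⟨y, _, hy2⟩ := h1
        obtain ⟨j0, _, h2⟩ := (hstep y wk).mp hy2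
        exact (hmemA wk).mpr ⟨j0, h2⟩
      have hwkA' : wk ∉ A' := by
        intro h
        obtain ⟨j0, hj0⟩ := (hmemA' wk).mp h
        have := (hf wk j0).mpr hj0
        rw [hfwk] at this
        exact nomatch this
      exact ⟨wk, k, Finset.mem_sdiff.mpr ⟨hwkA, hwkA'⟩, hwk⟩
    · -- terminal job is M-unmatched : build an augmenting path, contradiction
      exfalso
      apply hA
      have hgj : g j = none := by
        have := hterm
        rw [hstep_def] at this
        simp only at this
        rw [hfwk] at this
        exact this
      have hsome : ∀ i : ℕ, i ≤ k → ∃ x, orbit step w0 i = some x := by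
        intro i hi
        rcases h : orbit step w0 i with _ | x
        · rw [orbit_none_mono h k hi] at hwk
          exact nomatch hwk
        · exact ⟨x, rfl⟩
      set ws : Fin (k + 1) → W := fun i => (orbit step w0 i).getD w0 with hws_def
      have hws : ∀ i : Fin (k + 1), orbit step w0 i = some (ws i) := by
        intro i
        obtain ⟨x, hx⟩ := hsome i (by omega)
        simp [hws_def, hx]
      have hwsk : ws (Fin.last k) = wk := by
        have h1 := hws (Fin.last k)
        rw [Fin.val_last, hwk] at h1
        exact (Option.some.injEq _ _ ▸ h1).symm
      have hfs : ∀ i : Fin (k + 1), ∃ j', f (ws i) = some j' := by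
        intro i
        rcases Nat.lt_or_ge (i : ℕ) k with hik | hik
        · obtain ⟨x, hx⟩ := hsome ((i : ℕ) + 1) (by omega)
          rw [orbit_succ, hws i, Option.bind_some, hstep_def] at hx
          simp only at hx
          rw [Option.bind_eq_some_iff] at hx
          obtain ⟨j', hj', _⟩ := hx
          exact ⟨j', hj'⟩
        · have hik' : (i : ℕ) = k := by omega
          have : ws i = wk := by
            have h1 := hws i
            rw [hik', hwk] at h1
            exact (Option.some.injEq _ _ ▸ h1).symm
          exact ⟨j, this ▸ hfwk⟩
      set js : Fin (k + 1) → J := fun i => (f (ws i)).getD j with hjs_def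
      have hjs : ∀ i, f (ws i) = some (js i) := by
        intro i
        obtain ⟨j', hj'⟩ := hfs i
        simp [hjs_def, hj']
      have hjsM' : ∀ i, (ws i, js i) ∈ M' := fun i => (hf _ _).mp (hjs i)
      have hinjws : Function.Injective ws := by
        intro i i' h
        have := orbit_inj hinj i i' w0 w0 hnr0 hnr0 (ws i) (hws i) (h ▸ hws i')
        exact Fin.ext this.1
      refine ⟨⟨k, ws, js, hinjws, ?_, ?_, ?_, ?_, ?_⟩⟩
      · -- inj_js
        intro i i' h
        apply hinjws
        exact congrArg Prod.fst (hM'.2.2 _ (hjsM' i) _ (hjsM' i') h)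
      · -- edge
        intro i
        refine ⟨hM'.1 (hjsM' i), ?_⟩
        intro hmem
        rcases Nat.eq_zero_or_pos (i : ℕ) with hi0 | hipos
        · have hwi : ws i = w0 := by
            have h1 := hws i
            rw [hi0] at h1
            simp only [orbit, Option.some.injEq] at h1
            exact h1.symm
          exact hw0A ((hmemA w0).mpr ⟨js i, hwi ▸ hmem⟩)
        · obtain ⟨n, hn⟩ : ∃ n, (i : ℕ) = n + 1 := ⟨(i : ℕ) - 1, by omega⟩
          have h1 := hws i
          rw [hn, orbit_succ, Option.bind_eq_some_iff] at h1
          obtain ⟨y, hy1, hy2⟩ := h1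
          obtain ⟨j', h2, h3⟩ := (hstep y (ws i)).mp hy2
          have hjj : js i = j' := by
            have := hM.2.1 _ hmem _ h3 rfl
            simpa using this
          have hyw : y = ws i :=
            congrArg Prod.fst (hM'.2.2 _ h2 _ (hjsM' i) (by rw [hjj]))
          rw [hyw] at hy1
          have h4 := hws i
          rw [hn] at h4
          have := orbit_inj hinj n (n + 1) w0 w0 hnr0 hnr0 (ws i) hy1 h4
          omega
      · -- medge
        intro i
        have h2 := hws i.succ
        rw [Fin.val_succ, orbit_succ] at h2
        have h1 := hws i.castSucc
        rw [Fin.coe_castSucc] at h1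
        rw [h1, Option.bind_some] at h2
        rw [hstep_def] at h2
        simp only at h2
        rw [hjs i.castSucc, Option.bind_some] at h2
        exact (hg _ _).mp h2
      · -- start_unmatched
        intro j' hmem
        have hws0 : ws 0 = w0 := by
          have h1 := hws 0
          simp only [Fin.val_zero, orbit, Option.some.injEq] at h1
          exact h1.symm
        exact hw0A ((hmemA w0).mpr ⟨j', hws0 ▸ hmem⟩)
      · -- end_unmatched
        intro w hmem
        have hjk : js (Fin.last k) = j := by
          have h1 := hjs (Fin.last k)
          rw [hwsk, hfwk] at h1
          exact (Option.some.injEq _ _ ▸ h1).symm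
        have := (hg j w).mpr (hjk ▸ hmem)
        rw [hgj] at this
        exact nomatch this
  -- counting argument
  have hWne : Nonempty W := by
    have : 0 < M'.card := by omega
    obtain ⟨p, hp⟩ := Finset.card_pos.mp this
    exact ⟨p.1⟩
  choose! T K hT1 hT2 using key
  have hcount : (A' \ A).card ≤ (A \ A').card := by
    apply Finset.card_le_card_of_injOn T (fun a ha => hT1 a ha)
    intro a ha b hb heq
    have haA : a ∉ A := (Finset.mem_sdiff.mp ha).2
    have hbA : b ∉ A := (Finset.mem_sdiff.mp hb).2
    exact (orbit_inj hinj (K a) (K b) a b (hnr a haA) (hnr b hbA) (T a) (hT2 a ha)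
      (heq ▸ hT2 b hb)).2
  have h1 : (A' \ A).card + (A' ∩ A).card = A'.card := Finset.card_sdiff_add_card_inter A' A
  have h2 : (A \ A').card + (A ∩ A').card = A.card := Finset.card_sdiff_add_card_inter A A'
  have h3 : (A' ∩ A).card = (A ∩ A').card := by rw [Finset.inter_comm]
  omega

end BergeAux

/-- Berge's lemma for bipartite worker–job matchings: a matching `M` in the
bipartite graph with edge set `E` has maximum cardinality if and only if there is no
`M`-augmenting path. -/
theorem stmt13 {W J : Type} (E M : Finset (W × J)) (hM : IsMatchingIn E M) :
    (∀ M' : Finset (W × J), IsMatchingIn E M' → M'.card ≤ M.card) ↔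
      IsEmpty (AugPath E M) := by
  constructor
  · intro hmax
    refine ⟨fun P => ?_⟩
    obtain ⟨M', hM'm, hc⟩ := BergeAux.aug_bigger E M hM P
    have := hmax M' hM'm
    omega
  · intro hempty M' hM'
    by_contra h
    push_neg at h
    exact hempty.false (BergeAux.exists_aug E M M' hM hM' h).some
end

section
/- In the two-tube procedure on a regionally-sufficient market, if the produced matching leaves some worker in W_1 unmatched and all jobs in J_{−1} are matched to workers of W_1, then any alternating path (with respect to the produced matching) starting from an unmatched worker in W_1 visits only vertices in W_1 ∪ J_{−1}; in particular no augmenting path connects an unmatched worker in W_1 to an unmatched job in J_1, so by Berge's lemma the matching has maximum cardinality. -/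
/-- Bipartite structure of the two-tube procedure: workers `W₁ ∪ W₋₁`, jobs
`J₁ ∪ J₋₁`; every `W₁` worker is adjacent to every `J₋₁` job and to no `J₁` job, and every
`W₋₁` worker is adjacent to every `J₁` job. If in a matching `M` every `J₋₁` job is matched
to a `W₁` worker, every `W₋₁` worker is matched, and some `W₁` worker and some `J₁` job are
unmatched, then there is no `M`-augmenting path (any alternating path from an unmatched `W₁`
worker stays inside `W₁ ∪ J₋₁`), and hence by Berge's lemma `M` has maximum cardinality. -/
theorem stmt14 {W J : Type} [DecidableEq W] [DecidableEq J]
    (W1 Wm1 : Finset W) (J1 Jm1 : Finset J) (E M : Finset (W × J))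
    (hWd : Disjoint W1 Wm1) (hJd : Disjoint J1 Jm1)
    (hE : ∀ p ∈ E, p.1 ∈ W1 ∪ Wm1 ∧ p.2 ∈ J1 ∪ Jm1)
    (hadj1 : ∀ w ∈ W1, ∀ j ∈ Jm1, (w, j) ∈ E)
    (hadj2 : ∀ w ∈ W1, ∀ j ∈ J1, (w, j) ∉ E)
    (hadj3 : ∀ w ∈ Wm1, ∀ j ∈ J1, (w, j) ∈ E)
    (hM : IsMatchingIn E M)
    (hJm1 : ∀ j ∈ Jm1, ∃ w ∈ W1, (w, j) ∈ M)
    (hWm1 : ∀ w ∈ Wm1, ∃ j, (w, j) ∈ M)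
    (hw : ∃ w ∈ W1, ∀ j, (w, j) ∉ M)
    (hj : ∃ j ∈ J1, ∀ w, (w, j) ∉ M) :
    IsEmpty (AugPath E M) ∧
      ∀ M' : Finset (W × J), IsMatchingIn E M' → M'.card ≤ M.card := by
  obtain ⟨hME, hWinj, hJinj⟩ := hM
  constructor
  · constructor
    intro P
    have hw1 : ∀ i : Fin (P.m + 1), P.ws i ∈ W1 := by
      intro i
      induction i using Fin.induction with
      | zero =>
        have he := (P.edge 0).1
        rcases Finset.mem_union.mp (hE _ he).1 with h | h
        · exact h
        · obtain ⟨j, hj'⟩ := hWm1 _ h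
          exact absurd hj' (P.start_unmatched j)
      | succ i ih =>
        have hm := P.medge i
        have hjE := (P.edge i.castSucc).1
        have hjm1 : P.js i.castSucc ∈ Jm1 := by
          rcases Finset.mem_union.mp (hE _ hjE).2 with h | h
          · exact absurd hjE (hadj2 _ ih _ h)
          · exact h
        obtain ⟨w', hw', hw'M⟩ := hJm1 _ hjm1
        have heq := hJinj _ hm _ hw'M rfl
        have : P.ws i.succ = w' := congrArg Prod.fst heq
        rw [this]; exact hw'
    have hlast : P.js (Fin.last P.m) ∈ Jm1 := by
      have he := (P.edge (Fin.last P.m)).1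
      rcases Finset.mem_union.mp (hE _ he).2 with h | h
      · exact absurd he (hadj2 _ (hw1 _) _ h)
      · exact h
    obtain ⟨w', _, hw'M⟩ := hJm1 _ hlast
    exact P.end_unmatched w' hw'M
  · -- cardinality bound : for any matching N, split by job side
    have split : ∀ N : Finset (W × J), N ⊆ E →
        N.card = (N.filter (fun p => p.2 ∈ Jm1)).card
          + (N.filter (fun p => p.2 ∈ J1)).card := by
      intro N hNE
      have h1 : N.filter (fun p => ¬ p.2 ∈ Jm1) = N.filter (fun p => p.2 ∈ J1) := by
        apply Finset.filter_congr
        intro p hp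
        rcases Finset.mem_union.mp (hE _ (hNE hp)).2 with h | h
        · simp [h, Finset.disjoint_left.mp hJd h]
        · simp [h, Finset.disjoint_right.mp hJd h]
      rw [← h1, Finset.card_filter_add_card_filter_not]
    -- matched job of a Wm1 worker is in J1
    have hWm1J1 : ∀ w ∈ Wm1, ∃ j ∈ J1, (w, j) ∈ M := by
      intro w hwW
      obtain ⟨j, hjM⟩ := hWm1 w hwW
      refine ⟨j, ?_, hjM⟩
      rcases Finset.mem_union.mp (hE _ (hME hjM)).2 with h | h
      · exact h
      · obtain ⟨w', hw'W, hw'M⟩ := hJm1 _ h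
        have heq := hJinj _ hjM _ hw'M rfl
        have : w = w' := congrArg Prod.fst heq
        exact absurd (this ▸ hw'W) (Finset.disjoint_right.mp hWd hwW)
    -- lower bound for M
    have hMlow : Jm1.card + Wm1.card ≤ M.card := by
      rw [split M hME]
      have h1 : Jm1.card ≤ (M.filter (fun p => p.2 ∈ Jm1)).card := by
        apply Finset.card_le_card_of_injOn
          (fun j => ((if h : j ∈ Jm1 then (hJm1 j h).choose else hw.choose), j))
        · intro j hj'
          simp only [dif_pos (show j ∈ Jm1 from hj')]
          exact Finset.mem_filter.mpr ⟨(hJm1 j hj').choose_spec.2, hj'⟩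
        · intro a _ b _ hab
          exact congrArg Prod.snd hab
      have h2 : Wm1.card ≤ (M.filter (fun p => p.2 ∈ J1)).card := by
        apply Finset.card_le_card_of_injOn
          (fun w => (w, if h : w ∈ Wm1 then (hWm1J1 w h).choose else hj.choose))
        · intro w hw'
          simp only [dif_pos (show w ∈ Wm1 from hw')]
          obtain ⟨hj1, hjM⟩ := (hWm1J1 w hw').choose_spec
          exact Finset.mem_filter.mpr ⟨hjM, hj1⟩
        · intro a _ b _ hab
          exact congrArg Prod.fst hab
      omega
    -- upper bound for any matching
    intro M' hM'
    obtain ⟨hM'E, hW'inj, hJ'inj⟩ := hM'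
    have hup : M'.card ≤ Jm1.card + Wm1.card := by
      rw [split M' hM'E]
      have h1 : (M'.filter (fun p => p.2 ∈ Jm1)).card ≤ Jm1.card := by
        apply Finset.card_le_card_of_injOn (fun p => p.2)
        · intro p hp; exact (Finset.mem_filter.mp hp).2
        · intro a ha b hb hab
          exact hJ'inj _ (Finset.mem_filter.mp ha).1 _ (Finset.mem_filter.mp hb).1 hab
      have h2 : (M'.filter (fun p => p.2 ∈ J1)).card ≤ Wm1.card := by
        apply Finset.card_le_card_of_injOn (fun p => p.1)
        · intro p hp
          obtain ⟨hpM, hpJ1⟩ := Finset.mem_filter.mp hp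
          rcases Finset.mem_union.mp (hE _ (hM'E hpM)).1 with h | h
          · exact absurd (hM'E hpM) (hadj2 p.1 h p.2 hpJ1)
          · exact h
        · intro a ha b hb hab
          exact hW'inj _ (Finset.mem_filter.mp ha).1 _ (Finset.mem_filter.mp hb).1 hab
      omega
    omega
end

section
/- For every n ≥ 1 there exists a market and assignment plan on which a procedure that does NOT partition jobs by eligibility (e.g., worker choice or single-tube random draw, processing all Y-region W^A workers first with J^{AB}_X jobs ranked above J^A_Z jobs) matches all 2n workers, while the eligibility-partitioned procedures (pairing W^A_Y exclusively with J^A_Z and W^A_X exclusively with J^{AB}_X) leave n workers and n jobs unmatched: the market has n W^A workers from region X, n W^A workers from region Y, n J^{AB} jobs from region X, and n J^A jobs from region Z, with compatibility requiring both eligibility and region(w) ≠ region(j). -/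
section Aux

variable {W J : Type} [DecidableEq W] [DecidableEq J]

lemma greedy_none_aux (C : W → J → Bool) (pref : W → List J) :
    ∀ (order : List W) (M : List (W × J)) (T : Finset J),
    (∀ w ∈ order, (pref w).find? (fun j => C w j && decide (j ∈ T)) = none) →
    order.foldl (greedyStep C pref) (M, T) = (M, T) := by
  intro order
  induction order with
  | nil => intro M T _; rfl
  | cons w ws ih =>
    intro M T h
    have h1 := h w (by simp)
    have hstep : greedyStep C pref (M, T) w = (M, T) := by
      simp [greedyStep, h1]
    rw [List.foldl_cons, hstep]
    exact ih M T (fun w' hw' => h w' (by simp [hw']))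

lemma greedy_inv_aux (C : W → J → Bool) (pref : W → List J)
    (P : List W → Finset J → Prop) :
    ∀ (order : List W) (M : List (W × J)) (T : Finset J),
    P order T →
    (∀ w ws T', (w :: ws) <:+ order → P (w :: ws) T' →
      ∃ j, (pref w).find? (fun j => C w j && decide (j ∈ T')) = some j ∧
        P ws (T'.erase j)) →
    (order.foldl (greedyStep C pref) (M, T)).1.length = M.length + order.length ∧
    P [] (order.foldl (greedyStep C pref) (M, T)).2 := by
  intro order
  induction order with
  | nil => intro M T hP _; exact ⟨by simp, hP⟩
  | cons w ws ih =>
    intro M T hP hstep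
    obtain ⟨j, hfind, hP'⟩ := hstep w ws T (List.suffix_refl _) hP
    have h1 : greedyStep C pref (M, T) w = (M ++ [(w, j)], T.erase j) := by
      simp [greedyStep, hfind]
    rw [List.foldl_cons, h1]
    have := ih (M ++ [(w, j)]) (T.erase j) hP'
      (fun w' ws' T' hsuf hPT => hstep w' ws' T'
        (hsuf.trans (List.suffix_cons w ws)) hPT)
    refine ⟨?_, this.2⟩
    rw [this.1]; simp; omega

end Aux

/-- For every `n ≥ 1` there is a market (regions `0 = X`, `1 = Y`, `2 = Z`) with
`n` A-category workers from X, `n` A-category workers from Y, `n` AB-jobs from X and `n`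
A-jobs from Z, all workers eligible for all jobs, compatibility additionally requiring
differing regions. The unpartitioned greedy procedure (Y-workers first, `J^{AB}_X` jobs
ranked above `J^A_Z` jobs) matches all `2n` workers, while the eligibility-partitioned
procedure (tube `W^A_Y` with `J^A_Z`, tube `W^A_X` with `J^{AB}_X`) matches only the `n`
workers of the first tube, leaving `n` workers and `n` jobs unmatched. -/
theorem stmt15 (n : ℕ) (hn : 1 ≤ n) :
    ∃ (WAX WAY JABX JAZ : Finset ℕ) (rw rj : ℕ → Fin 3) (C : ℕ → ℕ → Bool)
      (oY oX : List ℕ) (pref : ℕ → List ℕ),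
      WAX.card = n ∧ WAY.card = n ∧ JABX.card = n ∧ JAZ.card = n ∧
      Disjoint WAX WAY ∧ Disjoint JABX JAZ ∧
      (∀ w ∈ WAX, rw w = 0) ∧ (∀ w ∈ WAY, rw w = 1) ∧
      (∀ j ∈ JABX, rj j = 0) ∧ (∀ j ∈ JAZ, rj j = 2) ∧
      (∀ w j, C w j = true ↔ (w ∈ WAX ∪ WAY ∧ j ∈ JABX ∪ JAZ ∧ rw w ≠ rj j)) ∧
      Enum oY WAY ∧ Enum oX WAX ∧
      (∀ w ∈ WAX ∪ WAY, ∃ l1 l2, pref w = l1 ++ l2 ∧ Enum l1 JABX ∧ Enum l2 JAZ) ∧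
      (greedy C (oY ++ oX) pref (JABX ∪ JAZ)).length = 2 * n ∧
      (greedy C oY pref JAZ).length = n ∧
      (greedy C oX pref JABX).length = 0 := by
  classical
  set WAX : Finset ℕ := Finset.Ico 0 n with hWAX
  set WAY : Finset ℕ := Finset.Ico n (2 * n) with hWAY
  set JABX : Finset ℕ := Finset.Ico (2 * n) (3 * n) with hJABX
  set JAZ : Finset ℕ := Finset.Ico (3 * n) (4 * n) with hJAZ
  set rw : ℕ → Fin 3 := fun w => if w < n then 0 else 1 with hrw
  set rj : ℕ → Fin 3 := fun j => if j < 3 * n then 0 else 2 with hrj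
  set C : ℕ → ℕ → Bool :=
    fun w j => decide (w ∈ WAX ∪ WAY ∧ j ∈ JABX ∪ JAZ ∧ rw w ≠ rj j) with hC
  set oX : List ℕ := List.range n with hoX
  set oY : List ℕ := oX.map (· + n) with hoY
  set l1 : List ℕ := oX.map (· + 2 * n) with hl1
  set l2 : List ℕ := oX.map (· + 3 * n) with hl2
  set pref : ℕ → List ℕ := fun _ => l1 ++ l2 with hpref
  have hoXlen : oX.length = n := by rw [hoX, List.length_range]
  have hoYlen : oY.length = n := by rw [hoY, List.length_map, hoXlen]
  have hJAZcard : JAZ.card = n := by rw [hJAZ, Nat.card_Ico]; omega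
  have hJABXcard : JABX.card = n := by rw [hJABX, Nat.card_Ico]; omega
  -- membership facts
  have memWAX : ∀ w, w ∈ WAX ↔ w < n := by intro w; simp [hWAX]
  have memWAY : ∀ w, w ∈ WAY ↔ n ≤ w ∧ w < 2 * n := by intro w; simp [hWAY]
  have memJABX : ∀ j, j ∈ JABX ↔ 2 * n ≤ j ∧ j < 3 * n := by intro j; simp [hJABX]
  have memJAZ : ∀ j, j ∈ JAZ ↔ 3 * n ≤ j ∧ j < 4 * n := by intro j; simp [hJAZ]
  have meml1 : ∀ j, j ∈ l1 ↔ 2 * n ≤ j ∧ j < 3 * n := by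
    intro j; rw [hl1, hoX]; simp only [List.mem_map, List.mem_range]
    constructor
    · rintro ⟨a, ha, rfl⟩; omega
    · intro h; exact ⟨j - 2 * n, by omega, by omega⟩
  have meml2 : ∀ j, j ∈ l2 ↔ 3 * n ≤ j ∧ j < 4 * n := by
    intro j; rw [hl2, hoX]; simp only [List.mem_map, List.mem_range]
    constructor
    · rintro ⟨a, ha, rfl⟩; omega
    · intro h; exact ⟨j - 3 * n, by omega, by omega⟩
  have memoY : ∀ w, w ∈ oY ↔ n ≤ w ∧ w < 2 * n := by
    intro w; rw [hoY, hoX]; simp only [List.mem_map, List.mem_range]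
    constructor
    · rintro ⟨a, ha, rfl⟩; omega
    · intro h; exact ⟨w - n, by omega, by omega⟩
  have memoX : ∀ w, w ∈ oX ↔ w < n := by intro w; rw [hoX]; simp
  have hCtrue : ∀ w j, C w j = true ↔
      (w ∈ WAX ∪ WAY ∧ j ∈ JABX ∪ JAZ ∧ rw w ≠ rj j) := by
    intro w j; simp [hC]
  -- C computed on relevant ranges
  have hC_Y_ABX : ∀ w j, n ≤ w → w < 2 * n → 2 * n ≤ j → j < 3 * n →
      C w j = true := by
    intro w j h1 h2 h3 h4
    rw [hCtrue]
    refine ⟨by simp [memWAX, memWAY]; omega, by simp [memJABX, memJAZ]; omega, ?_⟩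
    simp only [hrw, hrj, if_neg (by omega : ¬ w < n), if_pos (by omega : j < 3 * n)]
    decide
  have hC_any_Z : ∀ w j, w < 2 * n → 3 * n ≤ j → j < 4 * n → C w j = true := by
    intro w j h1 h2 h3
    rw [hCtrue]
    refine ⟨by simp [memWAX, memWAY]; omega, by simp [memJABX, memJAZ]; omega, ?_⟩
    simp only [hrw, hrj, if_neg (by omega : ¬ j < 3 * n)]
    split <;> decide
  have hC_X_ABX : ∀ w j, w < n → 2 * n ≤ j → j < 3 * n → C w j = false := by
    intro w j h1 h2 h3
    rw [Bool.eq_false_iff]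
    intro hc
    rw [hCtrue] at hc
    have := hc.2.2
    simp only [hrw, hrj, if_pos (by omega : w < n),
      if_pos (by omega : j < 3 * n)] at this
    exact this rfl
  have hinj : ∀ c : ℕ, Function.Injective (· + c) := by
    intro c; exact add_left_injective c
  have hnodupX : oX.Nodup := by rw [hoX]; exact List.nodup_range
  refine ⟨WAX, WAY, JABX, JAZ, rw, rj, C, oY, oX, pref, ?_, ?_, hJABXcard,
    hJAZcard, ?_, ?_, ?_, ?_, ?_, ?_, hCtrue, ?_, ?_, ?_, ?_, ?_, ?_⟩
  · rw [hWAX, Nat.card_Ico]; omega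
  · rw [hWAY, Nat.card_Ico]; omega
  · rw [Finset.disjoint_left]; intro a ha hb
    rw [memWAX] at ha; rw [memWAY] at hb; omega
  · rw [Finset.disjoint_left]; intro a ha hb
    rw [memJABX] at ha; rw [memJAZ] at hb; omega
  · intro w hw; rw [memWAX] at hw; simp [hrw, hw]
  · intro w hw; rw [memWAY] at hw; simp [hrw]; omega
  · intro j hj; rw [memJABX] at hj; simp [hrj]; omega
  · intro j hj; rw [memJAZ] at hj; simp [hrj]; omega
  · -- Enum oY WAY
    refine ⟨by rw [hoY]; exact hnodupX.map (hinj n), ?_⟩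
    ext w; rw [List.mem_toFinset, memoY, memWAY]
  · -- Enum oX WAX
    refine ⟨hnodupX, ?_⟩
    ext w; rw [List.mem_toFinset, memoX, memWAX]
  · -- pref structure
    intro w _
    refine ⟨l1, l2, rfl,
      ⟨by rw [hl1]; exact hnodupX.map (hinj (2 * n)), ?_⟩,
      ⟨by rw [hl2]; exact hnodupX.map (hinj (3 * n)), ?_⟩⟩
    · ext j; rw [List.mem_toFinset, meml1, memJABX]
    · ext j; rw [List.mem_toFinset, meml2, memJAZ]
  · -- combined greedy matches everyone
    rw [greedy, List.foldl_append]
    -- Phase 1: Y workers take JABX jobs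
    have hstep1 : ∀ w ws (T' : Finset ℕ), (w :: ws) <:+ oY →
        (JAZ ⊆ T' ∧ T' ⊆ JABX ∪ JAZ ∧ T'.card = n + (w :: ws).length) →
        ∃ j, (pref w).find? (fun j => C w j && decide (j ∈ T')) = some j ∧
          (JAZ ⊆ T'.erase j ∧ T'.erase j ⊆ JABX ∪ JAZ ∧
            (T'.erase j).card = n + ws.length) := by
      intro w ws T' hsuf ⟨hsub, hsub2, hcard⟩
      have hw : w ∈ oY := hsuf.mem (by simp)
      rw [memoY] at hw
      have hne : (T' \ JAZ).Nonempty := by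
        rw [← Finset.card_pos, Finset.card_sdiff_of_subset hsub, hJAZcard]
        simp only [List.length_cons] at hcard
        omega
      obtain ⟨j0, hj0⟩ := hne
      rw [Finset.mem_sdiff] at hj0
      have hj0ABX : j0 ∈ JABX := by
        have := hsub2 hj0.1
        rw [Finset.mem_union] at this
        tauto
      rw [memJABX] at hj0ABX
      have hj0l1 : j0 ∈ l1 := by rw [meml1]; exact hj0ABX
      have hpred : (C w j0 && decide (j0 ∈ T')) = true := by
        rw [hC_Y_ABX w j0 hw.1 hw.2 hj0ABX.1 hj0ABX.2]
        simp [hj0.1]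
      have hsome : ((l1.find? (fun j => C w j && decide (j ∈ T')))).isSome := by
        rw [List.find?_isSome]; exact ⟨j0, hj0l1, hpred⟩
      obtain ⟨j, hj⟩ := Option.isSome_iff_exists.mp hsome
      have hjl1 : j ∈ l1 := List.mem_of_find?_eq_some hj
      have hjpred := List.find?_some hj
      simp only [Bool.and_eq_true, decide_eq_true_eq] at hjpred
      have hjT : j ∈ T' := hjpred.2
      have hjABX : j ∈ JABX := by rw [memJABX]; rw [meml1] at hjl1; exact hjl1
      have hjnZ : j ∉ JAZ := by
        rw [memJABX] at hjABX; rw [memJAZ]; omega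
      refine ⟨j, ?_, ?_, ?_, ?_⟩
      · show (l1 ++ l2).find? _ = some j
        rw [List.find?_append, hj]; rfl
      · rw [Finset.subset_erase]; exact ⟨hsub, hjnZ⟩
      · exact (Finset.erase_subset _ _).trans hsub2
      · rw [Finset.card_erase_of_mem hjT, hcard]; simp
    have hP1 : JAZ ⊆ JABX ∪ JAZ ∧ (JABX ∪ JAZ : Finset ℕ) ⊆ JABX ∪ JAZ ∧
        (JABX ∪ JAZ).card = n + oY.length := by
      refine ⟨Finset.subset_union_right, subset_rfl, ?_⟩
      rw [Finset.card_union_of_disjoint, hJABXcard, hJAZcard, hoYlen]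
      rw [Finset.disjoint_left]; intro a ha hb
      rw [memJABX] at ha; rw [memJAZ] at hb; omega
    have phase1 := greedy_inv_aux C pref
      (fun ws T => JAZ ⊆ T ∧ T ⊆ JABX ∪ JAZ ∧ T.card = n + ws.length)
      oY [] (JABX ∪ JAZ) hP1 hstep1
    set st1 := oY.foldl (greedyStep C pref) ([], JABX ∪ JAZ) with hst1
    have hlen1 : st1.1.length = n := by
      have := phase1.1
      rw [hoYlen] at this
      simpa using this
    have hT1 : st1.2 = JAZ := by
      obtain ⟨hs, _, hc⟩ := phase1.2
      refine (Finset.eq_of_subset_of_card_le hs ?_).symm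
      simp only [List.length_nil, Nat.add_zero] at hc
      rw [hc, hJAZcard]
    -- Phase 2: X workers take JAZ jobs
    have hstep2 : ∀ w ws (T' : Finset ℕ), (w :: ws) <:+ oX →
        (T' ⊆ JAZ ∧ T'.card = (w :: ws).length) →
        ∃ j, (pref w).find? (fun j => C w j && decide (j ∈ T')) = some j ∧
          (T'.erase j ⊆ JAZ ∧ (T'.erase j).card = ws.length) := by
      intro w ws T' hsuf ⟨hsub, hcard⟩
      have hw : w ∈ oX := hsuf.mem (by simp)
      rw [memoX] at hw
      have hne : T'.Nonempty := by
        rw [← Finset.card_pos, hcard]; simp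
      obtain ⟨j0, hj0⟩ := hne
      have hj0Z : j0 ∈ JAZ := hsub hj0
      rw [memJAZ] at hj0Z
      have hfind1 : l1.find? (fun j => C w j && decide (j ∈ T')) = none := by
        rw [List.find?_eq_none]
        intro x hx
        rw [meml1] at hx
        have : x ∉ T' := by
          intro hxT
          have := hsub hxT
          rw [memJAZ] at this; omega
        simp [this]
      have hpred : (C w j0 && decide (j0 ∈ T')) = true := by
        rw [hC_any_Z w j0 (by omega) hj0Z.1 hj0Z.2]
        simp [hj0]
      have hsome : ((l2.find? (fun j => C w j && decide (j ∈ T')))).isSome := by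
        rw [List.find?_isSome]
        exact ⟨j0, by rw [meml2]; exact hj0Z, hpred⟩
      obtain ⟨j, hj⟩ := Option.isSome_iff_exists.mp hsome
      have hjpred := List.find?_some hj
      simp only [Bool.and_eq_true, decide_eq_true_eq] at hjpred
      refine ⟨j, ?_, (Finset.erase_subset _ _).trans hsub, ?_⟩
      · show (l1 ++ l2).find? _ = some j
        rw [List.find?_append, hfind1, hj]; rfl
      · rw [Finset.card_erase_of_mem hjpred.2, hcard]; simp
    have hP2 : st1.2 ⊆ JAZ ∧ st1.2.card = oX.length := by
      rw [hT1, hJAZcard, hoXlen]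
      exact ⟨subset_rfl, rfl⟩
    have phase2 := greedy_inv_aux C pref
      (fun ws T => T ⊆ JAZ ∧ T.card = ws.length)
      oX st1.1 st1.2 hP2 hstep2
    have hfin : (oX.foldl (greedyStep C pref) st1).1.length =
        st1.1.length + oX.length := by
      have := phase2.1
      rw [show (st1.1, st1.2) = st1 from rfl] at this
      exact this
    rw [hfin, hlen1, hoXlen]; omega
  · -- tube W^A_Y with JAZ: all matched
    rw [greedy]
    have hstepY : ∀ w ws (T' : Finset ℕ), (w :: ws) <:+ oY →
        (T' ⊆ JAZ ∧ T'.card = (w :: ws).length) →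
        ∃ j, (pref w).find? (fun j => C w j && decide (j ∈ T')) = some j ∧
          (T'.erase j ⊆ JAZ ∧ (T'.erase j).card = ws.length) := by
      intro w ws T' hsuf ⟨hsub, hcard⟩
      have hw : w ∈ oY := hsuf.mem (by simp)
      rw [memoY] at hw
      have hne : T'.Nonempty := by
        rw [← Finset.card_pos, hcard]; simp
      obtain ⟨j0, hj0⟩ := hne
      have hj0Z : j0 ∈ JAZ := hsub hj0
      rw [memJAZ] at hj0Z
      have hfind1 : l1.find? (fun j => C w j && decide (j ∈ T')) = none := by
        rw [List.find?_eq_none]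
        intro x hx
        rw [meml1] at hx
        have : x ∉ T' := by
          intro hxT
          have := hsub hxT
          rw [memJAZ] at this; omega
        simp [this]
      have hpred : (C w j0 && decide (j0 ∈ T')) = true := by
        rw [hC_any_Z w j0 hw.2 hj0Z.1 hj0Z.2]
        simp [hj0]
      have hsome : ((l2.find? (fun j => C w j && decide (j ∈ T')))).isSome := by
        rw [List.find?_isSome]
        exact ⟨j0, by rw [meml2]; exact hj0Z, hpred⟩
      obtain ⟨j, hj⟩ := Option.isSome_iff_exists.mp hsome
      have hjpred := List.find?_some hj
      simp only [Bool.and_eq_true, decide_eq_true_eq] at hjpred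
      refine ⟨j, ?_, (Finset.erase_subset _ _).trans hsub, ?_⟩
      · show (l1 ++ l2).find? _ = some j
        rw [List.find?_append, hfind1, hj]; rfl
      · rw [Finset.card_erase_of_mem hjpred.2, hcard]; simp
    have hPY : JAZ ⊆ JAZ ∧ JAZ.card = oY.length := by
      rw [hJAZcard, hoYlen]; exact ⟨subset_rfl, rfl⟩
    have := (greedy_inv_aux C pref (fun ws T => T ⊆ JAZ ∧ T.card = ws.length)
      oY [] JAZ hPY hstepY).1
    rw [this, hoYlen]
    simp
  · -- tube W^A_X with JABX: nobody matched
    rw [greedy]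
    have hnone : ∀ w ∈ oX,
        (pref w).find? (fun j => C w j && decide (j ∈ JABX)) = none := by
      intro w hw
      rw [memoX] at hw
      rw [List.find?_eq_none]
      intro x hx
      show ¬ (C w x && decide (x ∈ JABX)) = true
      rw [List.mem_append] at hx
      rcases hx with hx | hx
      · rw [meml1] at hx
        rw [hC_X_ABX w x hw hx.1 hx.2]
        simp
      · rw [meml2] at hx
        have : x ∉ JABX := by rw [memJABX]; omega
        simp [this]
    rw [greedy_none_aux C pref oX [] JABX hnone]
    rfl
end

section
/- In a market with only eligibility constraints where each Qing sequence of tubes pairs a worker set with an equally-sized set of jobs all mutually compatible with those workers (|W^A_1| = |J^A|, |W^B_1| = |J^B|, |W^A_2 ∪ W^B_2| = |J^{AB}|), the greedy procedure run on each tube matches every worker to a job, and the resulting overall matching both minimizes unfilled jobs and prioritizes high-levels. -/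
set_option linter.unusedSectionVars false in
theorem greedy_aux {W J : Type} [DecidableEq W] [DecidableEq J]
    (C : W → J → Bool) (pref : W → List J) :
    ∀ (order : List W) (avail : Finset J) (acc : List (W × J)),
    (∀ w ∈ order, ∀ j ∈ avail, C w j = true) →
    (∀ w ∈ order, avail ⊆ (pref w).toFinset) →
    order.length ≤ avail.card →
    ∃ ps : List (W × J),
      (order.foldl (greedyStep C pref) (acc, avail)).1 = acc ++ ps ∧
      ps.map Prod.fst = order ∧
      (ps.map Prod.snd).Nodup ∧
      (∀ p ∈ ps, p.2 ∈ avail) := by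
  intro order
  induction order with
  | nil => intro avail acc _ _ _; exact ⟨[], by simp, rfl, by simp, by simp⟩
  | cons w rest ih =>
    intro avail acc hcomp hpref hlen
    have hpos : 0 < avail.card := lt_of_lt_of_le (Nat.succ_pos _) hlen
    obtain ⟨j0, hj0⟩ := Finset.card_pos.mp hpos
    have hj0p : j0 ∈ pref w := by
      have := hpref w (by simp) hj0
      simpa using this
    have hfind : ((pref w).find? (fun j => C w j && decide (j ∈ avail))).isSome := by
      rw [List.find?_isSome]
      exact ⟨j0, hj0p, by simp [hj0, hcomp w (by simp) j0 hj0]⟩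
    obtain ⟨j, hjeq⟩ := Option.isSome_iff_exists.mp hfind
    have hjprop : (fun j => C w j && decide (j ∈ avail)) j = true :=
      List.find?_some (p := fun j => C w j && decide (j ∈ avail)) hjeq
    simp only [Bool.and_eq_true, decide_eq_true_eq] at hjprop
    obtain ⟨hjC, hjav⟩ := hjprop
    have hstep : greedyStep C pref (acc, avail) w = (acc ++ [(w, j)], avail.erase j) := by
      simp only [greedyStep, hjeq]
    have hcard : (avail.erase j).card = avail.card - 1 := Finset.card_erase_of_mem hjav
    obtain ⟨ps, h1, h2, h3, h4⟩ := ih (avail.erase j) (acc ++ [(w, j)])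
      (fun w' hw' j' hj' => hcomp w' (List.mem_cons_of_mem _ hw') j' (Finset.mem_of_mem_erase hj'))
      (fun w' hw' => (Finset.erase_subset _ _).trans (hpref w' (List.mem_cons_of_mem _ hw')))
      (by rw [hcard]; simp only [List.length_cons] at hlen; omega)
    refine ⟨(w, j) :: ps, ?_, ?_, ?_, ?_⟩
    · rw [List.foldl_cons, hstep, h1]; simp
    · simp [h2]
    · simp only [List.map_cons, List.nodup_cons, h3, and_true]
      intro hmem
      obtain ⟨p, hp, hpj⟩ := List.mem_map.mp hmem
      exact (Finset.notMem_erase j avail) (hpj ▸ (h4 p hp))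
    · intro p hp
      rcases List.mem_cons.mp hp with rfl | hp
      · exact hjav
      · exact Finset.mem_of_mem_erase (h4 p hp)

theorem greedy_spec {W J : Type} [DecidableEq W] [DecidableEq J]
    (C : W → J → Bool) (pref : W → List J) (order : List W) (S : Finset W) (T : Finset J)
    (hE : Enum order S) (hT : ∀ w ∈ S, Enum (pref w) T)
    (hcomp : ∀ w ∈ S, ∀ j ∈ T, C w j = true) (hcard : S.card = T.card) :
    ∃ ps : List (W × J), greedy C order pref T = ps ∧
      ps.map Prod.fst = order ∧ (ps.map Prod.snd).Nodup ∧
      (ps.map Prod.snd).toFinset = T ∧ ps.length = T.card := by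
  have hmem : ∀ w ∈ order, w ∈ S := fun w hw => hE.2 ▸ List.mem_toFinset.mpr hw
  have hlen : order.length = S.card := by
    rw [← hE.2, List.toFinset_card_of_nodup hE.1]
  obtain ⟨ps, h1, h2, h3, h4⟩ := greedy_aux C pref order T []
    (fun w hw j hj => hcomp w (hmem w hw) j hj)
    (fun w hw => by rw [(hT w (hmem w hw)).2])
    (by rw [hlen, hcard])
  have hlps : ps.length = T.card := by
    have := congrArg List.length h2
    simp only [List.length_map] at this
    rw [this, hlen, hcard]
  refine ⟨ps, by rw [greedy, h1]; simp, h2, h3, ?_, hlps⟩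
  apply Finset.eq_of_subset_of_card_le
  · intro j hj
    obtain ⟨p, hp, rfl⟩ := List.mem_map.mp (List.mem_toFinset.mp hj)
    exact h4 p hp
  · rw [List.toFinset_card_of_nodup h3, List.length_map, hlps]

theorem card_filter_le_aux {α β γ : Type} [DecidableEq γ] (M : Finset (α × β))
    (f : α × β → γ) (S : Finset γ) [DecidablePred fun p => f p ∈ S]
    (hinj : ∀ p ∈ M, ∀ q ∈ M, f p = f q → p = q) :
    (M.filter (fun p => f p ∈ S)).card ≤ S.card := by
  classical
  have h1 : (M.filter (fun p => f p ∈ S)).image f ⊆ S := by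
    intro x hx
    obtain ⟨p, hp, rfl⟩ := Finset.mem_image.mp hx
    exact (Finset.mem_filter.mp hp).2
  calc (M.filter (fun p => f p ∈ S)).card
      = ((M.filter (fun p => f p ∈ S)).image f).card :=
        (Finset.card_image_of_injOn (fun p hp q hq =>
          hinj p (Finset.mem_filter.mp hp).1 q (Finset.mem_filter.mp hq).1)).symm
    _ ≤ S.card := Finset.card_le_card h1

/-- Eligibility-only market where each Qing sequence of tubes pairs a worker
set with an equally-sized, fully compatible job set (`|W^A_1| = |J^A|`, `|W^B_1| = |J^B|`,
`|W^A_2 ∪ W^B_2| = |J^{AB}|`). The greedy procedure run on each tube matches every worker,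
and the resulting overall matching minimizes unfilled jobs and prioritizes high-levels. -/
theorem stmt16
    (WA1 WA2 WB1 WB2 JA JAB JB : Finset ℕ)
    (hW12 : Disjoint WA1 WA2) (hW13 : Disjoint WA1 WB1) (hW14 : Disjoint WA1 WB2)
    (hW23 : Disjoint WA2 WB1) (hW24 : Disjoint WA2 WB2) (hW34 : Disjoint WB1 WB2)
    (hJ1 : Disjoint JA JAB) (hJ2 : Disjoint JA JB) (hJ3 : Disjoint JAB JB)
    (hc1 : WA1.card = JA.card) (hc2 : WB1.card = JB.card)
    (hc3 : (WA2 ∪ WB2).card = JAB.card)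
    (C : ℕ → ℕ → Bool)
    (hC : ∀ w j, C w j = true ↔
      ((w ∈ WA1 ∪ WA2 ∧ (j ∈ JA ∨ j ∈ JAB)) ∨ (w ∈ WB1 ∪ WB2 ∧ (j ∈ JAB ∨ j ∈ JB))))
    (o1 o2 o3 : List ℕ)
    (ho1 : Enum o1 WA1) (ho2 : Enum o2 (WA2 ∪ WB2)) (ho3 : Enum o3 WB1)
    (pref : ℕ → List ℕ)
    (hp1 : ∀ w ∈ WA1, Enum (pref w) JA)
    (hp2 : ∀ w ∈ WA2 ∪ WB2, Enum (pref w) JAB)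
    (hp3 : ∀ w ∈ WB1, Enum (pref w) JB) :
    let μ := (greedy C o1 pref JA ++ greedy C o2 pref JAB ++ greedy C o3 pref JB).toFinset
    (∀ w ∈ WA1 ∪ WA2 ∪ WB1 ∪ WB2, ∃ j, (w, j) ∈ μ) ∧
    (∀ M : Finset (ℕ × ℕ), IsMatching C M → M.card ≤ μ.card) ∧
    ¬ ∃ M : Finset (ℕ × ℕ), IsMatching C M ∧
      μ.card ≤ M.card ∧
      matchedWorkers (WA1 ∪ WA2) μ ≤ matchedWorkers (WA1 ∪ WA2) M ∧
      matchedJobs JA μ ≤ matchedJobs JA M ∧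
      matchedJobs JAB μ ≤ matchedJobs JAB M ∧
      (μ.card < M.card ∨ matchedWorkers (WA1 ∪ WA2) μ < matchedWorkers (WA1 ∪ WA2) M ∨
       matchedJobs JA μ < matchedJobs JA M ∨ matchedJobs JAB μ < matchedJobs JAB M) := by
  intro μ
  -- compatibility on each tube
  have comp1 : ∀ w ∈ WA1, ∀ j ∈ JA, C w j = true := fun w hw j hj =>
    (hC w j).mpr (Or.inl ⟨Finset.mem_union_left _ hw, Or.inl hj⟩)
  have comp2 : ∀ w ∈ WA2 ∪ WB2, ∀ j ∈ JAB, C w j = true := by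
    intro w hw j hj
    rcases Finset.mem_union.mp hw with hw | hw
    · exact (hC w j).mpr (Or.inl ⟨Finset.mem_union_right _ hw, Or.inr hj⟩)
    · exact (hC w j).mpr (Or.inr ⟨Finset.mem_union_right _ hw, Or.inl hj⟩)
  have comp3 : ∀ w ∈ WB1, ∀ j ∈ JB, C w j = true := fun w hw j hj =>
    (hC w j).mpr (Or.inr ⟨Finset.mem_union_left _ hw, Or.inr hj⟩)
  obtain ⟨ps1, hg1, hf1, hs1, hsT1, hl1⟩ := greedy_spec C pref o1 WA1 JA ho1 hp1 comp1 hc1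
  obtain ⟨ps2, hg2, hf2, hs2, hsT2, hl2⟩ :=
    greedy_spec C pref o2 (WA2 ∪ WB2) JAB ho2 hp2 comp2 hc3
  obtain ⟨ps3, hg3, hf3, hs3, hsT3, hl3⟩ := greedy_spec C pref o3 WB1 JB ho3 hp3 comp3 hc2
  have hμ : μ = (ps1 ++ ps2 ++ ps3).toFinset := by
    show (greedy C o1 pref JA ++ greedy C o2 pref JAB ++ greedy C o3 pref JB).toFinset = _
    rw [hg1, hg2, hg3]
  -- membership facts
  have m1f : ∀ p ∈ ps1, p.1 ∈ WA1 := by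
    intro p hp
    rw [← ho1.2]
    exact List.mem_toFinset.mpr (hf1 ▸ List.mem_map_of_mem (f := Prod.fst) hp)
  have m2f : ∀ p ∈ ps2, p.1 ∈ WA2 ∪ WB2 := by
    intro p hp
    rw [← ho2.2]
    exact List.mem_toFinset.mpr (hf2 ▸ List.mem_map_of_mem (f := Prod.fst) hp)
  have m3f : ∀ p ∈ ps3, p.1 ∈ WB1 := by
    intro p hp
    rw [← ho3.2]
    exact List.mem_toFinset.mpr (hf3 ▸ List.mem_map_of_mem (f := Prod.fst) hp)
  have m1s : ∀ p ∈ ps1, p.2 ∈ JA := fun p hp =>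
    hsT1 ▸ List.mem_toFinset.mpr (List.mem_map_of_mem (f := Prod.snd) hp)
  have m2s : ∀ p ∈ ps2, p.2 ∈ JAB := fun p hp =>
    hsT2 ▸ List.mem_toFinset.mpr (List.mem_map_of_mem (f := Prod.snd) hp)
  have m3s : ∀ p ∈ ps3, p.2 ∈ JB := fun p hp =>
    hsT3 ▸ List.mem_toFinset.mpr (List.mem_map_of_mem (f := Prod.snd) hp)
  -- nodup of concatenation
  have nd1 : ps1.Nodup := (hf1 ▸ ho1.1 : (ps1.map Prod.fst).Nodup).of_map
  have nd2 : ps2.Nodup := (hf2 ▸ ho2.1 : (ps2.map Prod.fst).Nodup).of_map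
  have nd3 : ps3.Nodup := (hf3 ▸ ho3.1 : (ps3.map Prod.fst).Nodup).of_map
  have hnodup : (ps1 ++ ps2 ++ ps3).Nodup := by
    refine ((nd1.append nd2 ?_).append nd3 ?_)
    · intro p hp1' hp2'
      exact (Finset.disjoint_left.mp hJ1) (m1s p hp1') (m2s p hp2')
    · intro p hp hp3'
      rcases List.mem_append.mp hp with hp | hp
      · exact (Finset.disjoint_left.mp hJ2) (m1s p hp) (m3s p hp3')
      · exact (Finset.disjoint_left.mp hJ3) (m2s p hp) (m3s p hp3')
  have hμcard : μ.card = JA.card + JAB.card + JB.card := by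
    rw [hμ, List.toFinset_card_of_nodup hnodup]
    simp only [List.length_append, hl1, hl2, hl3]
  have hμmem : ∀ p, p ∈ μ ↔ p ∈ ps1 ∨ p ∈ ps2 ∨ p ∈ ps3 := by
    intro p
    rw [hμ, List.mem_toFinset, List.mem_append, List.mem_append]
    tauto
  -- Part 2 as a reusable fact
  have part2 : ∀ M : Finset (ℕ × ℕ), IsMatching C M → M.card ≤ μ.card := by
    intro M hM
    obtain ⟨hMC, hMW, hMJ⟩ := hM
    have himg : M.image Prod.snd ⊆ JA ∪ JAB ∪ JB := by
      intro j hj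
      obtain ⟨p, hp, rfl⟩ := Finset.mem_image.mp hj
      rcases (hC p.1 p.2).mp (hMC p hp) with ⟨_, hj'⟩ | ⟨_, hj'⟩
      · rcases hj' with h | h
        · exact Finset.mem_union_left _ (Finset.mem_union_left _ h)
        · exact Finset.mem_union_left _ (Finset.mem_union_right _ h)
      · rcases hj' with h | h
        · exact Finset.mem_union_left _ (Finset.mem_union_right _ h)
        · exact Finset.mem_union_right _ h
    have hJcard : (JA ∪ JAB ∪ JB).card = JA.card + JAB.card + JB.card := by
      rw [Finset.card_union_of_disjoint, Finset.card_union_of_disjoint hJ1]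
      exact Finset.disjoint_union_left.mpr ⟨hJ2, hJ3⟩
    calc M.card = (M.image Prod.snd).card :=
          (Finset.card_image_of_injOn (fun p hp q hq h => hMJ p hp q hq h)).symm
      _ ≤ (JA ∪ JAB ∪ JB).card := Finset.card_le_card himg
      _ = JA.card + JAB.card + JB.card := hJcard
      _ = μ.card := hμcard.symm
  -- values attained by μ
  have vJA : matchedJobs JA μ = JA.card := by
    have e : μ.filter (fun p => p.2 ∈ JA) = ps1.toFinset := by
      ext p
      simp only [Finset.mem_filter, hμmem, List.mem_toFinset]
      constructor
      · rintro ⟨hp | hp | hp, hj⟩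
        · exact hp
        · exact absurd hj (Finset.disjoint_right.mp hJ1 (m2s p hp))
        · exact absurd hj (Finset.disjoint_right.mp hJ2 (m3s p hp))
      · intro hp
        exact ⟨Or.inl hp, m1s p hp⟩
    rw [matchedJobs, e, List.toFinset_card_of_nodup nd1, hl1]
  have vJAB : matchedJobs JAB μ = JAB.card := by
    have e : μ.filter (fun p => p.2 ∈ JAB) = ps2.toFinset := by
      ext p
      simp only [Finset.mem_filter, hμmem, List.mem_toFinset]
      constructor
      · rintro ⟨hp | hp | hp, hj⟩
        · exact absurd hj (Finset.disjoint_left.mp hJ1 (m1s p hp))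
        · exact hp
        · exact absurd hj (Finset.disjoint_right.mp hJ3 (m3s p hp))
      · intro hp
        exact ⟨Or.inr (Or.inl hp), m2s p hp⟩
    rw [matchedJobs, e, List.toFinset_card_of_nodup nd2, hl2]
  have vW : matchedWorkers (WA1 ∪ WA2) μ = WA1.card + WA2.card := by
    have e : μ.filter (fun p => p.1 ∈ WA1 ∪ WA2) =
        ps1.toFinset ∪ ps2.toFinset.filter (fun p => p.1 ∈ WA2) := by
      ext p
      simp only [Finset.mem_filter, hμmem, List.mem_toFinset, Finset.mem_union,
        Finset.mem_filter]
      constructor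
      · rintro ⟨hp | hp | hp, hw⟩
        · exact Or.inl hp
        · refine Or.inr ⟨hp, ?_⟩
          rcases hw with hw | hw
          · rcases Finset.mem_union.mp (m2f p hp) with h | h
            · exact absurd hw (Finset.disjoint_right.mp hW12 h)
            · exact absurd hw (Finset.disjoint_right.mp hW14 h)
          · exact hw
        · rcases hw with hw | hw
          · exact absurd (m3f p hp) (Finset.disjoint_left.mp hW13 hw)
          · exact absurd (m3f p hp) (Finset.disjoint_left.mp hW23 hw)
      · rintro (hp | ⟨hp, hw⟩)
        · exact ⟨Or.inl hp, Or.inl (m1f p hp)⟩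
        · exact ⟨Or.inr (Or.inl hp), Or.inr hw⟩
    have hdisj : Disjoint ps1.toFinset (ps2.toFinset.filter (fun p => p.1 ∈ WA2)) := by
      rw [Finset.disjoint_left]
      intro p hp hq
      exact (Finset.disjoint_left.mp hJ1) (m1s p (List.mem_toFinset.mp hp))
        (m2s p (List.mem_toFinset.mp (Finset.mem_filter.mp hq).1))
    have hinj2 : ∀ p ∈ ps2, ∀ q ∈ ps2, p.1 = q.1 → p = q := by
      have := hf2 ▸ ho2.1
      exact fun p hp q hq h => List.inj_on_of_nodup_map this hp hq h
    have hc2' : (ps2.toFinset.filter (fun p => p.1 ∈ WA2)).card = WA2.card := by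
      have himg : (ps2.toFinset.filter (fun p => p.1 ∈ WA2)).image Prod.fst = WA2 := by
        ext w
        simp only [Finset.mem_image, Finset.mem_filter, List.mem_toFinset]
        constructor
        · rintro ⟨p, ⟨_, hw⟩, rfl⟩
          exact hw
        · intro hw
          have : w ∈ o2 := List.mem_toFinset.mp (ho2.2 ▸ Finset.mem_union_left _ hw)
          obtain ⟨p, hp, hpw⟩ := List.mem_map.mp (hf2 ▸ this)
          exact ⟨p, ⟨hp, hpw ▸ hw⟩, hpw⟩
      calc (ps2.toFinset.filter (fun p => p.1 ∈ WA2)).card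
          = ((ps2.toFinset.filter (fun p => p.1 ∈ WA2)).image Prod.fst).card :=
            (Finset.card_image_of_injOn (fun p hp q hq h =>
              hinj2 p (List.mem_toFinset.mp (Finset.mem_filter.mp hp).1)
                q (List.mem_toFinset.mp (Finset.mem_filter.mp hq).1) h)).symm
        _ = WA2.card := by rw [himg]
    rw [matchedWorkers, e, Finset.card_union_of_disjoint hdisj,
      List.toFinset_card_of_nodup nd1, hc2']
    have : ps1.length = WA1.card := by rw [hl1, ← hc1]
    rw [this]
  refine ⟨?_, part2, ?_⟩
  · -- every worker is matched
    intro w hw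
    have get : ∀ (ps : List (ℕ × ℕ)) (o : List ℕ), ps.map Prod.fst = o → w ∈ o →
        (ps ∈ [ps1, ps2, ps3]) → ∃ j, (w, j) ∈ μ := by
      intro ps o hfo hwo hps
      obtain ⟨p, hp, rfl⟩ := List.mem_map.mp (hfo ▸ hwo)
      refine ⟨p.2, ?_⟩
      rw [show (p.1, p.2) = p from rfl, hμmem]
      fin_cases hps
      · exact Or.inl hp
      · exact Or.inr (Or.inl hp)
      · exact Or.inr (Or.inr hp)
    rcases Finset.mem_union.mp hw with hw' | hw'
    · rcases Finset.mem_union.mp hw' with hw'' | hw''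
      · rcases Finset.mem_union.mp hw'' with h | h
        · exact get ps1 o1 hf1 (List.mem_toFinset.mp (ho1.2 ▸ h)) (by simp)
        · exact get ps2 o2 hf2
            (List.mem_toFinset.mp (ho2.2 ▸ Finset.mem_union_left _ h)) (by simp)
      · exact get ps3 o3 hf3 (List.mem_toFinset.mp (ho3.2 ▸ hw'')) (by simp)
    · exact get ps2 o2 hf2
        (List.mem_toFinset.mp (ho2.2 ▸ Finset.mem_union_right _ hw')) (by simp)
  · -- no dominating matching
    rintro ⟨M, hM, hle, hbw, hbja, hbjab, hstrict⟩
    obtain ⟨hMC, hMW, hMJ⟩ := hM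
    have b0 : M.card ≤ μ.card := part2 M ⟨hMC, hMW, hMJ⟩
    have b1 : matchedWorkers (WA1 ∪ WA2) M ≤ WA1.card + WA2.card := by
      calc matchedWorkers (WA1 ∪ WA2) M ≤ (WA1 ∪ WA2).card :=
            card_filter_le_aux M Prod.fst (WA1 ∪ WA2) hMW
        _ = WA1.card + WA2.card := Finset.card_union_of_disjoint hW12
    have b2 : matchedJobs JA M ≤ JA.card := card_filter_le_aux M Prod.snd JA hMJ
    have b3 : matchedJobs JAB M ≤ JAB.card := card_filter_le_aux M Prod.snd JAB hMJ
    rw [vW] at hbw hstrict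
    rw [vJA] at hbja hstrict
    rw [vJAB] at hbjab hstrict
    omega
end
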